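/- arXiv:1803.08254 — 6 statements merged into one kernel-verified Lean document; each statement's English description precedes it below -/
import Mathlib

section
/- For every n ∈ ℤ, the complex-valued function u(x,t) = exp(inπκ·log(t+x)) − exp(inπκ·log((1+ℓ₂)/(1−ℓ₂)))·exp(inπκ·log(t−x)), defined for t > 0 and −ℓ₁t ≤ x ≤ ℓ₂t, satisfies the one-dimensional wave equation ∂²u/∂t² − ∂²u/∂x² = 0 at every interior point, and satisfies the moving boundary conditions u(−ℓ₁t, t) = 0 and u(ℓ₂t, t) = 0 for every t > 0. -/
open Complex

lemma waveAux_base (a : ℂ) (r : ℝ) (hr : 0 < r) :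
    HasDerivAt (fun s : ℝ => Complex.exp (a * Real.log s))
      (a / r * Complex.exp (a * Real.log r)) r := by
  have h1 : HasDerivAt (fun s : ℝ => ((Real.log s : ℝ) : ℂ)) ((r⁻¹ : ℝ) : ℂ) r :=
    (Real.hasDerivAt_log hr.ne').ofReal_comp
  have h2 := (h1.const_mul a).cexp
  convert h2 using 1
  push_cast
  ring

lemma waveAux_base2 (a : ℂ) (r : ℝ) (hr : 0 < r) :
    HasDerivAt (fun s : ℝ => a / (s : ℂ) * Complex.exp (a * Real.log s))
      (a * (a - 1) / (r : ℂ) ^ 2 * Complex.exp (a * Real.log r)) r := by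
  have hne : (r : ℂ) ≠ 0 := by exact_mod_cast hr.ne'
  have h0 : HasDerivAt (fun s : ℝ => ((s : ℝ) : ℂ)) 1 r := by
    simpa using (hasDerivAt_id r).ofReal_comp
  have h1 : HasDerivAt (fun s : ℝ => a / (s : ℂ)) (-(a / (r : ℂ) ^ 2)) r := by
    have := (hasDerivAt_const r a).div h0 hne
    convert this using 1
    · rfl
    · rfl
    · field_simp
      ring
  have h2 := h1.mul (waveAux_base a r hr)
  convert h2 using 1
  · rfl
  · funext s
    simp [div_eq_mul_inv]
  · field_simp
    ring

lemma waveAux_tt (a C : ℂ) (x t : ℝ) (hp : 0 < t + x) (hq : 0 < t - x) :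
    deriv (fun s : ℝ => deriv (fun s' : ℝ =>
        Complex.exp (a * Real.log (s' + x)) - C * Complex.exp (a * Real.log (s' - x))) s) t
      = a * (a - 1) / ((t + x : ℝ) : ℂ) ^ 2 * Complex.exp (a * Real.log (t + x))
        - C * (a * (a - 1) / ((t - x : ℝ) : ℂ) ^ 2 * Complex.exp (a * Real.log (t - x))) := by
  have hD : ∀ s : ℝ, 0 < s + x → 0 < s - x →
      HasDerivAt (fun s' : ℝ =>
        Complex.exp (a * Real.log (s' + x)) - C * Complex.exp (a * Real.log (s' - x)))
        (a / ((s + x : ℝ) : ℂ) * Complex.exp (a * Real.log (s + x))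
          - C * (a / ((s - x : ℝ) : ℂ) * Complex.exp (a * Real.log (s - x)))) s := by
    intro s hs1 hs2
    have h1 := (waveAux_base a (s + x) hs1).scomp (x := s)
      (h := fun s' : ℝ => s' + x) ((hasDerivAt_id s).add_const x)
    have h2 := (waveAux_base a (s - x) hs2).scomp (x := s)
      (h := fun s' : ℝ => s' - x) ((hasDerivAt_id s).sub_const x)
    simpa [Function.comp_def, Pi.sub_def] using h1.sub (h2.const_mul C)
  have hS : IsOpen {s : ℝ | 0 < s + x ∧ 0 < s - x} := by
    have h1 : IsOpen {s : ℝ | 0 < s + x} :=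
      isOpen_lt continuous_const (continuous_id.add continuous_const)
    have h2 : IsOpen {s : ℝ | 0 < s - x} :=
      isOpen_lt continuous_const (continuous_id.sub continuous_const)
    exact h1.inter h2
  have hEv : (fun s : ℝ => deriv (fun s' : ℝ =>
        Complex.exp (a * Real.log (s' + x)) - C * Complex.exp (a * Real.log (s' - x))) s)
      =ᶠ[nhds t] (fun s : ℝ =>
        a / ((s + x : ℝ) : ℂ) * Complex.exp (a * Real.log (s + x))
          - C * (a / ((s - x : ℝ) : ℂ) * Complex.exp (a * Real.log (s - x)))) := by
    filter_upwards [hS.mem_nhds ⟨hp, hq⟩] with s hs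
    exact (hD s hs.1 hs.2).deriv
  rw [hEv.deriv_eq]
  have h1 := (waveAux_base2 a (t + x) hp).scomp (x := t)
    (h := fun s : ℝ => s + x) ((hasDerivAt_id t).add_const x)
  have h2 := (waveAux_base2 a (t - x) hq).scomp (x := t)
    (h := fun s : ℝ => s - x) ((hasDerivAt_id t).sub_const x)
  have h3 : HasDerivAt (fun s : ℝ =>
        a / ((s + x : ℝ) : ℂ) * Complex.exp (a * Real.log (s + x))
          - C * (a / ((s - x : ℝ) : ℂ) * Complex.exp (a * Real.log (s - x))))
      (a * (a - 1) / ((t + x : ℝ) : ℂ) ^ 2 * Complex.exp (a * Real.log (t + x))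
        - C * (a * (a - 1) / ((t - x : ℝ) : ℂ) ^ 2 * Complex.exp (a * Real.log (t - x)))) t := by
    simpa [Function.comp_def, Pi.sub_def] using h1.sub (h2.const_mul C)
  exact h3.deriv

lemma waveAux_xx (a C : ℂ) (x t : ℝ) (hp : 0 < t + x) (hq : 0 < t - x) :
    deriv (fun y : ℝ => deriv (fun y' : ℝ =>
        Complex.exp (a * Real.log (t + y')) - C * Complex.exp (a * Real.log (t - y'))) y) x
      = a * (a - 1) / ((t + x : ℝ) : ℂ) ^ 2 * Complex.exp (a * Real.log (t + x))
        - C * (a * (a - 1) / ((t - x : ℝ) : ℂ) ^ 2 * Complex.exp (a * Real.log (t - x))) := by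
  have hD : ∀ y : ℝ, 0 < t + y → 0 < t - y →
      HasDerivAt (fun y' : ℝ =>
        Complex.exp (a * Real.log (t + y')) - C * Complex.exp (a * Real.log (t - y')))
        (a / ((t + y : ℝ) : ℂ) * Complex.exp (a * Real.log (t + y))
          + C * (a / ((t - y : ℝ) : ℂ) * Complex.exp (a * Real.log (t - y)))) y := by
    intro y hy1 hy2
    have h1 := (waveAux_base a (t + y) hy1).scomp (x := y)
      (h := fun y' : ℝ => t + y') ((hasDerivAt_id y).const_add t)
    have h2 := (waveAux_base a (t - y) hy2).scomp (x := y)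
      (h := fun y' : ℝ => t - y') ((hasDerivAt_id y).const_sub t)
    have h3 := h1.sub (h2.const_mul C)
    convert h3 using 1
    · rfl
    · rfl
    · simp [Function.comp]
  have hS : IsOpen {y : ℝ | 0 < t + y ∧ 0 < t - y} := by
    have h1 : IsOpen {y : ℝ | 0 < t + y} :=
      isOpen_lt continuous_const (continuous_const.add continuous_id)
    have h2 : IsOpen {y : ℝ | 0 < t - y} :=
      isOpen_lt continuous_const (continuous_const.sub continuous_id)
    exact h1.inter h2
  have hEv : (fun y : ℝ => deriv (fun y' : ℝ =>
        Complex.exp (a * Real.log (t + y')) - C * Complex.exp (a * Real.log (t - y'))) y)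
      =ᶠ[nhds x] (fun y : ℝ =>
        a / ((t + y : ℝ) : ℂ) * Complex.exp (a * Real.log (t + y))
          + C * (a / ((t - y : ℝ) : ℂ) * Complex.exp (a * Real.log (t - y)))) := by
    filter_upwards [hS.mem_nhds ⟨hp, hq⟩] with y hy
    exact (hD y hy.1 hy.2).deriv
  rw [hEv.deriv_eq]
  have h1 := (waveAux_base2 a (t + x) hp).scomp (x := x)
    (h := fun y : ℝ => t + y) ((hasDerivAt_id x).const_add t)
  have h2 := (waveAux_base2 a (t - x) hq).scomp (x := x)
    (h := fun y : ℝ => t - y) ((hasDerivAt_id x).const_sub t)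
  have h3 : HasDerivAt (fun y : ℝ =>
        a / ((t + y : ℝ) : ℂ) * Complex.exp (a * Real.log (t + y))
          + C * (a / ((t - y : ℝ) : ℂ) * Complex.exp (a * Real.log (t - y))))
      (a * (a - 1) / ((t + x : ℝ) : ℂ) ^ 2 * Complex.exp (a * Real.log (t + x))
        - C * (a * (a - 1) / ((t - x : ℝ) : ℂ) ^ 2 * Complex.exp (a * Real.log (t - x)))) x := by
    have h4 := h1.add (h2.const_mul C)
    convert h4 using 1
    · rfl
    · rfl
    · simp [Function.comp]
      ring
  exact h3.deriv

lemma waveAux_bc (a C : ℂ) (r1 r2 c : ℝ) (hC : C = Complex.exp (a * c))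
    (h : Complex.exp (a * ((r1 - c - r2 : ℝ) : ℂ)) = 1) :
    Complex.exp (a * r1) - C * Complex.exp (a * r2) = 0 := by
  have h2 : Complex.exp (a * r1)
      = Complex.exp (a * ((r1 - c - r2 : ℝ) : ℂ))
        * (Complex.exp (a * c) * Complex.exp (a * r2)) := by
    rw [← Complex.exp_add, ← Complex.exp_add]
    congr 1
    push_cast
    ring
  rw [hC, h2, h, one_mul, sub_self]

/-- For every `n ∈ ℤ`, the function
`u(x,t) = exp(inπκ·log(t+x)) − exp(inπκ·log((1+ℓ₂)/(1−ℓ₂)))·exp(inπκ·log(t−x))`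
satisfies the 1-d wave equation `u_tt − u_xx = 0` at every interior point of the
noncylindrical domain, and the moving boundary conditions
`u(−ℓ₁t, t) = 0`, `u(ℓ₂t, t) = 0` for every `t > 0`. -/
theorem wave_series_term_solves_wave_equation
    (ℓ₁ ℓ₂ α β κ : ℝ)
    (hℓ₁ : 0 ≤ ℓ₁) (hℓ₁' : ℓ₁ < 1) (hℓ₂ : 0 ≤ ℓ₂) (hℓ₂' : ℓ₂ < 1)
    (hℓ : 0 < ℓ₁ + ℓ₂)
    (hα : α = (1 + ℓ₁) / (1 - ℓ₂)) (hβ : β = (1 + ℓ₂) / (1 - ℓ₁))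
    (hκ : κ = 2 / Real.log (α * β))
    (n : ℤ) (u : ℝ → ℝ → ℂ)
    (hu : ∀ x t : ℝ, u x t =
      Complex.exp (Complex.I * n * Real.pi * κ * Real.log (t + x)) -
      Complex.exp (Complex.I * n * Real.pi * κ * Real.log ((1 + ℓ₂) / (1 - ℓ₂))) *
        Complex.exp (Complex.I * n * Real.pi * κ * Real.log (t - x))) :
    (∀ t : ℝ, 0 < t → ∀ x : ℝ, -ℓ₁ * t < x → x < ℓ₂ * t →
      deriv (fun s : ℝ => deriv (fun s' : ℝ => u x s') s) t -
        deriv (fun y : ℝ => deriv (fun y' : ℝ => u y' t) y) x = 0) ∧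
    (∀ t : ℝ, 0 < t → u (-ℓ₁ * t) t = 0 ∧ u (ℓ₂ * t) t = 0) := by
  set a : ℂ := Complex.I * n * Real.pi * κ with ha
  set C : ℂ := Complex.exp (a * Real.log ((1 + ℓ₂) / (1 - ℓ₂))) with hC
  have h1ℓ₁ : (0:ℝ) < 1 - ℓ₁ := by linarith
  have h1ℓ₁' : (0:ℝ) < 1 + ℓ₁ := by linarith
  have h1ℓ₂ : (0:ℝ) < 1 - ℓ₂ := by linarith
  have h1ℓ₂' : (0:ℝ) < 1 + ℓ₂ := by linarith
  have hαβ : 1 < α * β := by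
    rw [hα, hβ, div_mul_div_comm]
    rw [one_lt_div (by positivity)]
    nlinarith
  have hlogne : Real.log (α * β) ≠ 0 := ne_of_gt (Real.log_pos hαβ)
  have hκ2 : κ * Real.log (α * β) = 2 := by
    rw [hκ]; field_simp
  have hκ2' : (κ : ℂ) * (Real.log (α * β) : ℂ) = 2 := by exact_mod_cast hκ2
  -- key exponential identity
  have hexp : Complex.exp (a * ((- Real.log (α * β) : ℝ) : ℂ)) = 1 := by
    have harg : a * ((- Real.log (α * β) : ℝ) : ℂ) = ((-n : ℤ) : ℂ) * (2 * Real.pi * Complex.I) := by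
      rw [ha]
      push_cast
      linear_combination (-Complex.I * (n : ℂ) * (Real.pi : ℂ)) * hκ2'
    rw [harg]
    exact Complex.exp_int_mul_two_pi_mul_I (-n)
  constructor
  · intro t ht x hx1 hx2
    have hp : 0 < t + x := by nlinarith
    have hq : 0 < t - x := by nlinarith
    have e1 : (fun s' : ℝ => u x s') = fun s' : ℝ =>
        Complex.exp (a * Real.log (s' + x)) - C * Complex.exp (a * Real.log (s' - x)) := by
      funext s'; rw [hu]
    have e2 : (fun y' : ℝ => u y' t) = fun y' : ℝ =>
        Complex.exp (a * Real.log (t + y')) - C * Complex.exp (a * Real.log (t - y')) := by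
      funext y'; rw [hu]
    rw [show (fun s : ℝ => deriv (fun s' : ℝ => u x s') s)
        = fun s : ℝ => deriv (fun s' : ℝ =>
          Complex.exp (a * Real.log (s' + x)) - C * Complex.exp (a * Real.log (s' - x))) s
      from by rw [e1],
      show (fun y : ℝ => deriv (fun y' : ℝ => u y' t) y)
        = fun y : ℝ => deriv (fun y' : ℝ =>
          Complex.exp (a * Real.log (t + y')) - C * Complex.exp (a * Real.log (t - y'))) y
      from by rw [e2]]
    rw [waveAux_tt a C x t hp hq, waveAux_xx a C x t hp hq, sub_self]
  · intro t ht
    constructor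
    · rw [hu]
      have e1 : t + -ℓ₁ * t = (1 - ℓ₁) * t := by ring
      have e2 : t - -ℓ₁ * t = (1 + ℓ₁) * t := by ring
      rw [e1, e2]
      refine waveAux_bc a C _ _ _ hC ?_
      have hlog : Real.log ((1 - ℓ₁) * t) - Real.log ((1 + ℓ₂) / (1 - ℓ₂))
          - Real.log ((1 + ℓ₁) * t) = - Real.log (α * β) := by
        rw [hα, hβ, Real.log_mul h1ℓ₁.ne' ht.ne', Real.log_mul h1ℓ₁'.ne' ht.ne',
          Real.log_div h1ℓ₂'.ne' h1ℓ₂.ne',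
          Real.log_mul (div_pos h1ℓ₁' h1ℓ₂).ne' (div_pos h1ℓ₂' h1ℓ₁).ne',
          Real.log_div h1ℓ₁'.ne' h1ℓ₂.ne', Real.log_div h1ℓ₂'.ne' h1ℓ₁.ne']
        ring
      rw [hlog]
      exact hexp
    · rw [hu]
      have e1 : t + ℓ₂ * t = (1 + ℓ₂) * t := by ring
      have e2 : t - ℓ₂ * t = (1 - ℓ₂) * t := by ring
      rw [e1, e2]
      refine waveAux_bc a C _ _ _ hC ?_
      have hlog : Real.log ((1 + ℓ₂) * t) - Real.log ((1 + ℓ₂) / (1 - ℓ₂))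
          - Real.log ((1 - ℓ₂) * t) = 0 := by
        rw [Real.log_mul h1ℓ₂'.ne' ht.ne', Real.log_mul h1ℓ₂.ne' ht.ne',
          Real.log_div h1ℓ₂'.ne' h1ℓ₂.ne']
        ring
      rw [hlog]
      simp
end

section
/- For every t ≥ t₀, the energy satisfies the exact identity t·E(t) + ∫_{−ℓ₁t}^{ℓ₂t} x·φₓ(x,t)·φ_t(x,t) dx = S, where S = 2π²κ·Σ_{n≠0} |n c_n|². -/
set_option maxHeartbeats 2000000

open MeasureTheory


lemma norm_exp_ofI (z : ℂ) (h : z.re = 0) : ‖Complex.exp z‖ = 1 := by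
  rw [Complex.norm_exp, h, Real.exp_zero]

lemma re_aux (n : ℤ) (p q r : ℝ) : (Complex.I * n * p * q * r).re = 0 := by
  simp [Complex.mul_re, Complex.mul_im]

-- complex FTC lemma
lemma ftc_exp_log (c : ℂ) (hc : c ≠ 0) (p q a b : ℝ) (hq : q ≠ 0)
    (hpos : ∀ x ∈ Set.uIcc a b, 0 < p + q * x) :
    ∫ x in a..b, Complex.exp (c * Real.log (p + q * x)) * ((q / (p + q * x) : ℝ) : ℂ)
      = (Complex.exp (c * Real.log (p + q * b)) - Complex.exp (c * Real.log (p + q * a))) / c := by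
  have hderiv : ∀ x ∈ Set.uIcc a b,
      HasDerivAt (fun y => Complex.exp (c * Real.log (p + q * y)) / c)
        (Complex.exp (c * Real.log (p + q * x)) * ((q / (p + q * x) : ℝ) : ℂ)) x := by
    intro x hx
    have hpx := hpos x hx
    have h1 : HasDerivAt (fun y : ℝ => p + q * y) q x := by
      simpa using ((hasDerivAt_id x).const_mul q).const_add p
    have h2 : HasDerivAt (fun y : ℝ => Real.log (p + q * y)) ((p + q * x)⁻¹ * q) x :=
      by have h := (Real.hasDerivAt_log hpx.ne').comp x h1; exact h
    have h3 : HasDerivAt (fun y : ℝ => ((Real.log (p + q * y) : ℝ) : ℂ))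
        (((p + q * x)⁻¹ * q : ℝ) : ℂ) x := h2.ofReal_comp
    have h4 := ((h3.const_mul c).cexp).div_const c
    refine h4.congr_deriv ?_
    rw [mul_div_assoc, mul_div_cancel_left₀ _ hc]
    push_cast
    ring
  have hcont : ContinuousOn
      (fun x => Complex.exp (c * Real.log (p + q * x)) * ((q / (p + q * x) : ℝ) : ℂ))
      (Set.uIcc a b) := by
    have hc1 : ContinuousOn (fun x : ℝ => p + q * x) (Set.uIcc a b) :=
      (continuous_const.add (continuous_const.mul continuous_id)).continuousOn
    have hne : ∀ x ∈ Set.uIcc a b, p + q * x ≠ 0 := fun x hx => (hpos x hx).ne'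
    have hlog : ContinuousOn (fun x : ℝ => Real.log (p + q * x)) (Set.uIcc a b) := hc1.log hne
    exact ((Complex.continuous_exp.comp_continuousOn
      ((continuous_const.continuousOn (s := Set.uIcc a b)).mul
        (Complex.continuous_ofReal.comp_continuousOn hlog)))).mul
      (Complex.continuous_ofReal.comp_continuousOn
        ((continuous_const.continuousOn).div hc1 hne))
  rw [intervalIntegral.integral_eq_sub_of_hasDerivAt hderiv (hcont.intervalIntegrable)]
  rw [div_sub_div_same]

-- real FTC lemma for 1/(p+qx)
lemma ftc_log (p q a b : ℝ) (hpos : ∀ x ∈ Set.uIcc a b, 0 < p + q * x) :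
    ∫ x in a..b, q / (p + q * x) = Real.log (p + q * b) - Real.log (p + q * a) := by
  have hderiv : ∀ x ∈ Set.uIcc a b,
      HasDerivAt (fun y => Real.log (p + q * y)) (q / (p + q * x)) x := by
    intro x hx
    have h1 : HasDerivAt (fun y : ℝ => p + q * y) q x := by
      simpa using ((hasDerivAt_id x).const_mul q).const_add p
    have h2 := (Real.hasDerivAt_log (hpos x hx).ne').comp x h1
    refine h2.congr_deriv ?_
    rw [div_eq_inv_mul]
  have hc1 : ContinuousOn (fun x : ℝ => p + q * x) (Set.uIcc a b) :=
    (continuous_const.add (continuous_const.mul continuous_id)).continuousOn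
  have hcont : ContinuousOn (fun x => q / (p + q * x)) (Set.uIcc a b) :=
    (continuous_const.continuousOn).div hc1 (fun x hx => (hpos x hx).ne')
  rw [intervalIntegral.integral_eq_sub_of_hasDerivAt hderiv hcont.intervalIntegrable]

-- cancellation lemma
lemma exp_cancel (k : ℤ) (κ P Λ A B A' B' : ℝ)
    (h1 : P + B' = B) (h2 : P + A' = A + Λ) (hΛ : κ * Λ = 2) :
    (Complex.exp (Complex.I * k * Real.pi * κ * B) - Complex.exp (Complex.I * k * Real.pi * κ * A))
      + Complex.exp (Complex.I * k * Real.pi * κ * P) *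
        (Complex.exp (Complex.I * k * Real.pi * κ * A') - Complex.exp (Complex.I * k * Real.pi * κ * B')) = 0 := by
  have h1' : (P : ℂ) + B' = B := by exact_mod_cast congrArg (Complex.ofReal) h1
  have h2' : (P : ℂ) + A' = A + Λ := by exact_mod_cast congrArg (Complex.ofReal) h2
  have hΛ' : (κ : ℂ) * Λ = 2 := by exact_mod_cast congrArg (Complex.ofReal) hΛ
  have e1 : Complex.exp (Complex.I * k * Real.pi * κ * P) * Complex.exp (Complex.I * k * Real.pi * κ * B')
      = Complex.exp (Complex.I * k * Real.pi * κ * B) := by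
    rw [← Complex.exp_add]; congr 1; linear_combination (Complex.I * k * Real.pi * κ) * h1'
  have e2 : Complex.exp (Complex.I * k * Real.pi * κ * P) * Complex.exp (Complex.I * k * Real.pi * κ * A')
      = Complex.exp (Complex.I * k * Real.pi * κ * A) := by
    rw [← Complex.exp_add]
    have key : Complex.I * k * Real.pi * κ * P + Complex.I * k * Real.pi * κ * A'
        = Complex.I * k * Real.pi * κ * A + k * (2 * Real.pi * Complex.I) := by
      linear_combination (Complex.I * k * Real.pi * κ) * h2' + (Complex.I * k * Real.pi) * hΛ'
    rw [key, Complex.exp_add, Complex.exp_int_mul_two_pi_mul_I, mul_one]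
  linear_combination e2 - e1


noncomputable def eK (κ : ℝ) (n : ℤ) (s : ℝ) : ℂ :=
  Complex.exp (Complex.I * n * Real.pi * κ * Real.log s)

noncomputable def uu (κ t : ℝ) (c : ℤ → ℂ) (n : ℤ) (x : ℝ) : ℂ :=
  c n * eK κ n (t + x) / ((t + x : ℝ) : ℂ)

noncomputable def vv (κ t : ℝ) (C : ℤ → ℂ) (n : ℤ) (x : ℝ) : ℂ :=
  C n * eK κ n (t - x) / ((t - x : ℝ) : ℂ)

noncomputable def FF (κ t : ℝ) (c : ℤ → ℂ) (x : ℝ) : ℂ := ∑' n : ℤ, (n : ℂ) * uu κ t c n x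
noncomputable def GG (κ t : ℝ) (C : ℤ → ℂ) (x : ℝ) : ℂ := ∑' n : ℤ, (n : ℂ) * vv κ t C n x

noncomputable def Hfun (κ t : ℝ) (c C : ℤ → ℂ) (p : ℤ × ℤ) (x : ℝ) : ℂ :=
  ((t + x : ℝ) : ℂ) * (((p.1 : ℂ) * uu κ t c p.1 x) * ((p.2 : ℂ) * uu κ t c p.2 x)) +
  ((t - x : ℝ) : ℂ) * (((p.1 : ℂ) * vv κ t C p.1 x) * ((p.2 : ℂ) * vv κ t C p.2 x))

lemma norm_eK (κ : ℝ) (n : ℤ) (s : ℝ) : ‖eK κ n s‖ = 1 := by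
  rw [eK, Complex.norm_exp]
  have : (Complex.I * n * Real.pi * κ * Real.log s).re = 0 := by
    simp [Complex.mul_re, Complex.mul_im]
  rw [this, Real.exp_zero]

lemma eK_mul (κ : ℝ) (n m : ℤ) (s : ℝ) : eK κ n s * eK κ m s = eK κ (n + m) s := by
  rw [eK, eK, eK, ← Complex.exp_add]
  congr 1
  push_cast
  ring

lemma eK_zero (κ : ℝ) (s : ℝ) : eK κ 0 s = 1 := by
  simp [eK]

lemma norm_n_uu (κ t : ℝ) (c : ℤ → ℂ) (n : ℤ) (x : ℝ) (hx : 0 < t + x) :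
    ‖(n : ℂ) * uu κ t c n x‖ = ‖(n : ℂ) * c n‖ / (t + x) := by
  rw [uu, norm_mul, norm_div, norm_mul, norm_eK, mul_one, Complex.norm_real,
    Real.norm_of_nonneg hx.le, norm_mul, mul_div_assoc]

lemma norm_n_vv (κ t : ℝ) (C : ℤ → ℂ) (n : ℤ) (x : ℝ) (hx : 0 < t - x) :
    ‖(n : ℂ) * vv κ t C n x‖ = ‖(n : ℂ) * C n‖ / (t - x) := by
  rw [vv, norm_mul, norm_div, norm_mul, norm_eK, mul_one, Complex.norm_real,
    Real.norm_of_nonneg hx.le, norm_mul, mul_div_assoc]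

lemma summable_n_uu (κ t : ℝ) (c : ℤ → ℂ) (x : ℝ) (hx : 0 < t + x)
    (hc : Summable fun n : ℤ => ‖(n : ℂ) * c n‖) :
    Summable fun n : ℤ => ‖(n : ℂ) * uu κ t c n x‖ := by
  refine (hc.div_const (t + x)).congr fun n => ?_
  rw [norm_n_uu κ t c n x hx]

lemma summable_n_vv (κ t : ℝ) (C : ℤ → ℂ) (x : ℝ) (hx : 0 < t - x)
    (hC : Summable fun n : ℤ => ‖(n : ℂ) * C n‖) :
    Summable fun n : ℤ => ‖(n : ℂ) * vv κ t C n x‖ := by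
  refine (hC.div_const (t - x)).congr fun n => ?_
  rw [norm_n_vv κ t C n x hx]

lemma contOn_uu (κ t : ℝ) (c : ℤ → ℂ) (n : ℤ) (s : Set ℝ) (h : ∀ x ∈ s, 0 < t + x) :
    ContinuousOn (fun x => (n : ℂ) * uu κ t c n x) s := by
  have hg : ContinuousOn (fun x : ℝ => t + x) s := (continuous_const.add continuous_id).continuousOn
  have hne : ∀ x ∈ s, t + x ≠ 0 := fun x hx => (h x hx).ne'
  have hexp : ContinuousOn (fun x => eK κ n (t + x)) s := by
    simp only [eK]
    exact Complex.continuous_exp.comp_continuousOn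
      ((continuous_const.continuousOn).mul (Complex.continuous_ofReal.comp_continuousOn (hg.log hne)))
  simp only [uu]
  exact continuousOn_const.mul <| (continuousOn_const.mul hexp).div
    (Complex.continuous_ofReal.comp_continuousOn hg)
    (fun x hx => by exact_mod_cast hne x hx)

lemma contOn_vv (κ t : ℝ) (C : ℤ → ℂ) (n : ℤ) (s : Set ℝ) (h : ∀ x ∈ s, 0 < t - x) :
    ContinuousOn (fun x => (n : ℂ) * vv κ t C n x) s := by
  have hg : ContinuousOn (fun x : ℝ => t - x) s := (continuous_const.sub continuous_id).continuousOn
  have hne : ∀ x ∈ s, t - x ≠ 0 := fun x hx => (h x hx).ne'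
  have hexp : ContinuousOn (fun x => eK κ n (t - x)) s := by
    simp only [eK]
    exact Complex.continuous_exp.comp_continuousOn
      ((continuous_const.continuousOn).mul (Complex.continuous_ofReal.comp_continuousOn (hg.log hne)))
  simp only [vv]
  exact continuousOn_const.mul <| (continuousOn_const.mul hexp).div
    (Complex.continuous_ofReal.comp_continuousOn hg)
    (fun x hx => by exact_mod_cast hne x hx)

lemma contOn_FF (κ t : ℝ) (c : ℤ → ℂ) (s : Set ℝ) (A : ℝ) (hA : 0 < A)
    (h : ∀ x ∈ s, A ≤ t + x) (hc : Summable fun n : ℤ => ‖(n : ℂ) * c n‖) :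
    ContinuousOn (FF κ t c) s := by
  refine continuousOn_tsum (fun n => contOn_uu κ t c n s (fun x hx => lt_of_lt_of_le hA (h x hx)))
    (hc.div_const A) (fun n x hx => ?_)
  rw [norm_n_uu κ t c n x (lt_of_lt_of_le hA (h x hx))]
  exact div_le_div_of_nonneg_left (norm_nonneg _) hA (h x hx)

lemma contOn_GG (κ t : ℝ) (C : ℤ → ℂ) (s : Set ℝ) (A : ℝ) (hA : 0 < A)
    (h : ∀ x ∈ s, A ≤ t - x) (hC : Summable fun n : ℤ => ‖(n : ℂ) * C n‖) :
    ContinuousOn (GG κ t C) s := by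
  refine continuousOn_tsum (fun n => contOn_vv κ t C n s (fun x hx => lt_of_lt_of_le hA (h x hx)))
    (hC.div_const A) (fun n x hx => ?_)
  rw [norm_n_vv κ t C n x (lt_of_lt_of_le hA (h x hx))]
  exact div_le_div_of_nonneg_left (norm_nonneg _) hA (h x hx)

lemma FF_sq (κ t : ℝ) (c : ℤ → ℂ) (x : ℝ) (hx : 0 < t + x)
    (hc : Summable fun n : ℤ => ‖(n : ℂ) * c n‖) :
    FF κ t c x ^ 2 = ∑' p : ℤ × ℤ, ((p.1 : ℂ) * uu κ t c p.1 x) * ((p.2 : ℂ) * uu κ t c p.2 x) := by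
  rw [sq, FF]
  exact tsum_mul_tsum_of_summable_norm (summable_n_uu κ t c x hx hc) (summable_n_uu κ t c x hx hc)

lemma GG_sq (κ t : ℝ) (C : ℤ → ℂ) (x : ℝ) (hx : 0 < t - x)
    (hC : Summable fun n : ℤ => ‖(n : ℂ) * C n‖) :
    GG κ t C x ^ 2 = ∑' p : ℤ × ℤ, ((p.1 : ℂ) * vv κ t C p.1 x) * ((p.2 : ℂ) * vv κ t C p.2 x) := by
  rw [sq, GG]
  exact tsum_mul_tsum_of_summable_norm (summable_n_vv κ t C x hx hC) (summable_n_vv κ t C x hx hC)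


lemma coef_ne (k : ℤ) (hk : k ≠ 0) (κ : ℝ) (hκ : κ ≠ 0) :
    (Complex.I * k * Real.pi * κ : ℂ) ≠ 0 := by
  apply mul_ne_zero (mul_ne_zero (mul_ne_zero Complex.I_ne_zero _) _)
  · exact Complex.ofReal_ne_zero.mpr hκ
  · exact_mod_cast hk
  · exact Complex.ofReal_ne_zero.mpr Real.pi_ne_zero

lemma Jplus_ne (κ t a b : ℝ) (k : ℤ) (hk : k ≠ 0) (hκ : κ ≠ 0) (hab : a ≤ b) (hta : 0 < t + a) :
    ∫ x in Set.Ioo a b, eK κ k (t + x) / ((t + x : ℝ) : ℂ)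
      = (eK κ k (t + b) - eK κ k (t + a)) / (Complex.I * k * Real.pi * κ) := by
  have hpos : ∀ x ∈ Set.uIcc a b, 0 < t + 1 * x := by
    intro x hx
    rw [Set.uIcc_of_le hab] at hx
    have := hx.1
    nlinarith
  have key := ftc_exp_log (Complex.I * k * Real.pi * κ) (coef_ne k hk κ hκ) t 1 a b one_ne_zero hpos
  simp only [one_mul, one_div, Complex.ofReal_inv, ← div_eq_mul_inv] at key
  rw [← integral_Ioc_eq_integral_Ioo, ← intervalIntegral.integral_of_le hab]
  simp only [eK]
  exact key

lemma Jplus_zero (κ t a b : ℝ) (hab : a ≤ b) (hta : 0 < t + a) :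
    ∫ x in Set.Ioo a b, eK κ 0 (t + x) / ((t + x : ℝ) : ℂ)
      = ((Real.log (t + b) - Real.log (t + a) : ℝ) : ℂ) := by
  have hpos : ∀ x ∈ Set.uIcc a b, 0 < t + 1 * x := by
    intro x hx
    rw [Set.uIcc_of_le hab] at hx
    have := hx.1
    nlinarith
  have key := ftc_log t 1 a b hpos
  simp only [one_mul, one_div] at key
  have : ∀ x : ℝ, eK κ 0 (t + x) / ((t + x : ℝ) : ℂ) = (((t + x)⁻¹ : ℝ) : ℂ) := by
    intro x
    rw [eK_zero]
    push_cast
    ring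
  simp only [this]
  rw [show ((Real.log (t + b) - Real.log (t + a) : ℝ) : ℂ)
      = ((∫ x in Set.Ioo a b, (t + x)⁻¹ : ℝ) : ℂ) from by
    rw [← integral_Ioc_eq_integral_Ioo, ← intervalIntegral.integral_of_le hab, key]]
  exact integral_ofReal
lemma Jminus_ne (κ t a b : ℝ) (k : ℤ) (hk : k ≠ 0) (hκ : κ ≠ 0) (hab : a ≤ b) (htb : 0 < t - b) :
    ∫ x in Set.Ioo a b, eK κ k (t - x) / ((t - x : ℝ) : ℂ)
      = (eK κ k (t - a) - eK κ k (t - b)) / (Complex.I * k * Real.pi * κ) := by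
  have hpos : ∀ x ∈ Set.uIcc a b, 0 < t + (-1) * x := by
    intro x hx
    rw [Set.uIcc_of_le hab] at hx
    have := hx.2
    nlinarith
  have key := ftc_exp_log (Complex.I * k * Real.pi * κ) (coef_ne k hk κ hκ) t (-1) a b (by norm_num) hpos
  rw [← integral_Ioc_eq_integral_Ioo, ← intervalIntegral.integral_of_le hab]
  have heq : ∀ x : ℝ, Complex.exp (Complex.I * k * Real.pi * κ * Real.log (t + (-1) * x)) *
      (((-1 : ℝ) / (t + (-1) * x) : ℝ) : ℂ) = -(eK κ k (t - x) / ((t - x : ℝ) : ℂ)) := by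
    intro x
    have hx : t + (-1) * x = t - x := by ring
    rw [hx, eK]
    push_cast
    ring
  simp only [heq, intervalIntegral.integral_neg] at key
  have hb : t + (-1) * b = t - b := by ring
  have ha : t + (-1) * a = t - a := by ring
  rw [hb, ha] at key
  have := neg_eq_iff_eq_neg.mp key
  rw [this, eK, eK]
  ring

lemma Jminus_zero (κ t a b : ℝ) (hab : a ≤ b) (htb : 0 < t - b) :
    ∫ x in Set.Ioo a b, eK κ 0 (t - x) / ((t - x : ℝ) : ℂ)
      = ((Real.log (t - a) - Real.log (t - b) : ℝ) : ℂ) := by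
  have hpos : ∀ x ∈ Set.uIcc a b, 0 < t + (-1) * x := by
    intro x hx
    rw [Set.uIcc_of_le hab] at hx
    have := hx.2
    nlinarith
  have key := ftc_log t (-1) a b hpos
  have h1 : ∀ x : ℝ, t + (-1) * x = t - x := fun x => by ring
  simp only [h1] at key
  have h2 : ∀ x : ℝ, (-1 : ℝ) / (t - x) = -(t - x)⁻¹ := fun x => by
    field_simp
  simp only [h2, intervalIntegral.integral_neg] at key
  have key2 : ∫ x in a..b, (t - x)⁻¹ = Real.log (t - a) - Real.log (t - b) := by linarith
  have : ∀ x : ℝ, eK κ 0 (t - x) / ((t - x : ℝ) : ℂ) = (((t - x)⁻¹ : ℝ) : ℂ) := by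
    intro x
    rw [eK_zero]
    push_cast
    ring
  simp only [this]
  rw [show ((Real.log (t - a) - Real.log (t - b) : ℝ) : ℂ)
      = ((∫ x in Set.Ioo a b, (t - x)⁻¹ : ℝ) : ℂ) from by
    rw [← integral_Ioc_eq_integral_Ioo, ← intervalIntegral.integral_of_le hab, key2]]
  exact integral_ofReal

lemma contOn_eK_plus (κ t : ℝ) (k : ℤ) (s : Set ℝ) (h : ∀ x ∈ s, 0 < t + x) :
    ContinuousOn (fun x => eK κ k (t + x) / ((t + x : ℝ) : ℂ)) s := by
  have hg : ContinuousOn (fun x : ℝ => t + x) s := (continuous_const.add continuous_id).continuousOn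
  have hne : ∀ x ∈ s, t + x ≠ 0 := fun x hx => (h x hx).ne'
  have hexp : ContinuousOn (fun x => eK κ k (t + x)) s := by
    simp only [eK]
    exact Complex.continuous_exp.comp_continuousOn
      ((continuous_const.continuousOn).mul (Complex.continuous_ofReal.comp_continuousOn (hg.log hne)))
  exact hexp.div (Complex.continuous_ofReal.comp_continuousOn hg)
    (fun x hx => by exact_mod_cast hne x hx)

lemma contOn_eK_minus (κ t : ℝ) (k : ℤ) (s : Set ℝ) (h : ∀ x ∈ s, 0 < t - x) :
    ContinuousOn (fun x => eK κ k (t - x) / ((t - x : ℝ) : ℂ)) s := by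
  have hg : ContinuousOn (fun x : ℝ => t - x) s := (continuous_const.sub continuous_id).continuousOn
  have hne : ∀ x ∈ s, t - x ≠ 0 := fun x hx => (h x hx).ne'
  have hexp : ContinuousOn (fun x => eK κ k (t - x)) s := by
    simp only [eK]
    exact Complex.continuous_exp.comp_continuousOn
      ((continuous_const.continuousOn).mul (Complex.continuous_ofReal.comp_continuousOn (hg.log hne)))
  exact hexp.div (Complex.continuous_ofReal.comp_continuousOn hg)
    (fun x hx => by exact_mod_cast hne x hx)


lemma integral_Hfun (κ t a b P Λ : ℝ) (c C : ℤ → ℂ)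
    (hκ : κ ≠ 0) (hab : a ≤ b) (hta : 0 < t + a) (htb : 0 < t - b)
    (hconj : ∀ n : ℤ, c (-n) = (starRingEnd ℂ) (c n))
    (hCdef : ∀ n : ℤ, C n = c n * Complex.exp (Complex.I * n * Real.pi * κ * P))
    (hP1 : P + Real.log (t - b) = Real.log (t + b))
    (hP2 : P + Real.log (t - a) = Real.log (t + a) + Λ)
    (hΛ : κ * Λ = 2)
    (n m : ℤ) :
    ∫ x in Set.Ioo a b, Hfun κ t c C (n, m) x
      = if m = -n then ((-(2 / κ) * ‖(n : ℂ) * c n‖ ^ 2 : ℝ) : ℂ) else 0 := by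
  have hIcc_p : ∀ x ∈ Set.Icc a b, 0 < t + x := fun x hx => by
    have := hx.1; linarith
  have hIcc_m : ∀ x ∈ Set.Icc a b, 0 < t - x := fun x hx => by
    have := hx.2; linarith
  -- rewrite integrand
  have step_eq : Set.EqOn (Hfun κ t c C (n, m))
      (fun x => ((n : ℂ) * m) *
        (c n * c m * (eK κ (n + m) (t + x) / ((t + x : ℝ) : ℂ)) +
         C n * C m * (eK κ (n + m) (t - x) / ((t - x : ℝ) : ℂ)))) (Set.Ioo a b) := by
    intro x hx
    have h1 : 0 < t + x := hIcc_p x (Set.Ioo_subset_Icc_self hx)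
    have h2 : 0 < t - x := hIcc_m x (Set.Ioo_subset_Icc_self hx)
    have h1' : ((t + x : ℝ) : ℂ) ≠ 0 := by exact_mod_cast h1.ne'
    have h2' : ((t - x : ℝ) : ℂ) ≠ 0 := by exact_mod_cast h2.ne'
    have e1 : ((t + x : ℝ) : ℂ) * (((n : ℂ) * uu κ t c n x) * ((m : ℂ) * uu κ t c m x))
        = ((n : ℂ) * m) * (c n * c m * (eK κ (n + m) (t + x) / ((t + x : ℝ) : ℂ))) := by
      simp only [uu, ← eK_mul]
      generalize hz : ((t + x : ℝ) : ℂ) = z at h1' ⊢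
      field_simp [h1']
    have e2 : ((t - x : ℝ) : ℂ) * (((n : ℂ) * vv κ t C n x) * ((m : ℂ) * vv κ t C m x))
        = ((n : ℂ) * m) * (C n * C m * (eK κ (n + m) (t - x) / ((t - x : ℝ) : ℂ))) := by
      simp only [vv, ← eK_mul]
      generalize hz : ((t - x : ℝ) : ℂ) = z at h2' ⊢
      field_simp [h2']
    show Hfun κ t c C (n, m) x = _
    rw [Hfun]
    rw [e1, e2]
    ring
  rw [setIntegral_congr_fun measurableSet_Ioo step_eq]
  have int1 : IntegrableOn (fun x => c n * c m * (eK κ (n + m) (t + x) / ((t + x : ℝ) : ℂ)))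
      (Set.Ioo a b) volume :=
    ((continuousOn_const.mul (contOn_eK_plus κ t (n + m) _ hIcc_p)).integrableOn_Icc).mono_set
      Set.Ioo_subset_Icc_self
  have int2 : IntegrableOn (fun x => C n * C m * (eK κ (n + m) (t - x) / ((t - x : ℝ) : ℂ)))
      (Set.Ioo a b) volume :=
    ((continuousOn_const.mul (contOn_eK_minus κ t (n + m) _ hIcc_m)).integrableOn_Icc).mono_set
      Set.Ioo_subset_Icc_self
  rw [integral_const_mul, integral_add int1 int2, integral_const_mul, integral_const_mul]
  by_cases hm : m = -n
  · subst hm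
    have hnm : n + -n = 0 := by ring
    rw [hnm, Jplus_zero κ t a b hab hta, Jminus_zero κ t a b hab htb]
    have hCC : C n * C (-n) = c n * c (-n) := by
      rw [hCdef n, hCdef (-n), mul_mul_mul_comm, ← Complex.exp_add]
      have : Complex.I * n * Real.pi * κ * P + Complex.I * (-n : ℤ) * Real.pi * κ * P = 0 := by
        push_cast; ring
      rw [this, Complex.exp_zero, mul_one]
    have hΛ' : Λ = 2 / κ := by field_simp [hκ] at hΛ ⊢; linarith
    have hLsum : (Real.log (t + b) - Real.log (t + a)) + (Real.log (t - a) - Real.log (t - b))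
        = 2 / κ := by
      rw [← hΛ']; linarith [hP1, hP2]
    have hz : (↑n : ℂ) * ↑(-n : ℤ) * (c n * c (-n)) = -((‖(n : ℂ) * c n‖ ^ 2 : ℝ) : ℂ) := by
      rw [hconj n]
      have hres : ((‖(n : ℂ) * c n‖ ^ 2 : ℝ) : ℂ)
          = ((n : ℂ) * c n) * (starRingEnd ℂ) ((n : ℂ) * c n) := by
        rw [Complex.mul_conj]
        norm_cast
        rw [Complex.normSq_eq_norm_sq]
      rw [hres, map_mul]
      have : (starRingEnd ℂ) ((n : ℂ)) = (n : ℂ) := by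
        simp
      rw [this]
      push_cast
      ring
    rw [if_pos rfl, hCC]
    have expand : (↑n : ℂ) * ↑(-n : ℤ) * (c n * c (-n) * ((Real.log (t + b) - Real.log (t + a) : ℝ) : ℂ)
        + c n * c (-n) * ((Real.log (t - a) - Real.log (t - b) : ℝ) : ℂ))
        = ((↑n : ℂ) * ↑(-n : ℤ) * (c n * c (-n))) *
          (((Real.log (t + b) - Real.log (t + a) : ℝ) : ℂ) + ((Real.log (t - a) - Real.log (t - b) : ℝ) : ℂ)) := by
      ring
    rw [expand, hz, ← Complex.ofReal_add]
    rw [show (Real.log (t + b) - Real.log (t + a)) + (Real.log (t - a) - Real.log (t - b)) = 2 / κ from hLsum]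
    push_cast
    ring
  · have hk : n + m ≠ 0 := fun h => hm (by omega)
    rw [Jplus_ne κ t a b (n + m) hk hκ hab hta, Jminus_ne κ t a b (n + m) hk hκ hab htb]
    have hCC2 : C n * C m = c n * c m * Complex.exp (Complex.I * (n + m : ℤ) * Real.pi * κ * P) := by
      rw [hCdef n, hCdef m, mul_mul_mul_comm, ← Complex.exp_add]
      congr 1
      push_cast
      ring
    have hcan := exp_cancel (n + m) κ P Λ (Real.log (t + a)) (Real.log (t + b))
      (Real.log (t - a)) (Real.log (t - b)) hP1 hP2 hΛ
    rw [if_neg hm, hCC2]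
    simp only [eK] at *
    linear_combination ((n : ℂ) * m * (c n * c m) / (Complex.I * (n + m : ℤ) * Real.pi * κ)) * hcan


lemma contOn_Hfun (κ t : ℝ) (c C : ℤ → ℂ) (p : ℤ × ℤ) (s : Set ℝ)
    (h1 : ∀ x ∈ s, 0 < t + x) (h2 : ∀ x ∈ s, 0 < t - x) :
    ContinuousOn (Hfun κ t c C p) s := by
  unfold Hfun
  refine ContinuousOn.add (ContinuousOn.mul ?_ ((contOn_uu κ t c p.1 s h1).mul (contOn_uu κ t c p.2 s h1)))
    (ContinuousOn.mul ?_ ((contOn_vv κ t C p.1 s h2).mul (contOn_vv κ t C p.2 s h2)))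
  · exact (Complex.continuous_ofReal.comp (continuous_const.add continuous_id)).continuousOn
  · exact (Complex.continuous_ofReal.comp (continuous_const.sub continuous_id)).continuousOn

lemma norm_Hfun_le (κ t : ℝ) (c C : ℤ → ℂ) (hCn : ∀ k : ℤ, ‖C k‖ = ‖c k‖) (p : ℤ × ℤ) (x : ℝ)
    (h1 : 0 < t + x) (h2 : 0 < t - x) :
    ‖Hfun κ t c C p x‖ ≤ ‖(p.1 : ℂ) * c p.1‖ * ‖(p.2 : ℂ) * c p.2‖ * (1 / (t + x) + 1 / (t - x)) := by
  have e1 : ‖((t + x : ℝ) : ℂ) * (((p.1 : ℂ) * uu κ t c p.1 x) * ((p.2 : ℂ) * uu κ t c p.2 x))‖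
      = ‖(p.1 : ℂ) * c p.1‖ * ‖(p.2 : ℂ) * c p.2‖ * (1 / (t + x)) := by
    rw [norm_mul, norm_mul, norm_n_uu _ _ _ _ _ h1, norm_n_uu _ _ _ _ _ h1,
      Complex.norm_real, Real.norm_of_nonneg h1.le]
    field_simp
  have e2 : ‖((t - x : ℝ) : ℂ) * (((p.1 : ℂ) * vv κ t C p.1 x) * ((p.2 : ℂ) * vv κ t C p.2 x))‖
      = ‖(p.1 : ℂ) * c p.1‖ * ‖(p.2 : ℂ) * c p.2‖ * (1 / (t - x)) := by
    rw [norm_mul, norm_mul, norm_n_vv _ _ _ _ _ h2, norm_n_vv _ _ _ _ _ h2,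
      Complex.norm_real, Real.norm_of_nonneg h2.le]
    have hnc : ∀ k : ℤ, ‖(k : ℂ) * C k‖ = ‖(k : ℂ) * c k‖ := by
      intro k; rw [norm_mul, norm_mul, hCn k]
    rw [hnc p.1, hnc p.2]
    field_simp
  calc ‖Hfun κ t c C p x‖ ≤ ‖((t + x : ℝ) : ℂ) * (((p.1 : ℂ) * uu κ t c p.1 x) * ((p.2 : ℂ) * uu κ t c p.2 x))‖
        + ‖((t - x : ℝ) : ℂ) * (((p.1 : ℂ) * vv κ t C p.1 x) * ((p.2 : ℂ) * vv κ t C p.2 x))‖ :=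
      norm_add_le _ _
    _ = ‖(p.1 : ℂ) * c p.1‖ * ‖(p.2 : ℂ) * c p.2‖ * (1 / (t + x) + 1 / (t - x)) := by
      rw [e1, e2]; ring

lemma sum_Hfun (κ t : ℝ) (c C : ℤ → ℂ) (x : ℝ) (h1 : 0 < t + x) (h2 : 0 < t - x)
    (hc : Summable fun n : ℤ => ‖(n : ℂ) * c n‖) (hCs : Summable fun n : ℤ => ‖(n : ℂ) * C n‖) :
    ((t + x : ℝ) : ℂ) * FF κ t c x ^ 2 + ((t - x : ℝ) : ℂ) * GG κ t C x ^ 2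
      = ∑' p : ℤ × ℤ, Hfun κ t c C p x := by
  have S1 : Summable fun p : ℤ × ℤ => ((p.1 : ℂ) * uu κ t c p.1 x) * ((p.2 : ℂ) * uu κ t c p.2 x) :=
    summable_mul_of_summable_norm (f := fun n : ℤ => (n : ℂ) * uu κ t c n x)
      (g := fun n : ℤ => (n : ℂ) * uu κ t c n x) (summable_n_uu κ t c x h1 hc) (summable_n_uu κ t c x h1 hc)
  have S2 : Summable fun p : ℤ × ℤ => ((p.1 : ℂ) * vv κ t C p.1 x) * ((p.2 : ℂ) * vv κ t C p.2 x) :=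
    summable_mul_of_summable_norm (f := fun n : ℤ => (n : ℂ) * vv κ t C n x)
      (g := fun n : ℤ => (n : ℂ) * vv κ t C n x) (summable_n_vv κ t C x h2 hCs) (summable_n_vv κ t C x h2 hCs)
  rw [FF_sq κ t c x h1 hc, GG_sq κ t C x h2 hCs, ← tsum_mul_left, ← tsum_mul_left,
    ← Summable.tsum_add (S1.mul_left _) (S2.mul_left _)]
  rfl


/-- exact energy identity
`t·E(t) + ∫_{−ℓ₁t}^{ℓ₂t} x·φₓ·φ_t dx = S` for every `t ≥ t₀`. -/
theorem energy_identity
    (ℓ₁ ℓ₂ L₀ t₀ α β κ : ℝ)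
    (hℓ₁ : 0 ≤ ℓ₁) (hℓ₁' : ℓ₁ < 1) (hℓ₂ : 0 ≤ ℓ₂) (hℓ₂' : ℓ₂ < 1)
    (hℓ : 0 < ℓ₁ + ℓ₂) (hL₀ : 0 < L₀) (ht₀ : t₀ = L₀ / (ℓ₁ + ℓ₂))
    (hα : α = (1 + ℓ₁) / (1 - ℓ₂)) (hβ : β = (1 + ℓ₂) / (1 - ℓ₁))
    (hκ : κ = 2 / Real.log (α * β))
    (c : ℤ → ℂ) (hc0 : c 0 = 0)
    (hcsum : Summable fun n : ℤ => ‖(n : ℂ) * c n‖)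
    (hconj : ∀ n : ℤ, c (-n) = (starRingEnd ℂ) (c n))
    (C : ℤ → ℂ)
    (hC : ∀ n : ℤ, C n = c n *
      Complex.exp (Complex.I * n * Real.pi * κ * Real.log ((1 + ℓ₂) / (1 - ℓ₂))))
    (Φx : ℝ → ℝ → ℝ)
    (hΦx : ∀ t : ℝ, t₀ ≤ t → ∀ x : ℝ, -ℓ₁ * t ≤ x → x ≤ ℓ₂ * t →
      (Φx x t : ℂ) = Complex.I * Real.pi * κ * ∑' n : ℤ, (n : ℂ) *
        (c n * Complex.exp (Complex.I * n * Real.pi * κ * Real.log (t + x)) /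
            ((t + x : ℝ) : ℂ) +
         C n * Complex.exp (Complex.I * n * Real.pi * κ * Real.log (t - x)) /
            ((t - x : ℝ) : ℂ)))
    (Φt : ℝ → ℝ → ℝ)
    (hΦt : ∀ t : ℝ, t₀ ≤ t → ∀ x : ℝ, -ℓ₁ * t ≤ x → x ≤ ℓ₂ * t →
      (Φt x t : ℂ) = Complex.I * Real.pi * κ * ∑' n : ℤ, (n : ℂ) *
        (c n * Complex.exp (Complex.I * n * Real.pi * κ * Real.log (t + x)) /
            ((t + x : ℝ) : ℂ) -
         C n * Complex.exp (Complex.I * n * Real.pi * κ * Real.log (t - x)) /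
            ((t - x : ℝ) : ℂ)))
    (E : ℝ → ℝ)
    (hE : ∀ t : ℝ, E t = (1 / 2) * ∫ x in Set.Ioo (-ℓ₁ * t) (ℓ₂ * t),
      ((Φx x t) ^ 2 + (Φt x t) ^ 2))
    (S : ℝ) (hS : S = 2 * Real.pi ^ 2 * κ * ∑' n : ℤ, ‖(n : ℂ) * c n‖ ^ 2)
    :
    ∀ t : ℝ, t₀ ≤ t →
      t * E t + (∫ x in Set.Ioo (-ℓ₁ * t) (ℓ₂ * t), x * Φx x t * Φt x t) = S := by
  intro t ht
  have hπ : (0 : ℝ) < Real.pi := Real.pi_pos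
  have h1l : (0 : ℝ) < 1 - ℓ₁ := by linarith
  have h2l : (0 : ℝ) < 1 - ℓ₂ := by linarith
  have htpos : 0 < t := lt_of_lt_of_le (by rw [ht₀]; positivity) ht
  set a : ℝ := -ℓ₁ * t with ha
  set b : ℝ := ℓ₂ * t with hb
  have hab : a ≤ b := by rw [ha, hb]; nlinarith
  have hta : 0 < t + a := by rw [ha]; nlinarith
  have htb : 0 < t - b := by rw [hb]; nlinarith
  have htbp : 0 < t + b := by linarith
  have htap : 0 < t - a := by linarith
  -- log facts
  have hαβ : 1 < α * β := by
    rw [hα, hβ, div_mul_div_comm]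
    rw [lt_div_iff₀ (by positivity)]
    nlinarith
  have hlog : 0 < Real.log (α * β) := Real.log_pos hαβ
  have hκpos : 0 < κ := by rw [hκ]; positivity
  have hκΛ : κ * Real.log (α * β) = 2 := by rw [hκ]; field_simp
  set P : ℝ := Real.log ((1 + ℓ₂) / (1 - ℓ₂)) with hPdef
  have hP1 : P + Real.log (t - b) = Real.log (t + b) := by
    rw [hPdef, ← Real.log_mul (by positivity) htb.ne']
    congr 1
    rw [hb]
    field_simp
  have hP2 : P + Real.log (t - a) = Real.log (t + a) + Real.log (α * β) := by
    rw [hPdef, ← Real.log_mul (by positivity) htap.ne',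
      ← Real.log_mul hta.ne' (by positivity)]
    congr 1
    rw [ha, hα, hβ]
    field_simp
    ring
  -- norms of C
  have hCn : ∀ k : ℤ, ‖C k‖ = ‖c k‖ := by
    intro k
    have h1 : ‖Complex.exp (Complex.I * k * Real.pi * κ * Real.log ((1 + ℓ₂) / (1 - ℓ₂)))‖ = 1 :=
      norm_eK κ k ((1 + ℓ₂) / (1 - ℓ₂))
    rw [hC k, norm_mul, h1, mul_one]
  have hCsum : Summable fun n : ℤ => ‖(n : ℂ) * C n‖ :=
    hcsum.congr fun n => by rw [norm_mul, norm_mul, hCn n]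
  -- positivity on Icc
  have hIccP : ∀ x ∈ Set.Icc a b, 0 < t + x := fun x hx => by
    have := hx.1; linarith
  have hIccM : ∀ x ∈ Set.Icc a b, 0 < t - x := fun x hx => by
    have := hx.2; linarith
  -- Φ in terms of FF, GG
  have hPhix : ∀ x ∈ Set.Icc a b, (Φx x t : ℂ)
      = Complex.I * Real.pi * κ * (FF κ t c x + GG κ t C x) := by
    intro x hx
    rw [hΦx t ht x hx.1 hx.2]
    congr 1
    rw [FF, GG, ← Summable.tsum_add ((summable_n_uu κ t c x (hIccP x hx) hcsum).of_norm)
      ((summable_n_vv κ t C x (hIccM x hx) hCsum).of_norm)]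
    exact tsum_congr fun n => by simp only [uu, vv, eK]; ring
  have hPhit : ∀ x ∈ Set.Icc a b, (Φt x t : ℂ)
      = Complex.I * Real.pi * κ * (FF κ t c x - GG κ t C x) := by
    intro x hx
    rw [hΦt t ht x hx.1 hx.2]
    congr 1
    rw [FF, GG, ← Summable.tsum_sub ((summable_n_uu κ t c x (hIccP x hx) hcsum).of_norm)
      ((summable_n_vv κ t C x (hIccM x hx) hCsum).of_norm)]
    exact tsum_congr fun n => by simp only [uu, vv, eK]; ring
  -- continuity
  have hFFc : ContinuousOn (FF κ t c) (Set.Icc a b) :=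
    contOn_FF κ t c _ (t + a) hta (fun x hx => by have := hx.1; linarith) hcsum
  have hGGc : ContinuousOn (GG κ t C) (Set.Icc a b) :=
    contOn_GG κ t C _ (t - b) htb (fun x hx => by have := hx.2; linarith) hCsum
  have hauxx : ContinuousOn
      (fun x => (Complex.I * (Real.pi : ℂ) * (κ : ℂ) * (FF κ t c x + GG κ t C x)).re)
      (Set.Icc a b) :=
    Complex.continuous_re.comp_continuousOn (continuousOn_const.mul (hFFc.add hGGc))
  have hΦxc : ContinuousOn (fun x => Φx x t) (Set.Icc a b) :=
    hauxx.congr fun x hx => by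
      show Φx x t = (Complex.I * ↑Real.pi * ↑κ * (FF κ t c x + GG κ t C x)).re
      rw [← hPhix x hx, Complex.ofReal_re]
  have hauxt : ContinuousOn
      (fun x => (Complex.I * (Real.pi : ℂ) * (κ : ℂ) * (FF κ t c x - GG κ t C x)).re)
      (Set.Icc a b) :=
    Complex.continuous_re.comp_continuousOn (continuousOn_const.mul (hFFc.sub hGGc))
  have hΦtc : ContinuousOn (fun x => Φt x t) (Set.Icc a b) :=
    hauxt.congr fun x hx => by
      show Φt x t = (Complex.I * ↑Real.pi * ↑κ * (FF κ t c x - GG κ t C x)).re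
      rw [← hPhit x hx, Complex.ofReal_re]
  -- integrability
  have hI1 : IntegrableOn (fun x => (Φx x t) ^ 2 + (Φt x t) ^ 2) (Set.Ioo a b) volume :=
    (((hΦxc.pow 2).add (hΦtc.pow 2)).integrableOn_Icc).mono_set Set.Ioo_subset_Icc_self
  have hI2 : IntegrableOn (fun x => x * Φx x t * Φt x t) (Set.Ioo a b) volume :=
    (((continuousOn_id.mul hΦxc).mul hΦtc).integrableOn_Icc).mono_set Set.Ioo_subset_Icc_self
  have hcomb : t * E t + (∫ x in Set.Ioo a b, x * Φx x t * Φt x t)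
      = ∫ x in Set.Ioo a b, (t / 2 * ((Φx x t) ^ 2 + (Φt x t) ^ 2) + x * Φx x t * Φt x t) := by
    rw [hE t, integral_add (hI1.const_mul (t / 2)) hI2, integral_const_mul]
    ring
  rw [hcomb]
  -- pass to ℂ
  rw [show S = ((S : ℝ)) from rfl]
  have hgoal : ((∫ x in Set.Ioo a b, (t / 2 * ((Φx x t) ^ 2 + (Φt x t) ^ 2) + x * Φx x t * Φt x t) : ℝ) : ℂ)
      = ((S : ℝ) : ℂ) := by
    -- pointwise identity
    have hWc : ∀ x ∈ Set.Ioo a b,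
        ((t / 2 * ((Φx x t) ^ 2 + (Φt x t) ^ 2) + x * Φx x t * Φt x t : ℝ) : ℂ)
          = (-((Real.pi : ℂ) ^ 2 * (κ : ℂ) ^ 2)) * ∑' p : ℤ × ℤ, Hfun κ t c C p x := by
      intro x hx
      have hx' : x ∈ Set.Icc a b := Set.Ioo_subset_Icc_self hx
      have h1 : 0 < t + x := hIccP x hx'
      have h2 : 0 < t - x := hIccM x hx'
      rw [← sum_Hfun κ t c C x h1 h2 hcsum hCsum]
      push_cast
      rw [hPhix x hx', hPhit x hx']
      linear_combination ((Real.pi : ℂ) ^ 2 * (κ : ℂ) ^ 2 *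
        (((t : ℂ) + (x : ℂ)) * FF κ t c x ^ 2 + ((t : ℂ) - (x : ℂ)) * GG κ t C x ^ 2)) * Complex.I_sq
    calc ((∫ x in Set.Ioo a b, (t / 2 * ((Φx x t) ^ 2 + (Φt x t) ^ 2) + x * Φx x t * Φt x t) : ℝ) : ℂ)
        = ∫ x in Set.Ioo a b,
            ((t / 2 * ((Φx x t) ^ 2 + (Φt x t) ^ 2) + x * Φx x t * Φt x t : ℝ) : ℂ) :=
          integral_ofReal.symm
      _ = ∫ x in Set.Ioo a b, (-((Real.pi : ℂ) ^ 2 * (κ : ℂ) ^ 2)) * ∑' p : ℤ × ℤ, Hfun κ t c C p x :=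
          setIntegral_congr_fun measurableSet_Ioo hWc
      _ = (-((Real.pi : ℂ) ^ 2 * (κ : ℂ) ^ 2)) * ∫ x in Set.Ioo a b, ∑' p : ℤ × ℤ, Hfun κ t c C p x :=
          integral_const_mul _ _
      _ = (-((Real.pi : ℂ) ^ 2 * (κ : ℂ) ^ 2)) * ∑' p : ℤ × ℤ, ∫ x in Set.Ioo a b, Hfun κ t c C p x := by
          congr 1
          refine integral_tsum (fun p => ((contOn_Hfun κ t c C p _ hIccP hIccM).mono
            Set.Ioo_subset_Icc_self).aestronglyMeasurable measurableSet_Ioo) ?_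
          set M : ℝ := 1 / (t + a) + 1 / (t - b) with hM
          have hM0 : 0 ≤ M := by
            rw [hM]
            exact add_nonneg (one_div_pos.mpr hta).le (one_div_pos.mpr htb).le
          have hba : (0 : ℝ) ≤ b - a := by linarith
          have hbound : ∀ p : ℤ × ℤ, ∫⁻ x, ‖Hfun κ t c C p x‖₊ ∂(volume.restrict (Set.Ioo a b))
              ≤ ENNReal.ofReal (‖(p.1 : ℂ) * c p.1‖ * ‖(p.2 : ℂ) * c p.2‖ * (M * (b - a))) := by
            intro p
            have step : ∫⁻ x in Set.Ioo a b, ‖Hfun κ t c C p x‖₊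
                ≤ ∫⁻ x in Set.Ioo a b,
                    ENNReal.ofReal (‖(p.1 : ℂ) * c p.1‖ * ‖(p.2 : ℂ) * c p.2‖ * M) := by
              refine setLIntegral_mono measurable_const ?_
              intro x hx
              have hx' := Set.Ioo_subset_Icc_self hx
              have h1 := hIccP x hx'
              have h2 := hIccM x hx'
              rw [show (‖Hfun κ t c C p x‖₊ : ENNReal) = ENNReal.ofReal ‖Hfun κ t c C p x‖ from (ofReal_norm _).symm]
              apply ENNReal.ofReal_le_ofReal
              refine (norm_Hfun_le κ t c C hCn p x h1 h2).trans ?_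
              have e1 : 1 / (t + x) ≤ 1 / (t + a) := by
                apply one_div_le_one_div_of_le hta
                linarith [hx'.1]
              have e2 : 1 / (t - x) ≤ 1 / (t - b) := by
                apply one_div_le_one_div_of_le htb
                linarith [hx'.2]
              rw [hM]
              exact mul_le_mul_of_nonneg_left (add_le_add e1 e2)
                (mul_nonneg (norm_nonneg _) (norm_nonneg _))
            refine step.trans ?_
            rw [setLIntegral_const, Real.volume_Ioo,
              ← ENNReal.ofReal_mul (mul_nonneg (mul_nonneg (norm_nonneg _) (norm_nonneg _)) hM0),
              mul_assoc]
          have hDD : Summable fun p : ℤ × ℤ => ‖(p.1 : ℂ) * c p.1‖ * ‖(p.2 : ℂ) * c p.2‖ :=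
            (hcsum.mul_norm hcsum).congr fun p => norm_mul _ _
          have hsum2 : Summable fun p : ℤ × ℤ =>
              ‖(p.1 : ℂ) * c p.1‖ * ‖(p.2 : ℂ) * c p.2‖ * (M * (b - a)) :=
            hDD.mul_right _
          refine ne_top_of_le_ne_top ?_ (ENNReal.tsum_le_tsum hbound)
          rw [← ENNReal.ofReal_tsum_of_nonneg (fun p => mul_nonneg (mul_nonneg (norm_nonneg _) (norm_nonneg _)) (mul_nonneg hM0 hba)) hsum2]
          exact ENNReal.ofReal_ne_top
      _ = ((S : ℝ) : ℂ) := by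
          have hint : ∀ n m : ℤ, ∫ x in Set.Ioo a b, Hfun κ t c C (n, m) x
              = if m = -n then ((-(2 / κ) * ‖(n : ℂ) * c n‖ ^ 2 : ℝ) : ℂ) else 0 :=
            fun n m => integral_Hfun κ t a b P (Real.log (α * β)) c C hκpos.ne' hab hta htb
              hconj hC hP1 hP2 hκΛ n m
          have hdiag : ∑' p : ℤ × ℤ, ∫ x in Set.Ioo a b, Hfun κ t c C p x
              = ∑' n : ℤ, ((-(2 / κ) * ‖(n : ℂ) * c n‖ ^ 2 : ℝ) : ℂ) := by
            refine tsum_eq_tsum_of_ne_zero_bij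
              (fun n => ((n : ℤ), -(n : ℤ))) ?_ ?_ ?_
            · intro x y hxy
              exact Subtype.ext (congrArg Prod.fst hxy)
            · intro p hp
              have hp' : (∫ x in Set.Ioo a b, Hfun κ t c C (p.1, p.2) x) ≠ 0 := by
                rw [Prod.mk.eta]
                exact hp
              by_cases hc2 : p.2 = -p.1
              · refine ⟨⟨p.1, ?_⟩, ?_⟩
                · show ((-(2 / κ) * ‖(p.1 : ℂ) * c p.1‖ ^ 2 : ℝ) : ℂ) ≠ 0
                  rw [hint p.1 p.2, if_pos hc2] at hp'
                  exact hp'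
                · show ((p.1 : ℤ), -(p.1 : ℤ)) = p
                  rw [← hc2]
              · exfalso
                rw [hint p.1 p.2, if_neg hc2] at hp'
                exact hp' rfl
            · intro x
              rw [hint (x : ℤ) (-(x : ℤ)), if_pos rfl]
          rw [hdiag, ← Complex.ofReal_tsum, tsum_mul_left, hS]
          have hκ0 : (κ : ℂ) ≠ 0 := Complex.ofReal_ne_zero.mpr hκpos.ne'
          push_cast
          field_simp
  exact_mod_cast hgoal
end

section
/- For every t ≥ t₀, the energy satisfies the two-sided decay estimate S/(t(1+L)) ≤ E(t) ≤ S/(t(1−L)), where L = max{ℓ₁,ℓ₂} and S = 2π²κ·Σ_{n≠0} |n c_n|²; in particular E(t) decays at the rate 1/t. -/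
set_option maxHeartbeats 1000000
open MeasureTheory Complex intervalIntegral

section aux

lemma exp_norm_one (z : ℝ) : ‖Complex.exp (Complex.I * z)‖ = 1 := by
  rw [Complex.norm_exp]
  simp [Complex.mul_re]

lemma term_norm (a : ℂ) (n : ℤ) (ω s : ℝ) :
    ‖a * Complex.exp (Complex.I * n * ω * s)‖ = ‖a‖ := by
  rw [norm_mul]
  have : (Complex.I * n * ω * s : ℂ) = Complex.I * ((n * ω * s : ℝ) : ℂ) := by
    push_cast
    ring
  rw [this, exp_norm_one, mul_one]

lemma gfun_cont (a : ℤ → ℂ) (ha : Summable fun n => ‖a n‖) (ω : ℝ) :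
    Continuous fun s : ℝ => ∑' n : ℤ, a n * Complex.exp (Complex.I * n * ω * s) := by
  apply continuous_tsum (u := fun n => ‖a n‖) _ ha
  · intro n s
    exact le_of_eq (term_norm (a n) n ω s)
  · intro n
    fun_prop

lemma summable_aux (a : ℤ → ℂ) (ha : Summable fun n => ‖a n‖) (ω s : ℝ) (y : ℂ) :
    Summable fun n : ℤ => a n * Complex.exp (Complex.I * n * ω * s) / y := by
  apply Summable.of_norm
  have : (fun n : ℤ => ‖a n * Complex.exp (Complex.I * n * ω * s) / y‖)
      = fun n : ℤ => ‖a n‖ * ‖y‖⁻¹ := by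
    ext n
    rw [norm_div, term_norm, div_eq_mul_inv]
  rw [this]
  exact ha.mul_right _

lemma exp_orth (ω : ℝ) (hω : 0 < ω) (r : ℝ) (k : ℤ) :
    (∫ s in r..(r + 2*Real.pi/ω), Complex.exp (Complex.I * k * ω * s))
      = if k = 0 then ((2*Real.pi/ω : ℝ) : ℂ) else 0 := by
  rcases eq_or_ne k 0 with hk | hk
  · simp [hk]
  · rw [if_neg hk]
    have hω' : (ω : ℂ) ≠ 0 := by exact_mod_cast hω.ne'
    have hk' : (k : ℂ) ≠ 0 := by exact_mod_cast hk
    have hc : (Complex.I * k * ω : ℂ) ≠ 0 := by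
      exact mul_ne_zero (mul_ne_zero Complex.I_ne_zero hk') hω'
    have h := integral_exp_mul_complex (a := r) (b := r + 2*Real.pi/ω) hc
    rw [h]
    have hper : Complex.exp ((Complex.I * k * ω) * ((r : ℝ) + 2*Real.pi/ω : ℝ)) =
        Complex.exp ((Complex.I * k * ω) * r) := by
      push_cast
      rw [mul_add, Complex.exp_add]
      have : (Complex.I * k * ω) * (2*(Real.pi:ℂ)/ω) = k * (2 * Real.pi * Complex.I) := by
        field_simp
      rw [this, Complex.exp_int_mul_two_pi_mul_I]
      ring
    rw [hper, sub_self, zero_div]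

lemma parseval (a : ℤ → ℂ) (ha : Summable fun n => ‖a n‖) (ω r : ℝ) (hω : 0 < ω) :
    (∫ s in r..(r + 2*Real.pi/ω),
        ‖∑' n : ℤ, a n * Complex.exp (Complex.I * n * ω * s)‖^2)
      = (2*Real.pi/ω) * ∑' n : ℤ, ‖a n‖^2 := by
  set P : ℝ := 2*Real.pi/ω with hPdef
  have hP : 0 < P := by positivity
  set g : ℝ → ℂ := fun s => ∑' n : ℤ, a n * Complex.exp (Complex.I * n * ω * s) with hgdef
  have hterm_norm : ∀ (n : ℤ) (s : ℝ), ‖a n * Complex.exp (Complex.I * n * ω * s)‖ = ‖a n‖ := by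
    intro n s
    rw [norm_mul]
    have : (Complex.I * n * ω * s : ℂ) = Complex.I * ((n * ω * s : ℝ) : ℂ) := by push_cast; ring
    rw [this, exp_norm_one, mul_one]
  have hg_cont : Continuous g := by
    apply continuous_tsum (u := fun n => ‖a n‖) _ ha
    · intro n s
      exact le_of_eq (hterm_norm n s)
    · intro n
      fun_prop
  set F : ℤ × ℤ → ℝ → ℂ := fun p s =>
    a p.1 * (starRingEnd ℂ) (a p.2) * Complex.exp (Complex.I * (p.1 - p.2) * ω * s) with hFdef
  have hconjsum : Summable fun n : ℤ => ‖(starRingEnd ℂ) (a n)‖ := by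
    simpa using ha
  -- pointwise expansion
  have hpt : ∀ s : ℝ, g s * (starRingEnd ℂ) (g s) = ∑' p : ℤ × ℤ, F p s := by
    intro s
    have hconj : (starRingEnd ℂ) (g s)
        = ∑' n : ℤ, (starRingEnd ℂ) (a n) * Complex.exp (Complex.I * (-n) * ω * s) := by
      have h1 : (starRingEnd ℂ) (g s) = ∑' n : ℤ, star (a n * Complex.exp (Complex.I * n * ω * s)) := by
        rw [hgdef, ← tsum_star]; rfl
      rw [h1]
      congr 1
      ext n
      rw [star_mul']
      congr 1
      show (starRingEnd ℂ) (Complex.exp (Complex.I * n * ω * s)) = _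
      rw [← Complex.exp_conj]
      congr 1
      simp only [map_mul, Complex.conj_I, map_intCast, Complex.conj_ofReal]
      push_cast; ring
    rw [hconj, hgdef]
    rw [tsum_mul_tsum_of_summable_norm (by simpa only [hterm_norm] using ha)
      (by
        have : ∀ n : ℤ, ‖(starRingEnd ℂ) (a n) * Complex.exp (Complex.I * (-n) * ω * s)‖ = ‖a n‖ := by
          intro n
          rw [norm_mul, RCLike.norm_conj]
          have : (Complex.I * (-n) * ω * s : ℂ) = Complex.I * (((-n : ℤ) * ω * s : ℝ) : ℂ) := by
            push_cast; ring
          rw [this, exp_norm_one, mul_one]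
        simpa only [this] using ha)]
    congr 1
    ext p
    rw [hFdef]
    simp only
    rw [mul_mul_mul_comm, ← Complex.exp_add]
    congr 2
    push_cast; ring
  have hsq : ∀ s : ℝ, ‖g s‖^2 = (∑' p : ℤ × ℤ, F p s).re := by
    intro s
    rw [← hpt s, Complex.mul_conj]
    rw [Complex.ofReal_re, Complex.normSq_eq_norm_sq]
  have hle : r ≤ r + P := by linarith
  have hFnorm : ∀ (p : ℤ × ℤ) (s : ℝ), ‖F p s‖ = ‖a p.1‖ * ‖a p.2‖ := by
    intro p s
    rw [hFdef]
    simp only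
    rw [norm_mul, norm_mul, RCLike.norm_conj]
    have : (Complex.I * ((p.1 : ℂ) - (p.2 : ℂ)) * ω * s)
        = Complex.I * ((((p.1 - p.2 : ℤ) : ℝ) * ω * s : ℝ) : ℂ) := by push_cast; ring
    rw [this, exp_norm_one, mul_one]
  have hFcont : ∀ p : ℤ × ℤ, Continuous (F p) := by
    intro p; rw [hFdef]; fun_prop
  have hFint : ∀ p : ℤ × ℤ, IntegrableOn (F p) (Set.Ioc r (r + P)) := fun p =>
    (hFcont p).integrableOn_Ioc
  have hμ : (volume (Set.Ioc r (r + P))).toReal = P := by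
    rw [Real.volume_Ioc]
    simp [ENNReal.toReal_ofReal hP.le]
  have hFsum : Summable fun p : ℤ × ℤ => ∫ s in Set.Ioc r (r + P), ‖F p s‖ := by
    have : (fun p : ℤ × ℤ => ∫ s in Set.Ioc r (r + P), ‖F p s‖)
        = fun p : ℤ × ℤ => (‖a p.1‖ * ‖a p.2‖) * P := by
      ext p
      rw [show (fun s => ‖F p s‖) = fun _ : ℝ => ‖a p.1‖ * ‖a p.2‖ from funext (hFnorm p)]
      rw [setIntegral_const, measureReal_def, hμ, smul_eq_mul, mul_comm]
    rw [this]
    exact (ha.mul_of_nonneg ha (fun n => norm_nonneg _) fun n => norm_nonneg _).mul_right P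
  have horth : ∀ p : ℤ × ℤ, (∫ s in Set.Ioc r (r + P), F p s)
      = a p.1 * (starRingEnd ℂ) (a p.2) * (if p.1 = p.2 then ((P : ℝ) : ℂ) else 0) := by
    intro p
    have h1 : (∫ s in Set.Ioc r (r + P), F p s)
        = a p.1 * (starRingEnd ℂ) (a p.2)
          * ∫ s in Set.Ioc r (r + P), Complex.exp (Complex.I * ((p.1 - p.2 : ℤ) : ℂ) * ω * s) := by
      rw [← MeasureTheory.integral_const_mul]
      congr 1
      ext s
      rw [hFdef]
      push_cast
      ring_nf
    rw [h1]
    congr 1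
    rw [← intervalIntegral.integral_of_le hle, hPdef, exp_orth ω hω r (p.1 - p.2)]
    simp [sub_eq_zero, hPdef]
  have hdiag : (∑' p : ℤ × ℤ,
        (a p.1 * (starRingEnd ℂ) (a p.2) * (if p.1 = p.2 then ((P : ℝ) : ℂ) else 0)))
      = ∑' n : ℤ, a n * (starRingEnd ℂ) (a n) * ((P : ℝ) : ℂ) := by
    apply tsum_eq_tsum_of_ne_zero_bij
      (fun x => ((x : ℤ), (x : ℤ)))
    · intro x y hxy
      simp only [Prod.mk.injEq] at hxy
      exact Subtype.ext hxy.1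
    · intro p hp
      simp only [Function.mem_support] at hp
      have hpe : p.1 = p.2 := by
        by_contra hne
        rw [if_neg hne, mul_zero] at hp
        exact hp rfl
      refine ⟨⟨p.1, ?_⟩, ?_⟩
      · simp only [Function.mem_support]
        rw [← hpe] at hp
        simpa using hp
      · simp [Prod.ext_iff, hpe]
    · intro x
      simp
  have hterm : ∀ n : ℤ, a n * (starRingEnd ℂ) (a n) * ((P : ℝ) : ℂ)
      = (((‖a n‖^2 * P : ℝ)) : ℂ) := by
    intro n
    rw [Complex.mul_conj, Complex.normSq_eq_norm_sq]
    push_cast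
    ring
  have hint_sum : IntegrableOn (fun s => g s * (starRingEnd ℂ) (g s)) (Set.Ioc r (r + P)) := by
    exact (hg_cont.mul (Complex.continuous_conj.comp hg_cont)).integrableOn_Ioc
  calc (∫ s in r..(r + P), ‖g s‖^2)
      = ∫ s in Set.Ioc r (r + P), ‖g s‖^2 := intervalIntegral.integral_of_le hle
    _ = ∫ s in Set.Ioc r (r + P), (g s * (starRingEnd ℂ) (g s)).re := by
        apply setIntegral_congr_fun measurableSet_Ioc
        intro s _
        show ‖g s‖ ^ 2 = (g s * (starRingEnd ℂ) (g s)).re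
        rw [hsq s, hpt s]
    _ = (∫ s in Set.Ioc r (r + P), g s * (starRingEnd ℂ) (g s)).re :=
        integral_re hint_sum
    _ = (∑' p : ℤ × ℤ, ∫ s in Set.Ioc r (r + P), F p s).re := by
        rw [integral_tsum_of_summable_integral_norm hFint hFsum]
        congr 1
        apply setIntegral_congr_fun measurableSet_Ioc
        intro s _
        exact hpt s
    _ = (∑' n : ℤ, (((‖a n‖^2 * P : ℝ)) : ℂ)).re := by
        rw [tsum_congr horth, hdiag, tsum_congr hterm]
    _ = ∑' n : ℤ, ‖a n‖^2 * P := by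
        rw [← Complex.ofReal_tsum, Complex.ofReal_re]
    _ = P * ∑' n : ℤ, ‖a n‖^2 := by
        rw [tsum_mul_right, mul_comm]


lemma weighted_bounds (h : ℝ → ℝ) (hcont : Continuous h) (hnn : ∀ s, 0 ≤ h s)
    (b₁ b₂ c₁ c₂ : ℝ) (hb : b₁ ≤ b₂)
    (hc : ∀ s ∈ Set.Icc b₁ b₂, c₁ ≤ Real.exp (-s) ∧ Real.exp (-s) ≤ c₂) :
    c₁ * (∫ s in b₁..b₂, h s) ≤ (∫ s in b₁..b₂, h s * Real.exp (-s)) ∧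
      (∫ s in b₁..b₂, h s * Real.exp (-s)) ≤ c₂ * ∫ s in b₁..b₂, h s := by
  have hint1 : IntervalIntegrable (fun s => c₁ * h s) volume b₁ b₂ :=
    (continuous_const.mul hcont).intervalIntegrable _ _
  have hint2 : IntervalIntegrable (fun s => h s * Real.exp (-s)) volume b₁ b₂ :=
    (hcont.mul (Real.continuous_exp.comp continuous_neg)).intervalIntegrable _ _
  have hint3 : IntervalIntegrable (fun s => c₂ * h s) volume b₁ b₂ :=
    (continuous_const.mul hcont).intervalIntegrable _ _
  constructor
  · rw [← intervalIntegral.integral_const_mul]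
    apply intervalIntegral.integral_mono_on hb hint1 hint2
    intro s hs
    calc c₁ * h s ≤ Real.exp (-s) * h s :=
          mul_le_mul_of_nonneg_right (hc s hs).1 (hnn s)
      _ = h s * Real.exp (-s) := mul_comm _ _
  · rw [← intervalIntegral.integral_const_mul]
    apply intervalIntegral.integral_mono_on hb hint2 hint3
    intro s hs
    calc h s * Real.exp (-s) = Real.exp (-s) * h s := mul_comm _ _
      _ ≤ c₂ * h s := mul_le_mul_of_nonneg_right (hc s hs).2 (hnn s)

end aux


/-- two-sided energy decay estimate
`S/(t(1+L)) ≤ E(t) ≤ S/(t(1−L))` for `t ≥ t₀`. -/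
theorem energy_decay_estimate
    (ℓ₁ ℓ₂ L₀ t₀ α β κ : ℝ)
    (hℓ₁ : 0 ≤ ℓ₁) (hℓ₁' : ℓ₁ < 1) (hℓ₂ : 0 ≤ ℓ₂) (hℓ₂' : ℓ₂ < 1)
    (hℓ : 0 < ℓ₁ + ℓ₂) (hL₀ : 0 < L₀) (ht₀ : t₀ = L₀ / (ℓ₁ + ℓ₂))
    (hα : α = (1 + ℓ₁) / (1 - ℓ₂)) (hβ : β = (1 + ℓ₂) / (1 - ℓ₁))
    (hκ : κ = 2 / Real.log (α * β))
    (L : ℝ) (hL : L = max ℓ₁ ℓ₂)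
    (c : ℤ → ℂ) (hc0 : c 0 = 0)
    (hcsum : Summable fun n : ℤ => ‖(n : ℂ) * c n‖)
    (hconj : ∀ n : ℤ, c (-n) = (starRingEnd ℂ) (c n))
    (C : ℤ → ℂ)
    (hC : ∀ n : ℤ, C n = c n *
      Complex.exp (Complex.I * n * Real.pi * κ * Real.log ((1 + ℓ₂) / (1 - ℓ₂))))
    (Φx : ℝ → ℝ → ℝ)
    (hΦx : ∀ t : ℝ, t₀ ≤ t → ∀ x : ℝ, -ℓ₁ * t ≤ x → x ≤ ℓ₂ * t →
      (Φx x t : ℂ) = Complex.I * Real.pi * κ * ∑' n : ℤ, (n : ℂ) *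
        (c n * Complex.exp (Complex.I * n * Real.pi * κ * Real.log (t + x)) /
            ((t + x : ℝ) : ℂ) +
         C n * Complex.exp (Complex.I * n * Real.pi * κ * Real.log (t - x)) /
            ((t - x : ℝ) : ℂ)))
    (Φt : ℝ → ℝ → ℝ)
    (hΦt : ∀ t : ℝ, t₀ ≤ t → ∀ x : ℝ, -ℓ₁ * t ≤ x → x ≤ ℓ₂ * t →
      (Φt x t : ℂ) = Complex.I * Real.pi * κ * ∑' n : ℤ, (n : ℂ) *
        (c n * Complex.exp (Complex.I * n * Real.pi * κ * Real.log (t + x)) /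
            ((t + x : ℝ) : ℂ) -
         C n * Complex.exp (Complex.I * n * Real.pi * κ * Real.log (t - x)) /
            ((t - x : ℝ) : ℂ)))
    (E : ℝ → ℝ)
    (hE : ∀ t : ℝ, E t = (1 / 2) * ∫ x in Set.Ioo (-ℓ₁ * t) (ℓ₂ * t),
      ((Φx x t) ^ 2 + (Φt x t) ^ 2))
    (S : ℝ) (hS : S = 2 * Real.pi ^ 2 * κ * ∑' n : ℤ, ‖(n : ℂ) * c n‖ ^ 2)
    :
    ∀ t : ℝ, t₀ ≤ t →
      S / (t * (1 + L)) ≤ E t ∧ E t ≤ S / (t * (1 - L)) := by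
  intro t ht
  have hπ := Real.pi_pos
  have h1ℓ₁ : (0:ℝ) < 1 - ℓ₁ := by linarith
  have h1ℓ₂ : (0:ℝ) < 1 - ℓ₂ := by linarith
  have h1ℓ₁' : (0:ℝ) < 1 + ℓ₁ := by linarith
  have h1ℓ₂' : (0:ℝ) < 1 + ℓ₂ := by linarith
  have hLℓ₁ : ℓ₁ ≤ L := hL ▸ le_max_left _ _
  have hLℓ₂ : ℓ₂ ≤ L := hL ▸ le_max_right _ _
  have hL0 : 0 ≤ L := le_trans hℓ₁ hLℓ₁
  have hL1 : L < 1 := by rw [hL]; exact max_lt hℓ₁' hℓ₂'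
  have h1L : (0:ℝ) < 1 - L := by linarith
  have h1L' : (0:ℝ) < 1 + L := by linarith
  have htpos : 0 < t := lt_of_lt_of_le (by rw [ht₀]; positivity) ht
  have hαβ : 1 < α * β := by
    rw [hα, hβ, div_mul_div_comm]
    rw [one_lt_div (by positivity)]
    nlinarith
  have hlogαβ : 0 < Real.log (α * β) := Real.log_pos hαβ
  have hκ_pos : 0 < κ := by rw [hκ]; positivity
  have hκlog : 2 / κ = Real.log (α * β) := by rw [hκ]; field_simp
  set ω := Real.pi * κ with hωdef
  have hω : 0 < ω := by positivity
  have hωc : (ω : ℂ) = (Real.pi : ℂ) * (κ : ℂ) := by rw [hωdef]; push_cast; ring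
  set d := Real.log ((1 + ℓ₂) / (1 - ℓ₂)) with hddef
  set a : ℤ → ℂ := fun n => (n : ℂ) * c n with hadef
  have ha : Summable fun n => ‖a n‖ := hcsum
  set g : ℝ → ℂ := fun s => ∑' n : ℤ, a n * Complex.exp (Complex.I * n * ω * s) with hgdef
  have hg_cont : Continuous g := gfun_cont a ha ω
  have hr : -ℓ₁ * t ≤ ℓ₂ * t := by nlinarith
  have hpx : ∀ x : ℝ, -ℓ₁ * t ≤ x → (0:ℝ) < t + x := by intro x hx; nlinarith
  have hmx : ∀ x : ℝ, x ≤ ℓ₂ * t → (0:ℝ) < t - x := by intro x hx; nlinarith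
  set FA : ℝ → ℝ := fun x => ‖g (Real.log (t + x))‖ ^ 2 / (t + x) ^ 2 with hFAdef
  set FB : ℝ → ℝ := fun x => ‖g (Real.log (t - x) + d)‖ ^ 2 / (t - x) ^ 2 with hFBdef
  -- pointwise identity
  have hpt : ∀ x ∈ Set.Ioo (-ℓ₁ * t) (ℓ₂ * t),
      (Φx x t) ^ 2 + (Φt x t) ^ 2 = 2 * (Real.pi * κ) ^ 2 * (FA x + FB x) := by
    intro x hx
    have hxl : -ℓ₁ * t ≤ x := hx.1.le
    have hxr : x ≤ ℓ₂ * t := hx.2.le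
    have h1 : 0 < t + x := hpx x hxl
    have h2 : 0 < t - x := hmx x hxr
    set u : ℂ := g (Real.log (t + x)) / ((t + x : ℝ) : ℂ) with hu
    set v : ℂ := g (Real.log (t - x) + d) / ((t - x : ℝ) : ℂ) with hv
    have hterm1 : ∀ n : ℤ,
        (n : ℂ) * (c n * Complex.exp (Complex.I * n * Real.pi * κ * Real.log (t + x)) /
            ((t + x : ℝ) : ℂ) +
          C n * Complex.exp (Complex.I * n * Real.pi * κ * Real.log (t - x)) /
            ((t - x : ℝ) : ℂ))
        = a n * Complex.exp (Complex.I * n * ω * (Real.log (t + x))) / ((t + x : ℝ) : ℂ)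
          + a n * Complex.exp (Complex.I * n * ω * ((Real.log (t - x) + d : ℝ))) /
            ((t - x : ℝ) : ℂ) := by
      intro n
      rw [hC n, hadef]
      simp only
      have hsplit : Complex.exp (Complex.I * n * ω * ((Real.log (t - x) + d : ℝ)))
          = Complex.exp (Complex.I * n * Real.pi * κ * d)
            * Complex.exp (Complex.I * n * Real.pi * κ * Real.log (t - x)) := by
        rw [← Complex.exp_add, hωc]
        congr 1
        push_cast
        ring
      rw [hsplit, hωc]
      ring
    have hterm2 : ∀ n : ℤ,
        (n : ℂ) * (c n * Complex.exp (Complex.I * n * Real.pi * κ * Real.log (t + x)) /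
            ((t + x : ℝ) : ℂ) -
          C n * Complex.exp (Complex.I * n * Real.pi * κ * Real.log (t - x)) /
            ((t - x : ℝ) : ℂ))
        = a n * Complex.exp (Complex.I * n * ω * (Real.log (t + x))) / ((t + x : ℝ) : ℂ)
          - a n * Complex.exp (Complex.I * n * ω * ((Real.log (t - x) + d : ℝ))) /
            ((t - x : ℝ) : ℂ) := by
      intro n
      rw [hC n, hadef]
      simp only
      have hsplit : Complex.exp (Complex.I * n * ω * ((Real.log (t - x) + d : ℝ)))
          = Complex.exp (Complex.I * n * Real.pi * κ * d)
            * Complex.exp (Complex.I * n * Real.pi * κ * Real.log (t - x)) := by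
        rw [← Complex.exp_add, hωc]
        congr 1
        push_cast
        ring
      rw [hsplit, hωc]
      ring
    have hsum1 : Summable (fun n : ℤ =>
        a n * Complex.exp (Complex.I * n * ω * (Real.log (t + x))) / ((t + x : ℝ) : ℂ)) :=
      summable_aux a ha ω _ _
    have hsum2 : Summable (fun n : ℤ =>
        a n * Complex.exp (Complex.I * n * ω * ((Real.log (t - x) + d : ℝ))) /
          ((t - x : ℝ) : ℂ)) :=
      summable_aux a ha ω _ _
    have hx1 := hΦx t ht x hxl hxr
    have hx2 := hΦt t ht x hxl hxr
    rw [tsum_congr hterm1, Summable.tsum_add hsum1 hsum2, tsum_div_const, tsum_div_const] at hx1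
    rw [tsum_congr hterm2, Summable.tsum_sub hsum1 hsum2, tsum_div_const, tsum_div_const] at hx2
    have habs : ∀ (w : ℝ) (z : ℂ), (w : ℂ) = Complex.I * Real.pi * κ * z →
        w ^ 2 = (Real.pi * κ) ^ 2 * ‖z‖ ^ 2 := by
      intro w z h
      have h3 : ‖(w : ℂ)‖ = ‖Complex.I * (Real.pi : ℂ) * (κ : ℂ) * z‖ := by rw [h]
      rw [Complex.norm_real, norm_mul, norm_mul, norm_mul, Complex.norm_I, one_mul,
        Complex.norm_real, Complex.norm_real, Real.norm_eq_abs, Real.norm_eq_abs,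
        Real.norm_eq_abs, abs_of_pos hπ, abs_of_pos hκ_pos] at h3
      rw [← _root_.sq_abs w, h3]
      ring
    have e1 := habs _ _ hx1
    have e2 := habs _ _ hx2
    rw [e1, e2]
    have hpar : ‖u + v‖ ^ 2 + ‖u - v‖ ^ 2 = 2 * (‖u‖ ^ 2 + ‖v‖ ^ 2) := by
      have := parallelogram_law_with_norm ℝ u v
      simpa [pow_two] using this
    have hFAx : FA x = ‖u‖ ^ 2 := by
      rw [hFAdef, hu]
      simp only
      rw [norm_div, Complex.norm_real, Real.norm_eq_abs, abs_of_pos h1, div_pow]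
    have hFBx : FB x = ‖v‖ ^ 2 := by
      rw [hFBdef, hv]
      simp only
      rw [norm_div, Complex.norm_real, Real.norm_eq_abs, abs_of_pos h2, div_pow]
    rw [hFAx, hFBx]
    linear_combination (Real.pi * κ) ^ 2 * hpar
  -- continuity
  have hFA_cont : ContinuousOn FA (Set.Icc (-ℓ₁ * t) (ℓ₂ * t)) := by
    intro x hx
    have hx1 : 0 < t + x := hpx x hx.1
    apply ContinuousAt.continuousWithinAt
    have h2 : ContinuousAt (fun y : ℝ => Real.log (t + y)) x :=
      (Real.continuousAt_log hx1.ne').comp (by fun_prop)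
    have h3 : ContinuousAt (fun y : ℝ => g (Real.log (t + y))) x :=
      hg_cont.continuousAt.comp h2
    exact (h3.norm.pow 2).div (by fun_prop) (by positivity)
  have hFB_cont : ContinuousOn FB (Set.Icc (-ℓ₁ * t) (ℓ₂ * t)) := by
    intro x hx
    have hx1 : 0 < t - x := hmx x hx.2
    apply ContinuousAt.continuousWithinAt
    have h2 : ContinuousAt (fun y : ℝ => Real.log (t - y) + d) x :=
      ((Real.continuousAt_log hx1.ne').comp (by fun_prop)).add continuousAt_const
    have h3 : ContinuousAt (fun y : ℝ => g (Real.log (t - y) + d)) x :=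
      hg_cont.continuousAt.comp h2
    exact (h3.norm.pow 2).div (by fun_prop) (by positivity)
  -- energy as interval integral
  have hE' : E t = (Real.pi * κ) ^ 2 *
      ((∫ x in (-ℓ₁ * t)..(ℓ₂ * t), FA x) + ∫ x in (-ℓ₁ * t)..(ℓ₂ * t), FB x) := by
    have hFAi : IntervalIntegrable FA volume (-ℓ₁ * t) (ℓ₂ * t) :=
      ContinuousOn.intervalIntegrable (by rw [Set.uIcc_of_le hr]; exact hFA_cont)
    have hFBi : IntervalIntegrable FB volume (-ℓ₁ * t) (ℓ₂ * t) :=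
      ContinuousOn.intervalIntegrable (by rw [Set.uIcc_of_le hr]; exact hFB_cont)
    rw [hE t]
    rw [setIntegral_congr_fun measurableSet_Ioo (fun x hx => hpt x hx)]
    rw [← MeasureTheory.integral_Ioc_eq_integral_Ioo,
      ← intervalIntegral.integral_of_le hr]
    rw [intervalIntegral.integral_const_mul, intervalIntegral.integral_add hFAi hFBi]
    ring
  -- substitutions
  have hsubA : (∫ x in (-ℓ₁ * t)..(ℓ₂ * t), FA x)
      = ∫ s in Real.log ((1 - ℓ₁) * t)..Real.log ((1 + ℓ₂) * t),
          ‖g s‖ ^ 2 * Real.exp (-s) := by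
    have hderiv : ∀ x ∈ Set.uIcc (-ℓ₁ * t) (ℓ₂ * t),
        HasDerivAt (fun y => Real.log (t + y)) ((t + x)⁻¹) x := by
      intro x hx
      rw [Set.uIcc_of_le hr] at hx
      have h1 : 0 < t + x := hpx x hx.1
      have := (Real.hasDerivAt_log h1.ne').comp x ((hasDerivAt_id x).const_add t)
      exact this.congr_deriv (by simp)
    have hcont' : ContinuousOn (fun x : ℝ => (t + x)⁻¹) (Set.uIcc (-ℓ₁ * t) (ℓ₂ * t)) := by
      rw [Set.uIcc_of_le hr]
      intro x hx
      exact ((continuousAt_const.add continuousAt_id).inv₀ (hpx x hx.1).ne').continuousWithinAt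
    have hGc : Continuous (fun s : ℝ => ‖g s‖ ^ 2 * Real.exp (-s)) := by fun_prop
    have heq := intervalIntegral.integral_comp_smul_deriv hderiv hcont' hGc
    have hLHS : (∫ x in (-ℓ₁ * t)..(ℓ₂ * t), FA x)
        = ∫ x in (-ℓ₁ * t)..(ℓ₂ * t),
            (t + x)⁻¹ • (‖g (Real.log (t + x))‖ ^ 2 * Real.exp (-(Real.log (t + x)))) := by
      apply intervalIntegral.integral_congr
      intro x hx
      rw [Set.uIcc_of_le hr] at hx
      have h1 : 0 < t + x := hpx x hx.1
      show FA x = _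
      rw [hFAdef]
      simp only [smul_eq_mul, Real.exp_neg, Real.exp_log h1]
      rw [pow_two (t + x), div_eq_mul_inv, mul_inv]
      ring
    have heq' : (∫ x in (-ℓ₁ * t)..(ℓ₂ * t),
          (t + x)⁻¹ • (‖g (Real.log (t + x))‖ ^ 2 * Real.exp (-(Real.log (t + x)))))
        = ∫ s in Real.log (t + -ℓ₁ * t)..Real.log (t + ℓ₂ * t),
            ‖g s‖ ^ 2 * Real.exp (-s) := heq
    rw [hLHS, heq', show t + -ℓ₁ * t = (1 - ℓ₁) * t from by ring,
      show t + ℓ₂ * t = (1 + ℓ₂) * t from by ring]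
  have hsubB : (∫ x in (-ℓ₁ * t)..(ℓ₂ * t), FB x)
      = ∫ u in Real.log ((1 - ℓ₂) * t)..Real.log ((1 + ℓ₁) * t),
          ‖g (u + d)‖ ^ 2 * Real.exp (-u) := by
    have hderiv : ∀ x ∈ Set.uIcc (-ℓ₁ * t) (ℓ₂ * t),
        HasDerivAt (fun y => Real.log (t - y)) (-(t - x)⁻¹) x := by
      intro x hx
      rw [Set.uIcc_of_le hr] at hx
      have h1 : 0 < t - x := hmx x hx.2
      have h2 : HasDerivAt (fun y : ℝ => t - y) (-1) x := by
        exact (hasDerivAt_id x).const_sub t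
      have := (Real.hasDerivAt_log h1.ne').comp x h2
      exact this.congr_deriv (by simp)
    have hcont' : ContinuousOn (fun x : ℝ => -(t - x)⁻¹) (Set.uIcc (-ℓ₁ * t) (ℓ₂ * t)) := by
      rw [Set.uIcc_of_le hr]
      intro x hx
      exact (((continuous_const.sub continuous_id).continuousAt.inv₀
        (hmx x hx.2).ne').neg).continuousWithinAt
    have hGc : Continuous (fun u : ℝ => ‖g (u + d)‖ ^ 2 * Real.exp (-u)) := by fun_prop
    have heq := intervalIntegral.integral_comp_smul_deriv hderiv hcont' hGc
    have hLHS : (∫ x in (-ℓ₁ * t)..(ℓ₂ * t),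
          -(t - x)⁻¹ • (‖g (Real.log (t - x) + d)‖ ^ 2 * Real.exp (-(Real.log (t - x)))))
        = -∫ x in (-ℓ₁ * t)..(ℓ₂ * t), FB x := by
      rw [← intervalIntegral.integral_neg]
      apply intervalIntegral.integral_congr
      intro x hx
      rw [Set.uIcc_of_le hr] at hx
      have h1 : 0 < t - x := hmx x hx.2
      show _ = -FB x
      rw [hFBdef]
      simp only [smul_eq_mul, Real.exp_neg, Real.exp_log h1]
      rw [pow_two (t - x), div_eq_mul_inv, mul_inv]
      ring
    have heq' : (∫ x in (-ℓ₁ * t)..(ℓ₂ * t),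
          -(t - x)⁻¹ • (‖g (Real.log (t - x) + d)‖ ^ 2 * Real.exp (-(Real.log (t - x)))))
        = ∫ u in Real.log (t - -ℓ₁ * t)..Real.log (t - ℓ₂ * t),
            ‖g (u + d)‖ ^ 2 * Real.exp (-u) := heq
    have heq2 : -(∫ x in (-ℓ₁ * t)..(ℓ₂ * t), FB x)
        = ∫ u in Real.log (t - -ℓ₁ * t)..Real.log (t - ℓ₂ * t),
            ‖g (u + d)‖ ^ 2 * Real.exp (-u) := by
      rw [← hLHS, heq']
    rw [show t - -ℓ₁ * t = (1 + ℓ₁) * t from by ring,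
      show t - ℓ₂ * t = (1 - ℓ₂) * t from by ring] at heq2
    rw [← neg_neg (∫ x in (-ℓ₁ * t)..(ℓ₂ * t), FB x), heq2,
      ← intervalIntegral.integral_symm]
  -- Parseval over the full period
  have hIAB : (∫ s in Real.log ((1 - ℓ₁) * t)..Real.log ((1 + ℓ₂) * t), ‖g s‖ ^ 2)
      + (∫ u in Real.log ((1 - ℓ₂) * t)..Real.log ((1 + ℓ₁) * t), ‖g (u + d)‖ ^ 2)
      = (2 / κ) * ∑' n : ℤ, ‖a n‖ ^ 2 := by
    have hP : 2 * Real.pi / ω = Real.log (α * β) := by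
      rw [hωdef, ← hκlog]
      field_simp
    have hu1 : Real.log ((1 - ℓ₂) * t) + d = Real.log ((1 + ℓ₂) * t) := by
      rw [hddef, ← Real.log_mul (by positivity) (by positivity)]
      congr 1
      field_simp
    have hu2 : Real.log ((1 + ℓ₁) * t) + d = Real.log ((1 - ℓ₁) * t) + 2 * Real.pi / ω := by
      rw [hP, hddef, ← Real.log_mul (by positivity) (by positivity),
        ← Real.log_mul (by positivity) (by positivity)]
      congr 1
      rw [hα, hβ]
      field_simp
    have hshift : (∫ u in Real.log ((1 - ℓ₂) * t)..Real.log ((1 + ℓ₁) * t), ‖g (u + d)‖ ^ 2)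
        = ∫ v in Real.log ((1 + ℓ₂) * t)..(Real.log ((1 - ℓ₁) * t) + 2 * Real.pi / ω),
            ‖g v‖ ^ 2 := by
      rw [intervalIntegral.integral_comp_add_right (fun v => ‖g v‖ ^ 2) d, hu1, hu2]
    rw [hshift]
    have hint : ∀ b₁ b₂ : ℝ, IntervalIntegrable (fun s => ‖g s‖ ^ 2) volume b₁ b₂ :=
      fun b₁ b₂ => (by fun_prop : Continuous fun s => ‖g s‖ ^ 2).intervalIntegrable _ _
    rw [intervalIntegral.integral_add_adjacent_intervals (hint _ _) (hint _ _)]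
    have hpars := parseval a ha ω (Real.log ((1 - ℓ₁) * t)) hω
    rw [hgdef]
    rw [hpars, hP, ← hκlog]
  -- weight bounds
  have hbA := weighted_bounds (fun s => ‖g s‖ ^ 2) (by fun_prop) (fun s => by positivity)
    (Real.log ((1 - ℓ₁) * t)) (Real.log ((1 + ℓ₂) * t)) (((1 + L) * t)⁻¹) (((1 - L) * t)⁻¹)
    (Real.log_le_log (by positivity) (by nlinarith))
    (by
      intro s hs
      constructor
      · rw [← Real.exp_log (x := ((1 + L) * t)⁻¹) (by positivity), Real.exp_le_exp,
          Real.log_inv]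
        have : s ≤ Real.log ((1 + L) * t) :=
          le_trans hs.2 (Real.log_le_log (by positivity) (by nlinarith))
        linarith
      · rw [← Real.exp_log (x := ((1 - L) * t)⁻¹) (by positivity), Real.exp_le_exp,
          Real.log_inv]
        have : Real.log ((1 - L) * t) ≤ s :=
          le_trans (Real.log_le_log (by positivity) (by nlinarith)) hs.1
        linarith)
  have hbB := weighted_bounds (fun u => ‖g (u + d)‖ ^ 2) (by fun_prop) (fun u => by positivity)
    (Real.log ((1 - ℓ₂) * t)) (Real.log ((1 + ℓ₁) * t)) (((1 + L) * t)⁻¹) (((1 - L) * t)⁻¹)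
    (Real.log_le_log (by positivity) (by nlinarith))
    (by
      intro s hs
      constructor
      · rw [← Real.exp_log (x := ((1 + L) * t)⁻¹) (by positivity), Real.exp_le_exp,
          Real.log_inv]
        have : s ≤ Real.log ((1 + L) * t) :=
          le_trans hs.2 (Real.log_le_log (by positivity) (by nlinarith))
        linarith
      · rw [← Real.exp_log (x := ((1 - L) * t)⁻¹) (by positivity), Real.exp_le_exp,
          Real.log_inv]
        have : Real.log ((1 - L) * t) ≤ s :=
          le_trans (Real.log_le_log (by positivity) (by nlinarith)) hs.1
        linarith)
  -- final assembly
  have hSa : S = 2 * Real.pi ^ 2 * κ * ∑' n : ℤ, ‖a n‖ ^ 2 := hS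
  have hSignn : (0:ℝ) ≤ ∑' n : ℤ, ‖a n‖ ^ 2 := tsum_nonneg fun n => by positivity
  constructor
  · -- lower bound
    have h1 : ((1 + L) * t)⁻¹ * ((2 / κ) * ∑' n : ℤ, ‖a n‖ ^ 2)
        ≤ (∫ x in (-ℓ₁ * t)..(ℓ₂ * t), FA x) + ∫ x in (-ℓ₁ * t)..(ℓ₂ * t), FB x := by
      rw [hsubA, hsubB, ← hIAB, mul_add]
      exact add_le_add hbA.1 hbB.1
    have h2 : (Real.pi * κ) ^ 2 * (((1 + L) * t)⁻¹ * ((2 / κ) * ∑' n : ℤ, ‖a n‖ ^ 2))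
        ≤ E t := by
      rw [hE']
      exact mul_le_mul_of_nonneg_left h1 (by positivity)
    calc S / (t * (1 + L))
        = (Real.pi * κ) ^ 2 * (((1 + L) * t)⁻¹ * ((2 / κ) * ∑' n : ℤ, ‖a n‖ ^ 2)) := by
          rw [hSa]; field_simp
      _ ≤ E t := h2
  · -- upper bound
    have h1 : (∫ x in (-ℓ₁ * t)..(ℓ₂ * t), FA x) + (∫ x in (-ℓ₁ * t)..(ℓ₂ * t), FB x)
        ≤ ((1 - L) * t)⁻¹ * ((2 / κ) * ∑' n : ℤ, ‖a n‖ ^ 2) := by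
      rw [hsubA, hsubB, ← hIAB, mul_add]
      exact add_le_add hbA.2 hbB.2
    have h2 : E t ≤ (Real.pi * κ) ^ 2 * (((1 - L) * t)⁻¹ * ((2 / κ) * ∑' n : ℤ, ‖a n‖ ^ 2)) := by
      rw [hE']
      exact mul_le_mul_of_nonneg_left h1 (by positivity)
    calc E t ≤ (Real.pi * κ) ^ 2 * (((1 - L) * t)⁻¹ * ((2 / κ) * ∑' n : ℤ, ‖a n‖ ^ 2)) := h2
      _ = S / (t * (1 - L)) := by
          rw [hSa]; field_simp
end

section
/- For every t ≥ t₀, the energy satisfies ((1−L)/(1+L))·t₀·E(t₀)/t ≤ E(t) ≤ ((1+L)/(1−L))·t₀·E(t₀)/t, where L = max{ℓ₁,ℓ₂}. -/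
open MeasureTheory

private lemma aux_par (a b : ℂ) (r q : ℝ) (hr : (r : ℂ) = a + b) (hq : (q : ℂ) = a - b) :
    r ^ 2 + q ^ 2 = 2 * (‖a‖ ^ 2 + ‖b‖ ^ 2) := by
  have hr2 : r ^ 2 = ‖a + b‖ ^ 2 := by
    rw [← sq_abs r, ← Real.norm_eq_abs, ← Complex.norm_real, hr]
  have hq2 : q ^ 2 = ‖a - b‖ ^ 2 := by
    rw [← sq_abs q, ← Real.norm_eq_abs, ← Complex.norm_real, hq]
  have h := parallelogram_law_with_norm ℂ a b
  rw [hr2, hq2]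
  ring_nf
  ring_nf at h
  linarith

set_option maxHeartbeats 1000000 in
/-- comparison with the initial energy:
`((1−L)/(1+L))·t₀·E(t₀)/t ≤ E(t) ≤ ((1+L)/(1−L))·t₀·E(t₀)/t` for `t ≥ t₀`. -/
theorem energy_comparison_initial
    (ℓ₁ ℓ₂ L₀ t₀ α β κ : ℝ)
    (hℓ₁ : 0 ≤ ℓ₁) (hℓ₁' : ℓ₁ < 1) (hℓ₂ : 0 ≤ ℓ₂) (hℓ₂' : ℓ₂ < 1)
    (hℓ : 0 < ℓ₁ + ℓ₂) (hL₀ : 0 < L₀) (ht₀ : t₀ = L₀ / (ℓ₁ + ℓ₂))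
    (hα : α = (1 + ℓ₁) / (1 - ℓ₂)) (hβ : β = (1 + ℓ₂) / (1 - ℓ₁))
    (hκ : κ = 2 / Real.log (α * β))
    (L : ℝ) (hL : L = max ℓ₁ ℓ₂)
    (c : ℤ → ℂ) (hc0 : c 0 = 0)
    (hcsum : Summable fun n : ℤ => ‖(n : ℂ) * c n‖)
    (hconj : ∀ n : ℤ, c (-n) = (starRingEnd ℂ) (c n))
    (C : ℤ → ℂ)
    (hC : ∀ n : ℤ, C n = c n *
      Complex.exp (Complex.I * n * Real.pi * κ * Real.log ((1 + ℓ₂) / (1 - ℓ₂))))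
    (Φx : ℝ → ℝ → ℝ)
    (hΦx : ∀ t : ℝ, t₀ ≤ t → ∀ x : ℝ, -ℓ₁ * t ≤ x → x ≤ ℓ₂ * t →
      (Φx x t : ℂ) = Complex.I * Real.pi * κ * ∑' n : ℤ, (n : ℂ) *
        (c n * Complex.exp (Complex.I * n * Real.pi * κ * Real.log (t + x)) /
            ((t + x : ℝ) : ℂ) +
         C n * Complex.exp (Complex.I * n * Real.pi * κ * Real.log (t - x)) /
            ((t - x : ℝ) : ℂ)))
    (Φt : ℝ → ℝ → ℝ)
    (hΦt : ∀ t : ℝ, t₀ ≤ t → ∀ x : ℝ, -ℓ₁ * t ≤ x → x ≤ ℓ₂ * t →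
      (Φt x t : ℂ) = Complex.I * Real.pi * κ * ∑' n : ℤ, (n : ℂ) *
        (c n * Complex.exp (Complex.I * n * Real.pi * κ * Real.log (t + x)) /
            ((t + x : ℝ) : ℂ) -
         C n * Complex.exp (Complex.I * n * Real.pi * κ * Real.log (t - x)) /
            ((t - x : ℝ) : ℂ)))
    (E : ℝ → ℝ)
    (hE : ∀ t : ℝ, E t = (1 / 2) * ∫ x in Set.Ioo (-ℓ₁ * t) (ℓ₂ * t),
      ((Φx x t) ^ 2 + (Φt x t) ^ 2))
    :
    ∀ t : ℝ, t₀ ≤ t →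
      (1 - L) / (1 + L) * (t₀ * E t₀) / t ≤ E t ∧
      E t ≤ (1 + L) / (1 - L) * (t₀ * E t₀) / t := by
  -- basic positivity
  have h1ℓ₁ : (0:ℝ) < 1 - ℓ₁ := by linarith
  have h1ℓ₂ : (0:ℝ) < 1 - ℓ₂ := by linarith
  have h1ℓ₁' : (0:ℝ) < 1 + ℓ₁ := by linarith
  have h1ℓ₂' : (0:ℝ) < 1 + ℓ₂ := by linarith
  have hne₁ : (1 - ℓ₁) ≠ 0 := h1ℓ₁.ne'
  have hne₂ : (1 - ℓ₂) ≠ 0 := h1ℓ₂.ne'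
  have hne₃ : (1 + ℓ₁) ≠ 0 := h1ℓ₁'.ne'
  have hne₄ : (1 + ℓ₂) ≠ 0 := h1ℓ₂'.ne'
  have ht₀pos : 0 < t₀ := ht₀ ▸ div_pos hL₀ hℓ
  have hL0 : 0 ≤ L := by rw [hL]; exact le_trans hℓ₁ (le_max_left _ _)
  have hL1 : L < 1 := by rw [hL]; exact max_lt hℓ₁' hℓ₂'
  have hLℓ₁ : ℓ₁ ≤ L := hL ▸ le_max_left _ _
  have hLℓ₂ : ℓ₂ ≤ L := hL ▸ le_max_right _ _
  have h1L : (0:ℝ) < 1 - L := by linarith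
  have h1L' : (0:ℝ) < 1 + L := by linarith
  have hαβ : 1 < α * β := by
    rw [hα, hβ, div_mul_div_comm, lt_div_iff₀ (mul_pos h1ℓ₂ h1ℓ₁)]
    have hd : (1 + ℓ₁) * (1 + ℓ₂) - (1 - ℓ₂) * (1 - ℓ₁) = 2 * (ℓ₁ + ℓ₂) := by ring
    linarith
  obtain ⟨T, hT'⟩ : ∃ x : ℝ, x = Real.log (α * β) := ⟨_, rfl⟩
  rw [← hT'] at hκ
  have hTpos : 0 < T := hT' ▸ Real.log_pos hαβ
  have hκpos : 0 < κ := by rw [hκ]; exact div_pos two_pos hTpos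
  have hκT : κ * T = 2 := by rw [hκ]; field_simp
  obtain ⟨δ, hδ'⟩ : ∃ x : ℝ, x = Real.log ((1 + ℓ₂) / (1 - ℓ₂)) := ⟨_, rfl⟩
  rw [← hδ'] at hC
  have hexpδ : Real.exp δ = (1 + ℓ₂) / (1 - ℓ₂) := by
    rw [hδ']; exact Real.exp_log (div_pos h1ℓ₂' h1ℓ₂)
  have hexpT : Real.exp T = α * β := by
    rw [hT']; exact Real.exp_log (by linarith)
  -- the building blocks
  obtain ⟨F, hF'⟩ : ∃ F : ℤ → ℝ → ℂ, F =
      fun (n : ℤ) (s : ℝ) =>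
        (n : ℂ) * (c n * Complex.exp (Complex.I * n * Real.pi * κ * s)) := ⟨_, rfl⟩
  have hFnorm : ∀ (n : ℤ) (s : ℝ), ‖F n s‖ = ‖(n : ℂ) * c n‖ := by
    intro n s
    have h1 : Complex.I * (n : ℂ) * (Real.pi : ℂ) * (κ : ℂ) * (s : ℂ)
        = (((n : ℝ) * Real.pi * κ * s : ℝ) : ℂ) * Complex.I := by push_cast; ring
    simp only [hF']
    rw [h1, norm_mul, norm_mul,
      Complex.norm_exp_ofReal_mul_I, mul_one, ← norm_mul]
  have hFsum : ∀ s : ℝ, Summable fun n : ℤ => F n s := by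
    intro s
    apply Summable.of_norm
    simp only [hFnorm]
    exact hcsum
  have hFcont : ∀ n : ℤ, Continuous fun s : ℝ => F n s := by
    intro n
    simp only [hF']
    fun_prop
  obtain ⟨f, hf'⟩ : ∃ f : ℝ → ℂ, f = fun s => ∑' n : ℤ, F n s := ⟨_, rfl⟩
  have hfcont : Continuous f := by
    rw [hf']
    exact continuous_tsum hFcont hcsum (fun n s => (hFnorm n s).le)
  obtain ⟨g, hg'⟩ : ∃ g : ℝ → ℝ, g = fun s => ‖f s‖ ^ 2 := ⟨_, rfl⟩
  have hgcont : Continuous g := by rw [hg']; exact (hfcont.norm).pow 2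
  have hgnn : ∀ s, 0 ≤ g s := by
    intro s; rw [hg']; exact pow_nonneg (norm_nonneg _) _
  -- periodicity
  have hFper : ∀ (n : ℤ) (s : ℝ), F n (s + T) = F n s := by
    intro n s
    have hκTc : ((κ : ℝ) : ℂ) * ((T : ℝ) : ℂ) = 2 := by
      rw [← Complex.ofReal_mul, hκT]; norm_num
    have h2 : Complex.I * (n : ℂ) * (Real.pi : ℂ) * (κ : ℂ) * ((s + T : ℝ) : ℂ)
        = Complex.I * (n : ℂ) * (Real.pi : ℂ) * (κ : ℂ) * (s : ℂ)
          + (n : ℂ) * (2 * (Real.pi : ℂ) * Complex.I) := by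
      have h3 : (n : ℂ) * (2 * (Real.pi : ℂ) * Complex.I)
          = (n : ℂ) * (Real.pi : ℂ) * (((κ : ℝ) : ℂ) * ((T : ℝ) : ℂ)) * Complex.I := by
        rw [hκTc]; ring
      rw [h3]; push_cast; ring
    simp only [hF']
    rw [h2, Complex.exp_add, Complex.exp_int_mul_two_pi_mul_I, mul_one]
  have hfper : ∀ s, f (s + T) = f s := by
    intro s
    rw [hf']
    exact tsum_congr fun n => hFper n s
  have hgper : Function.Periodic g T := by
    intro s
    rw [hg']
    simp only [hfper s]
  -- relation between C-terms and F
  have hCF : ∀ (n : ℤ) (s : ℝ),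
      (n : ℂ) * (C n * Complex.exp (Complex.I * n * Real.pi * κ * s)) = F n (s + δ) := by
    intro n s
    rw [hC n, mul_assoc (c n), ← Complex.exp_add]
    simp only [hF']
    congr 2
    push_cast
    ring
  -- pointwise identity for the energy density
  have hpoint : ∀ t' : ℝ, t₀ ≤ t' → ∀ x : ℝ, -ℓ₁ * t' ≤ x → x ≤ ℓ₂ * t' →
      Φx x t' ^ 2 + Φt x t' ^ 2 =
        2 * (Real.pi * κ) ^ 2 *
          (g (Real.log (t' + x)) / (t' + x) ^ 2 + g (Real.log (t' - x) + δ) / (t' - x) ^ 2) := by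
    intro t' ht' x hx1 hx2
    have htpos : 0 < t' := lt_of_lt_of_le ht₀pos ht'
    have hpx : 0 < t' + x := by
      have := mul_pos h1ℓ₁ htpos
      have h2 : (1 - ℓ₁) * t' = t' - ℓ₁ * t' := by ring
      linarith
    have hmx : 0 < t' - x := by
      have := mul_pos h1ℓ₂ htpos
      have h2 : (1 - ℓ₂) * t' = t' - ℓ₂ * t' := by ring
      linarith
    obtain ⟨A, hA'⟩ : ∃ A : ℂ, A = f (Real.log (t' + x)) / ((t' + x : ℝ) : ℂ) := ⟨_, rfl⟩
    obtain ⟨B, hB'⟩ : ∃ B : ℂ, B = f (Real.log (t' - x) + δ) / ((t' - x : ℝ) : ℂ) := ⟨_, rfl⟩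
    have hsum1 : Summable fun n : ℤ => F n (Real.log (t' + x)) / ((t' + x : ℝ) : ℂ) :=
      (hFsum _).div_const _
    have hsum2 : Summable fun n : ℤ => F n (Real.log (t' - x) + δ) / ((t' - x : ℝ) : ℂ) :=
      (hFsum _).div_const _
    have hterm1 : ∀ n : ℤ,
        (n : ℂ) * (c n * Complex.exp (Complex.I * n * Real.pi * κ * Real.log (t' + x)) /
          ((t' + x : ℝ) : ℂ)) = F n (Real.log (t' + x)) / ((t' + x : ℝ) : ℂ) := by
      intro n; rw [← mul_div_assoc]; simp only [hF']
    have hterm2 : ∀ n : ℤ,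
        (n : ℂ) * (C n * Complex.exp (Complex.I * n * Real.pi * κ * Real.log (t' - x)) /
          ((t' - x : ℝ) : ℂ)) = F n (Real.log (t' - x) + δ) / ((t' - x : ℝ) : ℂ) := by
      intro n; rw [← mul_div_assoc, hCF n]
    have hAx : (Φx x t' : ℂ) = Complex.I * Real.pi * κ * (A + B) := by
      rw [hΦx t' ht' x hx1 hx2]
      congr 1
      calc ∑' n : ℤ, (n : ℂ) *
            (c n * Complex.exp (Complex.I * n * Real.pi * κ * Real.log (t' + x)) /
              ((t' + x : ℝ) : ℂ) +
             C n * Complex.exp (Complex.I * n * Real.pi * κ * Real.log (t' - x)) /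
              ((t' - x : ℝ) : ℂ))
          = ∑' n : ℤ, (F n (Real.log (t' + x)) / ((t' + x : ℝ) : ℂ) +
              F n (Real.log (t' - x) + δ) / ((t' - x : ℝ) : ℂ)) := by
            refine tsum_congr fun n => ?_
            rw [mul_add, hterm1 n, hterm2 n]
        _ = A + B := by
            rw [Summable.tsum_add hsum1 hsum2, tsum_div_const, tsum_div_const, hA', hB', hf']
    have hAt : (Φt x t' : ℂ) = Complex.I * Real.pi * κ * (A - B) := by
      rw [hΦt t' ht' x hx1 hx2]
      congr 1
      calc ∑' n : ℤ, (n : ℂ) *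
            (c n * Complex.exp (Complex.I * n * Real.pi * κ * Real.log (t' + x)) /
              ((t' + x : ℝ) : ℂ) -
             C n * Complex.exp (Complex.I * n * Real.pi * κ * Real.log (t' - x)) /
              ((t' - x : ℝ) : ℂ))
          = ∑' n : ℤ, (F n (Real.log (t' + x)) / ((t' + x : ℝ) : ℂ) -
              F n (Real.log (t' - x) + δ) / ((t' - x : ℝ) : ℂ)) := by
            refine tsum_congr fun n => ?_
            rw [mul_sub, hterm1 n, hterm2 n]
        _ = A - B := by
            rw [Summable.tsum_sub hsum1 hsum2, tsum_div_const, tsum_div_const, hA', hB', hf']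
    have hnA : ‖Complex.I * (Real.pi : ℂ) * (κ : ℂ) * A‖ ^ 2
        = (Real.pi * κ) ^ 2 * (g (Real.log (t' + x)) / (t' + x) ^ 2) := by
      rw [hA', norm_mul, norm_mul, norm_mul, norm_div,
        Complex.norm_I, Complex.norm_real, Complex.norm_real, Complex.norm_real,
        Real.norm_eq_abs, Real.norm_eq_abs, Real.norm_eq_abs,
        abs_of_pos Real.pi_pos, abs_of_pos hκpos, abs_of_pos hpx, hg']
      rw [mul_pow, div_pow, one_mul]
    have hnB : ‖Complex.I * (Real.pi : ℂ) * (κ : ℂ) * B‖ ^ 2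
        = (Real.pi * κ) ^ 2 * (g (Real.log (t' - x) + δ) / (t' - x) ^ 2) := by
      rw [hB', norm_mul, norm_mul, norm_mul, norm_div,
        Complex.norm_I, Complex.norm_real, Complex.norm_real, Complex.norm_real,
        Real.norm_eq_abs, Real.norm_eq_abs, Real.norm_eq_abs,
        abs_of_pos Real.pi_pos, abs_of_pos hκpos, abs_of_pos hmx, hg']
      rw [mul_pow, div_pow, one_mul]
    have hpar := aux_par (Complex.I * (Real.pi : ℂ) * (κ : ℂ) * A)
      (Complex.I * (Real.pi : ℂ) * (κ : ℂ) * B) (Φx x t') (Φt x t')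
      (by rw [hAx]; ring) (by rw [hAt]; ring)
    rw [hpar, hnA, hnB]
    ring
  -- the period integral
  obtain ⟨Q, hQ'⟩ : ∃ x : ℝ, x = ∫ s in (0:ℝ)..T, g s := ⟨_, rfl⟩
  have hQnn : 0 ≤ Q := by
    rw [hQ']
    exact intervalIntegral.integral_nonneg hTpos.le fun s _ => hgnn s
  obtain ⟨P, hP'⟩ : ∃ x : ℝ, x = (Real.pi * κ) ^ 2 * Q := ⟨_, rfl⟩
  have hPnn : 0 ≤ P := by
    rw [hP']
    exact mul_nonneg (by positivity) hQnn
  -- the key two-sided bound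
  have key : ∀ t' : ℝ, t₀ ≤ t' →
      P / ((1 + L) * t') ≤ E t' ∧ E t' ≤ P / ((1 - L) * t') := by
    intro t' ht'
    have htpos : 0 < t' := lt_of_lt_of_le ht₀pos ht'
    have hnet : t' ≠ 0 := htpos.ne'
    have hab : -ℓ₁ * t' ≤ ℓ₂ * t' := by
      have h1 := mul_nonneg hℓ₁ htpos.le
      have h2 := mul_nonneg hℓ₂ htpos.le
      linarith
    obtain ⟨p, hp'⟩ : ∃ x : ℝ, x = Real.log ((1 - ℓ₁) * t') := ⟨_, rfl⟩
    obtain ⟨m, hm'⟩ : ∃ x : ℝ, x = Real.log ((1 + ℓ₂) * t') := ⟨_, rfl⟩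
    have hexpp : Real.exp p = (1 - ℓ₁) * t' := by
      rw [hp']; exact Real.exp_log (mul_pos h1ℓ₁ htpos)
    have hexpm : Real.exp m = (1 + ℓ₂) * t' := by
      rw [hm']; exact Real.exp_log (mul_pos h1ℓ₂' htpos)
    have hexpr : Real.exp (p + T) = (1 + ℓ₁) * ((1 + ℓ₂) / (1 - ℓ₂)) * t' := by
      rw [Real.exp_add, hexpp, hexpT, hα, hβ]
      field_simp
    have hpm : p ≤ m := by
      rw [hp', hm']
      exact Real.log_le_log (mul_pos h1ℓ₁ htpos)
        (mul_le_mul_of_nonneg_right (by linarith) htpos.le)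
    have hmr : m ≤ p + T := by
      have h := Real.exp_le_exp (x := m) (y := p + T)
      rw [hexpm, hexpr] at h
      apply h.mp
      apply mul_le_mul_of_nonneg_right _ htpos.le
      rw [← mul_div_assoc, le_div_iff₀ h1ℓ₂]
      have hd : (1 + ℓ₁) * (1 + ℓ₂) - (1 + ℓ₂) * (1 - ℓ₂) = (1 + ℓ₂) * (ℓ₁ + ℓ₂) := by ring
      have := mul_nonneg h1ℓ₂'.le (le_of_lt hℓ)
      linarith
    -- continuity of the two substituted integrands
    have hcont₁ : ContinuousOn (fun x : ℝ => g (Real.log (t' + x)) / (t' + x) ^ 2)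
        {x : ℝ | 0 < t' + x} := by
      apply ContinuousOn.div
      · exact hgcont.comp_continuousOn
          (ContinuousOn.log (by fun_prop) (fun x hx => ne_of_gt hx))
      · fun_prop
      · intro x hx; exact pow_ne_zero _ (ne_of_gt hx)
    have hcont₂ : ContinuousOn (fun x : ℝ => g (Real.log (t' - x) + δ) / (t' - x) ^ 2)
        {x : ℝ | 0 < t' - x} := by
      apply ContinuousOn.div
      · apply Continuous.comp_continuousOn hgcont
        apply ContinuousOn.add
        · exact ContinuousOn.log (by fun_prop) (fun x hx => ne_of_gt hx)
        · exact continuousOn_const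
      · fun_prop
      · intro x hx; exact pow_ne_zero _ (ne_of_gt hx)
    -- substitution 1
    have hsub1 : (∫ x in (-ℓ₁ * t')..(ℓ₂ * t'), g (Real.log (t' + x)) / (t' + x) ^ 2)
        = ∫ s in p..m, g s * Real.exp (-s) := by
      have hder : ∀ s ∈ Set.uIcc p m, HasDerivAt (fun s => Real.exp s - t') (Real.exp s) s :=
        fun s _ => (Real.hasDerivAt_exp s).sub_const t'
      have himg : (fun s => Real.exp s - t') '' Set.uIcc p m ⊆ {x : ℝ | 0 < t' + x} := by
        rintro y ⟨s, _, rfl⟩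
        have := Real.exp_pos s
        simp only [Set.mem_setOf_eq]
        linarith
      have h := intervalIntegral.integral_comp_smul_deriv' hder
        Real.continuous_exp.continuousOn (hcont₁.mono himg)
      rw [hexpp, hexpm] at h
      rw [show (1 - ℓ₁) * t' - t' = -ℓ₁ * t' by ring,
        show (1 + ℓ₂) * t' - t' = ℓ₂ * t' by ring] at h
      rw [← h]
      apply intervalIntegral.integral_congr
      intro s _
      simp only [Function.comp_apply, smul_eq_mul]
      rw [show t' + (Real.exp s - t') = Real.exp s by ring, Real.log_exp, Real.exp_neg]
      have hes := Real.exp_ne_zero s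
      field_simp
    -- substitution 2
    have hsub2 : (∫ x in (-ℓ₁ * t')..(ℓ₂ * t'), g (Real.log (t' - x) + δ) / (t' - x) ^ 2)
        = ∫ s in m..(p + T), g s * Real.exp (δ - s) := by
      have hder : ∀ s ∈ Set.uIcc m (p + T),
          HasDerivAt (fun s => t' - Real.exp (s - δ)) (-Real.exp (s - δ)) s := by
        intro s _
        have h1 : HasDerivAt (fun s : ℝ => Real.exp (s - δ)) (Real.exp (s - δ)) s := by
          exact HasDerivAt.comp_sub_const s δ (Real.hasDerivAt_exp (s - δ))
        exact h1.const_sub t'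
      have himg : (fun s => t' - Real.exp (s - δ)) '' Set.uIcc m (p + T)
          ⊆ {x : ℝ | 0 < t' - x} := by
        rintro y ⟨s, _, rfl⟩
        have := Real.exp_pos (s - δ)
        simp only [Set.mem_setOf_eq]
        linarith
      have hd'cont : ContinuousOn (fun s : ℝ => -Real.exp (s - δ)) (Set.uIcc m (p + T)) := by
        fun_prop
      have h := intervalIntegral.integral_comp_smul_deriv' hder hd'cont (hcont₂.mono himg)
      have he1 : t' - Real.exp (m - δ) = ℓ₂ * t' := by
        rw [Real.exp_sub, hexpm, hexpδ]
        field_simp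
        ring
      have he2 : t' - Real.exp (p + T - δ) = -ℓ₁ * t' := by
        rw [Real.exp_sub, hexpr, hexpδ]
        field_simp
        ring
      rw [he1, he2] at h
      rw [intervalIntegral.integral_symm (ℓ₂ * t') (-ℓ₁ * t'), ← h,
        ← intervalIntegral.integral_neg]
      apply intervalIntegral.integral_congr
      intro s _
      simp only [Function.comp_apply, smul_eq_mul, neg_mul, neg_neg]
      rw [show t' - (t' - Real.exp (s - δ)) = Real.exp (s - δ) by ring, Real.log_exp,
        show s - δ + δ = s by ring, show δ - s = -(s - δ) by ring, Real.exp_neg]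
      have hes := Real.exp_ne_zero (s - δ)
      field_simp
    -- integrability of the two pieces on the x-interval
    have hsubset₁ : Set.uIcc (-ℓ₁ * t') (ℓ₂ * t') ⊆ {x : ℝ | 0 < t' + x} := by
      intro x hx
      rw [Set.uIcc_of_le hab] at hx
      have h1 := hx.1
      have h2 := mul_pos h1ℓ₁ htpos
      have h3 : (1 - ℓ₁) * t' = t' - ℓ₁ * t' := by ring
      simp only [Set.mem_setOf_eq]
      linarith
    have hsubset₂ : Set.uIcc (-ℓ₁ * t') (ℓ₂ * t') ⊆ {x : ℝ | 0 < t' - x} := by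
      intro x hx
      rw [Set.uIcc_of_le hab] at hx
      have h1 := hx.2
      have h2 := mul_pos h1ℓ₂ htpos
      have h3 : (1 - ℓ₂) * t' = t' - ℓ₂ * t' := by ring
      simp only [Set.mem_setOf_eq]
      linarith
    have hInt₁ : IntervalIntegrable (fun x : ℝ => g (Real.log (t' + x)) / (t' + x) ^ 2)
        volume (-ℓ₁ * t') (ℓ₂ * t') := (hcont₁.mono hsubset₁).intervalIntegrable
    have hInt₂ : IntervalIntegrable (fun x : ℝ => g (Real.log (t' - x) + δ) / (t' - x) ^ 2)
        volume (-ℓ₁ * t') (ℓ₂ * t') := (hcont₂.mono hsubset₂).intervalIntegrable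
    -- energy in substituted form
    have hE' : E t' = (Real.pi * κ) ^ 2 *
        ((∫ s in p..m, g s * Real.exp (-s)) + ∫ s in m..(p + T), g s * Real.exp (δ - s)) := by
      rw [hE t']
      have hEq : Set.EqOn (fun x => Φx x t' ^ 2 + Φt x t' ^ 2)
          (fun x => 2 * (Real.pi * κ) ^ 2 *
            (g (Real.log (t' + x)) / (t' + x) ^ 2 + g (Real.log (t' - x) + δ) / (t' - x) ^ 2))
          (Set.Ioo (-ℓ₁ * t') (ℓ₂ * t')) := by
        intro x hx
        exact hpoint t' ht' x hx.1.le hx.2.le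
      rw [MeasureTheory.setIntegral_congr_fun measurableSet_Ioo hEq]
      rw [← MeasureTheory.integral_Ioc_eq_integral_Ioo, ← intervalIntegral.integral_of_le hab]
      rw [intervalIntegral.integral_const_mul]
      rw [intervalIntegral.integral_add hInt₁ hInt₂]
      rw [hsub1, hsub2]
      ring
    -- pointwise weight bounds
    have hwt₁low : ∀ s ∈ Set.Icc p m, g s * ((1 + L) * t')⁻¹ ≤ g s * Real.exp (-s) := by
      intro s hs
      apply mul_le_mul_of_nonneg_left _ (hgnn s)
      rw [Real.exp_neg]
      apply inv_anti₀ (Real.exp_pos s)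
      calc Real.exp s ≤ Real.exp m := Real.exp_le_exp.mpr hs.2
        _ = (1 + ℓ₂) * t' := hexpm
        _ ≤ (1 + L) * t' := mul_le_mul_of_nonneg_right (by linarith) htpos.le
    have hwt₁high : ∀ s ∈ Set.Icc p m, g s * Real.exp (-s) ≤ g s * ((1 - L) * t')⁻¹ := by
      intro s hs
      apply mul_le_mul_of_nonneg_left _ (hgnn s)
      rw [Real.exp_neg]
      apply inv_anti₀ (mul_pos h1L htpos)
      calc (1 - L) * t' ≤ (1 - ℓ₁) * t' :=
            mul_le_mul_of_nonneg_right (by linarith) htpos.le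
        _ = Real.exp p := hexpp.symm
        _ ≤ Real.exp s := Real.exp_le_exp.mpr hs.1
    have hwt₂low : ∀ s ∈ Set.Icc m (p + T),
        g s * ((1 + L) * t')⁻¹ ≤ g s * Real.exp (δ - s) := by
      intro s hs
      apply mul_le_mul_of_nonneg_left _ (hgnn s)
      rw [show δ - s = -(s - δ) by ring, Real.exp_neg]
      apply inv_anti₀ (Real.exp_pos _)
      calc Real.exp (s - δ) ≤ Real.exp (p + T - δ) := by
            apply Real.exp_le_exp.mpr; linarith [hs.2]
        _ = (1 + ℓ₁) * t' := by
            rw [Real.exp_sub, hexpr, hexpδ]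
            field_simp
        _ ≤ (1 + L) * t' := mul_le_mul_of_nonneg_right (by linarith) htpos.le
    have hwt₂high : ∀ s ∈ Set.Icc m (p + T),
        g s * Real.exp (δ - s) ≤ g s * ((1 - L) * t')⁻¹ := by
      intro s hs
      apply mul_le_mul_of_nonneg_left _ (hgnn s)
      rw [show δ - s = -(s - δ) by ring, Real.exp_neg]
      apply inv_anti₀ (mul_pos h1L htpos)
      calc (1 - L) * t' ≤ (1 - ℓ₂) * t' :=
            mul_le_mul_of_nonneg_right (by linarith) htpos.le
        _ = Real.exp (m - δ) := by
            rw [Real.exp_sub, hexpm, hexpδ]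
            field_simp
        _ ≤ Real.exp (s - δ) := by
            apply Real.exp_le_exp.mpr; linarith [hs.1]
    -- integrability of all s-integrands
    have hi1 : IntervalIntegrable (fun s => g s * Real.exp (-s)) volume p m :=
      (hgcont.mul (Real.continuous_exp.comp continuous_neg)).intervalIntegrable _ _
    have hi2 : IntervalIntegrable (fun s => g s * Real.exp (δ - s)) volume m (p + T) :=
      (hgcont.mul (Real.continuous_exp.comp
        (continuous_const.sub continuous_id))).intervalIntegrable _ _
    have hic₁ : ∀ (d : ℝ) (a b : ℝ), IntervalIntegrable (fun s => g s * d) volume a b :=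
      fun d a b => (hgcont.mul continuous_const).intervalIntegrable _ _
    have higab : ∀ a b : ℝ, IntervalIntegrable g volume a b :=
      fun a b => hgcont.intervalIntegrable _ _
    -- the split of the period integral
    have hQsplit : (∫ s in p..m, g s) + ∫ s in m..(p + T), g s = Q := by
      rw [intervalIntegral.integral_add_adjacent_intervals (higab p m) (higab m (p + T))]
      calc ∫ s in p..(p + T), g s = ∫ s in (0:ℝ)..(0 + T), g s :=
            hgper.intervalIntegral_add_eq p 0
        _ = Q := by rw [zero_add, hQ']
    constructor
    · -- lower bound
      rw [hE']
      have hb1 : (∫ s in p..m, g s) * ((1 + L) * t')⁻¹ ≤ ∫ s in p..m, g s * Real.exp (-s) := by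
        rw [← intervalIntegral.integral_mul_const]
        exact intervalIntegral.integral_mono_on hpm (hic₁ _ p m) hi1 hwt₁low
      have hb2 : (∫ s in m..(p + T), g s) * ((1 + L) * t')⁻¹
          ≤ ∫ s in m..(p + T), g s * Real.exp (δ - s) := by
        rw [← intervalIntegral.integral_mul_const]
        exact intervalIntegral.integral_mono_on hmr (hic₁ _ m (p + T)) hi2 hwt₂low
      have hsum : Q * ((1 + L) * t')⁻¹
          ≤ (∫ s in p..m, g s * Real.exp (-s)) + ∫ s in m..(p + T), g s * Real.exp (δ - s) := by
        rw [← hQsplit, add_mul]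
        exact add_le_add hb1 hb2
      calc P / ((1 + L) * t') = (Real.pi * κ) ^ 2 * (Q * ((1 + L) * t')⁻¹) := by
            rw [hP', div_eq_mul_inv]; ring
        _ ≤ _ := mul_le_mul_of_nonneg_left hsum (by positivity)
    · -- upper bound
      rw [hE']
      have hb1 : (∫ s in p..m, g s * Real.exp (-s))
          ≤ (∫ s in p..m, g s) * ((1 - L) * t')⁻¹ := by
        rw [← intervalIntegral.integral_mul_const]
        exact intervalIntegral.integral_mono_on hpm hi1 (hic₁ _ p m) hwt₁high
      have hb2 : (∫ s in m..(p + T), g s * Real.exp (δ - s))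
          ≤ (∫ s in m..(p + T), g s) * ((1 - L) * t')⁻¹ := by
        rw [← intervalIntegral.integral_mul_const]
        exact intervalIntegral.integral_mono_on hmr hi2 (hic₁ _ m (p + T)) hwt₂high
      have hsum : (∫ s in p..m, g s * Real.exp (-s)) + (∫ s in m..(p + T), g s * Real.exp (δ - s))
          ≤ Q * ((1 - L) * t')⁻¹ := by
        rw [← hQsplit, add_mul]
        exact add_le_add hb1 hb2
      calc (Real.pi * κ) ^ 2 *
            ((∫ s in p..m, g s * Real.exp (-s)) + ∫ s in m..(p + T), g s * Real.exp (δ - s))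
          ≤ (Real.pi * κ) ^ 2 * (Q * ((1 - L) * t')⁻¹) :=
            mul_le_mul_of_nonneg_left hsum (by positivity)
        _ = P / ((1 - L) * t') := by rw [hP', div_eq_mul_inv]; ring
  -- conclude
  intro t ht
  have htpos : 0 < t := lt_of_lt_of_le ht₀pos ht
  obtain ⟨hk1, hk2⟩ := key t ht
  obtain ⟨hk01, hk02⟩ := key t₀ le_rfl
  have hneL : (1 - L) ≠ 0 := h1L.ne'
  have hneL' : (1 + L) ≠ 0 := h1L'.ne'
  have hnet : t ≠ 0 := htpos.ne'
  have hnet₀ : t₀ ≠ 0 := ht₀pos.ne'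
  have hup : t₀ * E t₀ ≤ P / (1 - L) := by
    calc t₀ * E t₀ ≤ t₀ * (P / ((1 - L) * t₀)) :=
          mul_le_mul_of_nonneg_left hk02 ht₀pos.le
      _ = P / (1 - L) := by field_simp
  have hdown : P / (1 + L) ≤ t₀ * E t₀ := by
    calc P / (1 + L) = t₀ * (P / ((1 + L) * t₀)) := by field_simp
      _ ≤ t₀ * E t₀ := mul_le_mul_of_nonneg_left hk01 ht₀pos.le
  constructor
  · calc (1 - L) / (1 + L) * (t₀ * E t₀) / t
        ≤ (1 - L) / (1 + L) * (P / (1 - L)) / t :=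
          (div_le_div_iff_of_pos_right htpos).mpr
            (mul_le_mul_of_nonneg_left hup (by positivity))
      _ = P / ((1 + L) * t) := by field_simp
      _ ≤ E t := hk1
  · calc E t ≤ P / ((1 - L) * t) := hk2
      _ = (1 + L) / (1 - L) * (P / (1 + L)) / t := by field_simp
      _ ≤ (1 + L) / (1 - L) * (t₀ * E t₀) / t :=
          (div_le_div_iff_of_pos_right htpos).mpr
            (mul_le_mul_of_nonneg_left hdown (by positivity))
end

section
/- For every positive integer M, the boundary trace at the right endpoint satisfies the exact identity ∫_{t₀}^{(αβ)^M·t₀} t·φₓ(ℓ₂t, t)² dt = 4M·S/(1−ℓ₂²)², where S = 2π²κ·Σ_{n≠0} |n c_n|². -/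
open MeasureTheory
open Complex
set_option maxHeartbeats 1000000

lemma norm_exp_I_int (n : ℤ) (x y : ℝ) :
    ‖Complex.exp (Complex.I * (n:ℂ) * (x:ℂ) * (y:ℂ))‖ = 1 := by
  have h : (Complex.I * (n:ℂ) * (x:ℂ) * (y:ℂ)) = (((n:ℝ)*x*y : ℝ) : ℂ) * Complex.I := by
    push_cast; ring
  rw [h, Complex.norm_exp_ofReal_mul_I]

lemma integral_cexp_log (k : ℂ) (hk : k ≠ 0) {a b : ℝ} (ha : 0 < a) (hab : a ≤ b) :
    ∫ t in Set.Ioo a b, Complex.exp (k * (Real.log t : ℂ)) / (t:ℂ) =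
      (Complex.exp (k * (Real.log b : ℂ)) - Complex.exp (k * (Real.log a : ℂ))) / k := by
  have hderiv : ∀ t ∈ Set.uIcc a b,
      HasDerivAt (fun t : ℝ => Complex.exp (k * (Real.log t : ℂ)) / k)
        (Complex.exp (k * (Real.log t : ℂ)) / (t:ℂ)) t := by
    intro t ht
    rw [Set.uIcc_of_le hab] at ht
    have ht0 : (0:ℝ) < t := lt_of_lt_of_le ha ht.1
    have h2 : HasDerivAt (fun t : ℝ => ((Real.log t : ℝ) : ℂ)) (((t⁻¹ : ℝ) : ℂ)) t :=
      (Real.hasDerivAt_log ht0.ne').ofReal_comp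
    have h3 := ((h2.const_mul k).cexp).div_const k
    convert h3 using 1
    · rfl
    have : (t:ℂ) ≠ 0 := by exact_mod_cast ht0.ne'
    push_cast
    field_simp
  have hcont : ContinuousOn (fun t : ℝ => Complex.exp (k * (Real.log t : ℂ)) / (t:ℂ))
      (Set.uIcc a b) := by
    rw [Set.uIcc_of_le hab]
    have hsub : Set.Icc a b ⊆ {x : ℝ | x ≠ 0} := fun x hx => (lt_of_lt_of_le ha hx.1).ne'
    have hlog : ContinuousOn (fun t : ℝ => ((Real.log t : ℝ) : ℂ)) (Set.Icc a b) :=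
      Complex.continuous_ofReal.comp_continuousOn (Real.continuousOn_log.mono hsub)
    exact ((hlog.const_smul k).cexp).div
      (Complex.continuous_ofReal.continuousOn)
      (fun x hx => by exact_mod_cast (lt_of_lt_of_le ha hx.1).ne')
  rw [← MeasureTheory.integral_Ioc_eq_integral_Ioo, ← intervalIntegral.integral_of_le hab,
    intervalIntegral.integral_eq_sub_of_hasDerivAt hderiv
      hcont.intervalIntegrable]
  ring

lemma integral_const_div_log (cc : ℂ) {a b : ℝ} (ha : 0 < a) (hab : a ≤ b) :
    ∫ t in Set.Ioo a b, cc / (t:ℂ) = cc * ((Real.log b - Real.log a : ℝ) : ℂ) := by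
  have hderiv : ∀ t ∈ Set.uIcc a b,
      HasDerivAt (fun t : ℝ => cc * ((Real.log t : ℝ) : ℂ)) (cc / (t:ℂ)) t := by
    intro t ht
    rw [Set.uIcc_of_le hab] at ht
    have ht0 : (0:ℝ) < t := lt_of_lt_of_le ha ht.1
    have h2 : HasDerivAt (fun t : ℝ => ((Real.log t : ℝ) : ℂ)) (((t⁻¹ : ℝ) : ℂ)) t :=
      (Real.hasDerivAt_log ht0.ne').ofReal_comp
    have h3 := h2.const_mul cc
    convert h3 using 1
    · rfl
    have : (t:ℂ) ≠ 0 := by exact_mod_cast ht0.ne'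
    push_cast
    field_simp
  have hcont : ContinuousOn (fun t : ℝ => cc / (t:ℂ)) (Set.uIcc a b) := by
    rw [Set.uIcc_of_le hab]
    exact (continuousOn_const.div (Complex.continuous_ofReal.continuousOn)
      (fun x hx => by exact_mod_cast (lt_of_lt_of_le ha hx.1).ne'))
  rw [← MeasureTheory.integral_Ioc_eq_integral_Ioo, ← intervalIntegral.integral_of_le hab,
    intervalIntegral.integral_eq_sub_of_hasDerivAt hderiv
      hcont.intervalIntegrable]
  push_cast
  ring
lemma parseval_ioo (d : ℤ → ℂ) (hd : Summable fun n => ‖d n‖) (ω : ℝ) (hω : ω ≠ 0)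
    {a b : ℝ} (ha : 0 < a) (hab : a ≤ b)
    (hper : ∀ k : ℤ, k ≠ 0 → Complex.exp (Complex.I * (k:ℂ) * (ω:ℂ) * (Real.log b : ℂ))
      = Complex.exp (Complex.I * (k:ℂ) * (ω:ℂ) * (Real.log a : ℂ))) :
    ∫ t in Set.Ioo a b,
        ‖∑' n : ℤ, d n * Complex.exp (Complex.I * (n:ℂ) * (ω:ℂ) * (Real.log t : ℂ))‖^2 / t
      = (Real.log b - Real.log a) * ∑' n : ℤ, ‖d n‖^2 := by
  set g : ℝ → ℂ := fun t => ∑' n : ℤ, d n * Complex.exp (Complex.I * (n:ℂ) * (ω:ℂ) * (Real.log t : ℂ)) with hg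
  set F : ℤ × ℤ → ℝ → ℂ := fun p t => d p.1 * (starRingEnd ℂ) (d p.2) *
      (Complex.exp ((Complex.I * ((p.1 : ℂ) - (p.2 : ℂ)) * (ω:ℂ)) * (Real.log t : ℂ)) / (t:ℂ)) with hF
  have hnorm1 : ∀ (n : ℤ) (L : ℝ), ‖Complex.exp (Complex.I * (n:ℂ) * (ω:ℂ) * (L : ℂ))‖ = 1 :=
    fun n L => norm_exp_I_int n ω L
  -- summabilities
  have hsummand : ∀ t : ℝ, Summable fun n : ℤ => d n * Complex.exp (Complex.I * (n:ℂ) * (ω:ℂ) * (Real.log t : ℂ)) := by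
    intro t
    apply Summable.of_norm
    apply hd.congr
    intro n
    rw [norm_mul, hnorm1, mul_one]
  have hsummandc : ∀ t : ℝ, Summable fun m : ℤ => (starRingEnd ℂ) (d m) *
      Complex.exp (-(Complex.I * (m:ℂ) * (ω:ℂ) * (Real.log t : ℂ))) := by
    intro t
    apply Summable.of_norm
    apply hd.congr
    intro m
    have h1 : ‖Complex.exp (-(Complex.I * (m:ℂ) * (ω:ℂ) * (Real.log t : ℂ)))‖ = 1 := by
      have h2 : (-(Complex.I * (m:ℂ) * (ω:ℂ) * (Real.log t : ℂ)))
          = ((-((m:ℝ)*ω*Real.log t) : ℝ):ℂ) * Complex.I := by push_cast; ring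
      rw [h2, Complex.norm_exp_ofReal_mul_I]
    rw [norm_mul, h1, mul_one, RCLike.norm_conj]
  have hdd : Summable fun p : ℤ × ℤ => ‖d p.1‖ * ‖d p.2‖ :=
    hd.mul_of_nonneg hd (fun n => norm_nonneg _) (fun n => norm_nonneg _)
  -- pointwise expansion into double sum
  have hH : ∀ t : ℝ, g t * (starRingEnd ℂ) (g t) / (t:ℂ) = ∑' p : ℤ × ℤ, F p t := by
    intro t
    have hconjX : ∀ (m : ℤ) (L : ℝ), (starRingEnd ℂ) (Complex.I * (m:ℂ) * (ω:ℂ) * (L:ℂ))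
        = -(Complex.I * (m:ℂ) * (ω:ℂ) * (L:ℂ)) := by
      intro m L
      simp only [map_mul, Complex.conj_I, Complex.conj_ofReal, map_intCast]
      ring
    have hconjg : (starRingEnd ℂ) (g t) = ∑' m : ℤ, (starRingEnd ℂ) (d m) *
        Complex.exp (-(Complex.I * (m:ℂ) * (ω:ℂ) * (Real.log t : ℂ))) := by
      rw [hg]
      have hst : (starRingEnd ℂ) (∑' n : ℤ, d n * Complex.exp (Complex.I * (n:ℂ) * (ω:ℂ) * (Real.log t : ℂ)))
          = ∑' n : ℤ, (starRingEnd ℂ) (d n * Complex.exp (Complex.I * (n:ℂ) * (ω:ℂ) * (Real.log t : ℂ))) := by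
        simp only [starRingEnd_apply]
        exact tsum_star
      rw [hst]
      exact tsum_congr fun m => by rw [map_mul, ← Complex.exp_conj, hconjX]
    have hpair : Summable fun p : ℤ × ℤ =>
        (d p.1 * Complex.exp (Complex.I * (p.1:ℂ) * (ω:ℂ) * (Real.log t : ℂ))) *
        ((starRingEnd ℂ) (d p.2) * Complex.exp (-(Complex.I * (p.2:ℂ) * (ω:ℂ) * (Real.log t : ℂ)))) := by
      apply Summable.of_norm_bounded hdd
      intro p
      rw [norm_mul, norm_mul, norm_mul, hnorm1]
      have h1 : ‖Complex.exp (-(Complex.I * (p.2:ℂ) * (ω:ℂ) * (Real.log t : ℂ)))‖ = 1 := by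
        have h2 : (-(Complex.I * (p.2:ℂ) * (ω:ℂ) * (Real.log t : ℂ)))
            = ((-((p.2:ℝ)*ω*Real.log t) : ℝ):ℂ) * Complex.I := by push_cast; ring
        rw [h2, Complex.norm_exp_ofReal_mul_I]
      rw [h1, mul_one, mul_one, RCLike.norm_conj]
    rw [hg]
    simp only
    rw [hconjg, Summable.tsum_mul_tsum (hsummand t) (hsummandc t) hpair, ← tsum_div_const]
    congr 1; funext p
    rw [hF]
    simp only
    rw [mul_mul_mul_comm, ← Complex.exp_add]
    congr 2
    push_cast
    ring
  -- continuity of g on (0, ∞)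
  have hgcont : ContinuousOn g (Set.Ioi (0:ℝ)) := by
    rw [hg]
    refine continuousOn_tsum (fun n => ?_) hd (fun n x hx => ?_)
    · refine continuousOn_const.mul (ContinuousOn.cexp ?_)
      exact continuousOn_const.mul (Complex.continuous_ofReal.comp_continuousOn
        (Real.continuousOn_log.mono fun x hx => ne_of_gt hx))
    · rw [norm_mul, hnorm1, mul_one]
  -- integrability of H on Ioo a b
  have hsub : Set.Icc a b ⊆ Set.Ioi (0:ℝ) := fun x hx => lt_of_lt_of_le ha hx.1
  have hgc : ContinuousOn g (Set.Icc a b) := hgcont.mono hsub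
  have hInt : IntegrableOn (fun t : ℝ => g t * (starRingEnd ℂ) (g t) / (t:ℂ)) (Set.Ioo a b) := by
    have hc : ContinuousOn (fun t : ℝ => g t * (starRingEnd ℂ) (g t) / (t:ℂ)) (Set.Icc a b) := by
      simp only [starRingEnd_apply]
      exact (hgc.mul hgc.star).div Complex.continuous_ofReal.continuousOn
        (fun x hx => by exact_mod_cast (lt_of_lt_of_le ha hx.1).ne')
    exact (hc.integrableOn_Icc).mono_set Set.Ioo_subset_Icc_self
  -- measurability of each F p
  have hFmeas : ∀ p : ℤ × ℤ, AEStronglyMeasurable (F p) (volume.restrict (Set.Ioo a b)) := by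
    intro p
    rw [hF]
    apply Measurable.aestronglyMeasurable
    refine measurable_const.mul (Measurable.div ?_ Complex.measurable_ofReal)
    exact Complex.continuous_exp.measurable.comp
      (measurable_const.mul (Complex.measurable_ofReal.comp Real.measurable_log))
  -- lintegral bound
  have hFlint : ∑' p : ℤ × ℤ, ∫⁻ t, ‖F p t‖₊ ∂(volume.restrict (Set.Ioo a b)) ≠ ⊤ := by
    have hble : ∀ p : ℤ × ℤ, ∫⁻ t, ‖F p t‖₊ ∂(volume.restrict (Set.Ioo a b))
        ≤ ENNReal.ofReal (‖d p.1‖ * ‖d p.2‖ / a * (b - a)) := by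
      intro p
      have hptw : ∀ t ∈ Set.Ioo a b, (‖F p t‖₊ : ENNReal) ≤ ENNReal.ofReal (‖d p.1‖ * ‖d p.2‖ / a) := by
        intro t ht
        rw [← enorm_eq_nnnorm, ← ofReal_norm]
        apply ENNReal.ofReal_le_ofReal
        rw [hF]
        simp only
        have he : ‖Complex.exp ((Complex.I * ((p.1:ℂ) - (p.2:ℂ)) * (ω:ℂ)) * (Real.log t : ℂ))‖ = 1 := by
          have h2 : (Complex.I * ((p.1:ℂ) - (p.2:ℂ)) * (ω:ℂ)) * (Real.log t : ℂ)
              = ((((p.1 : ℝ) - (p.2 : ℝ))*ω*Real.log t : ℝ):ℂ) * Complex.I := by push_cast; ring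
          rw [h2, Complex.norm_exp_ofReal_mul_I]
        rw [norm_mul, norm_mul, norm_div, he, RCLike.norm_conj, Complex.norm_real,
          Real.norm_eq_abs, abs_of_pos (lt_of_lt_of_le ha ht.1.le), div_eq_mul_one_div _ a]
        gcongr
        exact ht.1.le
      calc ∫⁻ t, ‖F p t‖₊ ∂(volume.restrict (Set.Ioo a b))
          ≤ ∫⁻ _t in Set.Ioo a b, ENNReal.ofReal (‖d p.1‖ * ‖d p.2‖ / a) ∂volume :=
            setLIntegral_mono' measurableSet_Ioo hptw
        _ = ENNReal.ofReal (‖d p.1‖ * ‖d p.2‖ / a) * volume (Set.Ioo a b) := by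
            rw [MeasureTheory.lintegral_const, Measure.restrict_apply_univ]
        _ ≤ ENNReal.ofReal (‖d p.1‖ * ‖d p.2‖ / a) * ENNReal.ofReal (b - a) := by
            rw [Real.volume_Ioo]
        _ = ENNReal.ofReal (‖d p.1‖ * ‖d p.2‖ / a * (b - a)) :=
            (ENNReal.ofReal_mul (by positivity)).symm
    refine ne_top_of_le_ne_top ?_ (ENNReal.tsum_le_tsum hble)
    have hsum2 : Summable (fun p : ℤ × ℤ => ‖d p.1‖ * ‖d p.2‖ / a * (b - a)) :=
      (hdd.div_const a).mul_right _
    rw [← ENNReal.ofReal_tsum_of_nonneg (fun p => by have := sub_nonneg.mpr hab; positivity) hsum2]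
    exact ENNReal.ofReal_ne_top
  -- value of each integral
  set L : ℂ := ((Real.log b - Real.log a : ℝ) : ℂ) with hL
  have hIF : ∀ p : ℤ × ℤ, (∫ t in Set.Ioo a b, F p t)
      = if p.1 = p.2 then d p.1 * (starRingEnd ℂ) (d p.2) * L else 0 := by
    intro p
    rw [hF]
    simp only
    rw [integral_const_mul]
    by_cases hp : p.1 = p.2
    · rw [if_pos hp, hp]
      have hfun : (fun t : ℝ => Complex.exp ((Complex.I * ((p.2:ℂ) - (p.2:ℂ)) * (ω:ℂ)) * (Real.log t : ℂ)) / (t:ℂ))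
          = fun t : ℝ => (1:ℂ)/(t:ℂ) := by
        funext t
        rw [sub_self, mul_zero, zero_mul, zero_mul, Complex.exp_zero]
      rw [hfun]
      have h1 := integral_const_div_log 1 ha hab
      rw [show (∫ t in Set.Ioo a b, (1:ℂ)/(t:ℂ)) = ∫ t in Set.Ioo a b, (1:ℂ)/(t:ℂ) from rfl, h1, hL]
      ring
    · rw [if_neg hp]
      have hk : (Complex.I * ((p.1:ℂ) - (p.2:ℂ)) * (ω:ℂ)) ≠ 0 := by
        refine mul_ne_zero (mul_ne_zero Complex.I_ne_zero ?_) ?_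
        · rw [sub_ne_zero]
          exact_mod_cast fun h => hp (by exact_mod_cast h)
        · exact_mod_cast hω
      rw [integral_cexp_log _ hk ha hab]
      have h1 := hper (p.1 - p.2) (sub_ne_zero.mpr hp)
      have h2 : Complex.I * ((p.1:ℂ) - (p.2:ℂ)) * (ω:ℂ) * (Real.log b : ℂ)
          = Complex.I * ((p.1 - p.2 : ℤ):ℂ) * (ω:ℂ) * (Real.log b : ℂ) := by push_cast; ring
      have h3 : Complex.I * ((p.1:ℂ) - (p.2:ℂ)) * (ω:ℂ) * (Real.log a : ℂ)
          = Complex.I * ((p.1 - p.2 : ℤ):ℂ) * (ω:ℂ) * (Real.log a : ℂ) := by push_cast; ring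
      rw [h2, h3, h1, sub_self, zero_div, mul_zero]
  -- diagonal sum
  have hdiag : (∑' p : ℤ × ℤ, if p.1 = p.2 then d p.1 * (starRingEnd ℂ) (d p.2) * L else 0)
      = ((∑' n : ℤ, ‖d n‖^2 : ℝ) : ℂ) * L := by
    have hsumdiag : Summable (fun p : ℤ × ℤ =>
        if p.1 = p.2 then d p.1 * (starRingEnd ℂ) (d p.2) * L else 0) := by
      refine Summable.of_norm_bounded (hdd.mul_right ‖L‖) ?_
      intro p
      by_cases hp : p.1 = p.2
      · rw [if_pos hp, norm_mul, norm_mul, RCLike.norm_conj]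
      · rw [if_neg hp, norm_zero]
        positivity
    rw [Summable.tsum_prod' hsumdiag (fun n => summable_of_ne_finset_zero (s := {n})
      (fun m hm => if_neg (fun h => hm (by simpa using h.symm))))]
    have hinner : ∀ n : ℤ, (∑' m : ℤ, if n = m then d n * (starRingEnd ℂ) (d m) * L else 0)
        = ((‖d n‖^2 : ℝ) : ℂ) * L := by
      intro n
      rw [tsum_eq_single n (fun m hm => if_neg (fun h => hm h.symm)), if_pos rfl,
        Complex.mul_conj, Complex.normSq_eq_norm_sq]
    rw [tsum_congr hinner, tsum_mul_right, ← Complex.ofReal_tsum]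
  -- put everything together
  calc ∫ t in Set.Ioo a b, ‖g t‖^2 / t
      = ∫ t in Set.Ioo a b, (g t * (starRingEnd ℂ) (g t) / (t:ℂ)).re := by
        refine integral_congr_ae (Filter.Eventually.of_forall fun t => ?_)
        dsimp only
        rw [Complex.mul_conj, Complex.div_ofReal_re, Complex.ofReal_re,
          Complex.normSq_eq_norm_sq]
    _ = (∫ t in Set.Ioo a b, g t * (starRingEnd ℂ) (g t) / (t:ℂ)).re := by
        simpa using integral_re hInt
    _ = (∑' p : ℤ × ℤ, ∫ t in Set.Ioo a b, F p t).re := by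
        rw [← MeasureTheory.integral_tsum hFmeas hFlint]
        congr 1
        exact integral_congr_ae (Filter.Eventually.of_forall fun t => hH t)
    _ = (((∑' n : ℤ, ‖d n‖^2 : ℝ) : ℂ) * L).re := by
        rw [tsum_congr hIF, hdiag]
    _ = (Real.log b - Real.log a) * ∑' n : ℤ, ‖d n‖^2 := by
        rw [hL, ← Complex.ofReal_mul, Complex.ofReal_re]
        ring
lemma term_eq (n cn : ℂ) (π' κ' ω ℓ₂ t : ℝ) (hω : ω = π' * κ')
    (hℓ₂ : 0 ≤ ℓ₂) (hℓ₂' : ℓ₂ < 1) (ht : 0 < t) :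
    n * (cn * Complex.exp (Complex.I * n * (π':ℂ) * (κ':ℂ) * (Real.log (t + ℓ₂*t) : ℂ))
          / ((t + ℓ₂*t : ℝ) : ℂ)
      + cn * Complex.exp (Complex.I * n * (π':ℂ) * (κ':ℂ) * (Real.log ((1+ℓ₂)/(1-ℓ₂)) : ℂ))
          * Complex.exp (Complex.I * n * (π':ℂ) * (κ':ℂ) * (Real.log (t - ℓ₂*t) : ℂ))
          / ((t - ℓ₂*t : ℝ) : ℂ))
    = ((2/((1-ℓ₂^2)*t) : ℝ) : ℂ) *
        (n * cn * Complex.exp (Complex.I * n * (ω:ℂ) * (Real.log (1+ℓ₂) : ℂ)) *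
          Complex.exp (Complex.I * n * (ω:ℂ) * (Real.log t : ℂ))) := by
  subst hω
  have h1p : (0:ℝ) < 1 + ℓ₂ := by linarith
  have h2p : (0:ℝ) < 1 - ℓ₂ := by linarith
  have h1 : Real.log (t + ℓ₂*t) = Real.log (1+ℓ₂) + Real.log t := by
    rw [show t + ℓ₂*t = (1+ℓ₂)*t by ring, Real.log_mul h1p.ne' ht.ne']
  have h2 : Real.log (t - ℓ₂*t) = Real.log (1-ℓ₂) + Real.log t := by
    rw [show t - ℓ₂*t = (1-ℓ₂)*t by ring, Real.log_mul h2p.ne' ht.ne']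
  have h3 : Real.log ((1+ℓ₂)/(1-ℓ₂)) = Real.log (1+ℓ₂) - Real.log (1-ℓ₂) :=
    Real.log_div h1p.ne' h2p.ne'
  rw [h1, h2, h3]
  have e1 : Complex.I * n * (π':ℂ) * (κ':ℂ) * ((Real.log (1+ℓ₂) + Real.log t : ℝ) : ℂ)
      = Complex.I * n * ((π'*κ' : ℝ):ℂ) * (Real.log (1+ℓ₂):ℂ)
        + Complex.I * n * ((π'*κ' : ℝ):ℂ) * (Real.log t:ℂ) := by push_cast; ring
  have e2 : Complex.I * n * (π':ℂ) * (κ':ℂ) * ((Real.log (1-ℓ₂) + Real.log t : ℝ) : ℂ)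
      = Complex.I * n * ((π'*κ' : ℝ):ℂ) * (Real.log (1-ℓ₂):ℂ)
        + Complex.I * n * ((π'*κ' : ℝ):ℂ) * (Real.log t:ℂ) := by push_cast; ring
  have e3 : Complex.I * n * (π':ℂ) * (κ':ℂ) * ((Real.log (1+ℓ₂) - Real.log (1-ℓ₂) : ℝ) : ℂ)
      = Complex.I * n * ((π'*κ' : ℝ):ℂ) * (Real.log (1+ℓ₂):ℂ)
        - Complex.I * n * ((π'*κ' : ℝ):ℂ) * (Real.log (1-ℓ₂):ℂ) := by push_cast; ring
  rw [e1, e2, e3, Complex.exp_add, Complex.exp_add, Complex.exp_sub]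
  have hA : ((t + ℓ₂*t : ℝ) : ℂ) ≠ 0 := by
    exact_mod_cast (show (0:ℝ) < t + ℓ₂*t by nlinarith).ne'
  have hB : ((t - ℓ₂*t : ℝ) : ℂ) ≠ 0 := by
    exact_mod_cast (show (0:ℝ) < t - ℓ₂*t by nlinarith).ne'
  have hC : ((1 - ℓ₂^2)*t : ℝ) ≠ 0 := (show (0:ℝ) < (1-ℓ₂^2)*t by nlinarith [mul_pos (mul_pos h2p h1p) ht]).ne'
  have hC' : (((1:ℝ) - ℓ₂^2 : ℝ):ℂ) * (t:ℂ) ≠ 0 := by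
    exact_mod_cast (show ((1 - ℓ₂^2)*t : ℝ) ≠ 0 from hC)
  have hE : Complex.exp (Complex.I * n * ((π'*κ' : ℝ):ℂ) * (Real.log (1-ℓ₂):ℂ)) ≠ 0 :=
    Complex.exp_ne_zero _
  push_cast
  push_cast at hA hB hC'
  have h1c : (1:ℂ) + ℓ₂ ≠ 0 := by exact_mod_cast h1p.ne'
  have h2c : (1:ℂ) - ℓ₂ ≠ 0 := by exact_mod_cast h2p.ne'
  have h4c : (1:ℂ) - ℓ₂ ^ 2 ≠ 0 := (mul_ne_zero_iff.mp hC').1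
  field_simp
  ring

/-- exact boundary-trace identity at the right endpoint:
`∫_{t₀}^{(αβ)^M t₀} t·φₓ(ℓ₂t,t)² dt = 4M·S/(1−ℓ₂²)²`. -/
theorem boundary_trace_identity_right
    (ℓ₁ ℓ₂ L₀ t₀ α β κ : ℝ)
    (hℓ₁ : 0 ≤ ℓ₁) (hℓ₁' : ℓ₁ < 1) (hℓ₂ : 0 ≤ ℓ₂) (hℓ₂' : ℓ₂ < 1)
    (hℓ : 0 < ℓ₁ + ℓ₂) (hL₀ : 0 < L₀) (ht₀ : t₀ = L₀ / (ℓ₁ + ℓ₂))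
    (hα : α = (1 + ℓ₁) / (1 - ℓ₂)) (hβ : β = (1 + ℓ₂) / (1 - ℓ₁))
    (hκ : κ = 2 / Real.log (α * β))
    (c : ℤ → ℂ) (hc0 : c 0 = 0)
    (hcsum : Summable fun n : ℤ => ‖(n : ℂ) * c n‖)
    (hconj : ∀ n : ℤ, c (-n) = (starRingEnd ℂ) (c n))
    (C : ℤ → ℂ)
    (hC : ∀ n : ℤ, C n = c n *
      Complex.exp (Complex.I * n * Real.pi * κ * Real.log ((1 + ℓ₂) / (1 - ℓ₂))))
    (Φx : ℝ → ℝ → ℝ)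
    (hΦx : ∀ t : ℝ, t₀ ≤ t → ∀ x : ℝ, -ℓ₁ * t ≤ x → x ≤ ℓ₂ * t →
      (Φx x t : ℂ) = Complex.I * Real.pi * κ * ∑' n : ℤ, (n : ℂ) *
        (c n * Complex.exp (Complex.I * n * Real.pi * κ * Real.log (t + x)) /
            ((t + x : ℝ) : ℂ) +
         C n * Complex.exp (Complex.I * n * Real.pi * κ * Real.log (t - x)) /
            ((t - x : ℝ) : ℂ)))
    (S : ℝ) (hS : S = 2 * Real.pi ^ 2 * κ * ∑' n : ℤ, ‖(n : ℂ) * c n‖ ^ 2)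
    :
    ∀ M : ℕ, 0 < M →
      ∫ t in Set.Ioo t₀ ((α * β) ^ M * t₀), t * (Φx (ℓ₂ * t) t) ^ 2 =
        4 * M * S / (1 - ℓ₂ ^ 2) ^ 2 := by
  intro M hM
  have h1p : (0:ℝ) < 1 + ℓ₂ := by linarith
  have h2p : (0:ℝ) < 1 - ℓ₂ := by linarith
  have h1m : (0:ℝ) < 1 - ℓ₁ := by linarith
  have ht₀pos : 0 < t₀ := by rw [ht₀]; positivity
  have hαβ : 1 < α * β := by
    rw [hα, hβ, div_mul_div_comm, lt_div_iff₀ (by positivity)]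
    nlinarith
  have hlogαβ : 0 < Real.log (α * β) := Real.log_pos hαβ
  have hκ0 : 0 < κ := by rw [hκ]; positivity
  have hκlog : κ * Real.log (α * β) = 2 := by
    rw [hκ]; exact div_mul_cancel₀ 2 hlogαβ.ne'
  set ω := Real.pi * κ with hωdef
  have hω0 : 0 < ω := mul_pos Real.pi_pos hκ0
  have hT1 : t₀ ≤ (α * β) ^ M * t₀ := by
    nlinarith [one_le_pow₀ hαβ.le (n := M)]
  have hlogT : Real.log ((α * β) ^ M * t₀) = M * Real.log (α * β) + Real.log t₀ := by
    rw [Real.log_mul (by positivity) ht₀pos.ne', Real.log_pow]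
  set d : ℤ → ℂ := fun n => (n:ℂ) * c n *
    Complex.exp (Complex.I * (n:ℂ) * (ω:ℂ) * (Real.log (1+ℓ₂) : ℂ)) with hd
  have hdsum : Summable fun n : ℤ => ‖d n‖ := by
    refine hcsum.congr fun n => ?_
    symm
    simp only [hd]
    rw [norm_mul, norm_exp_I_int, mul_one]
  -- periodicity
  have hper : ∀ k : ℤ, k ≠ 0 →
      Complex.exp (Complex.I * (k:ℂ) * (ω:ℂ) * (Real.log ((α * β) ^ M * t₀) : ℂ))
      = Complex.exp (Complex.I * (k:ℂ) * (ω:ℂ) * (Real.log t₀ : ℂ)) := by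
    intro k _
    have hr : ω * Real.log (α * β) = 2 * Real.pi := by
      rw [hωdef]; nlinarith [hκlog]
    have hrC : ((ω : ℝ):ℂ) * ((Real.log (α * β) : ℝ):ℂ) = 2 * (Real.pi : ℂ) := by
      exact_mod_cast congrArg (fun x : ℝ => (x : ℂ)) hr
    have hsplit : Complex.I * (k:ℂ) * (ω:ℂ) * (Real.log ((α * β) ^ M * t₀) : ℂ)
        = Complex.I * (k:ℂ) * (ω:ℂ) * (Real.log t₀ : ℂ)
          + ((k * M : ℤ):ℂ) * (2 * (Real.pi:ℂ) * Complex.I) := by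
      rw [hlogT]
      push_cast
      linear_combination (Complex.I * (k:ℂ) * (M:ℂ)) * hrC
    rw [hsplit, Complex.exp_add, Complex.exp_int_mul_two_pi_mul_I, mul_one]
  -- pointwise identity on the interval
  have hpt : Set.EqOn (fun t => t * (Φx (ℓ₂ * t) t) ^ 2)
      (fun t => (4 * ω^2 / (1 - ℓ₂^2)^2) *
        (‖∑' n : ℤ, d n * Complex.exp (Complex.I * (n:ℂ) * (ω:ℂ) * (Real.log t : ℂ))‖^2 / t))
      (Set.Ioo t₀ ((α * β) ^ M * t₀)) := by
    intro t ht
    have htpos : 0 < t := lt_trans ht₀pos ht.1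
    have hphi := hΦx t ht.1.le (ℓ₂ * t) (by nlinarith) (le_refl _)
    have hsum_eq : (∑' n : ℤ, (n : ℂ) *
        (c n * Complex.exp (Complex.I * n * Real.pi * κ * Real.log (t + ℓ₂ * t)) /
            ((t + ℓ₂ * t : ℝ) : ℂ) +
         C n * Complex.exp (Complex.I * n * Real.pi * κ * Real.log (t - ℓ₂ * t)) /
            ((t - ℓ₂ * t : ℝ) : ℂ)))
        = ((2/((1-ℓ₂^2)*t) : ℝ) : ℂ) *
            ∑' n : ℤ, d n * Complex.exp (Complex.I * (n:ℂ) * (ω:ℂ) * (Real.log t : ℂ)) := by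
      rw [← tsum_mul_left]
      refine tsum_congr fun n => ?_
      rw [hC n]
      simp only [hd]
      exact term_eq (n:ℂ) (c n) Real.pi κ ω ℓ₂ t hωdef hℓ₂ hℓ₂' htpos
    have h5 : (Φx (ℓ₂ * t) t)^2 = ‖((Φx (ℓ₂ * t) t : ℝ) : ℂ)‖^2 := by
      rw [Complex.norm_real, Real.norm_eq_abs, _root_.sq_abs]
    have hprod : (0:ℝ) < (1-ℓ₂^2)*t := by nlinarith [mul_pos (mul_pos h2p h1p) htpos]
    have hc2 : (0:ℝ) < 2/((1-ℓ₂^2)*t) := by positivity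
    simp only
    rw [h5, hphi, hsum_eq]
    simp only [norm_mul, Complex.norm_I, Complex.norm_real, Real.norm_eq_abs, one_mul,
      abs_of_pos Real.pi_pos, abs_of_pos hκ0, abs_of_pos hc2]
    have hne : (1-ℓ₂^2) ≠ 0 := by nlinarith
    rw [hωdef]
    field_simp
    ring_nf
    simp only [mul_comm, mul_left_comm, mul_assoc]
  rw [MeasureTheory.setIntegral_congr_fun measurableSet_Ioo hpt, integral_const_mul,
    parseval_ioo d hdsum ω hω0.ne' ht₀pos hT1 hper]
  have hsumeq : (∑' n : ℤ, ‖d n‖^2) = ∑' n : ℤ, ‖(n:ℂ) * c n‖^2 := by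
    refine tsum_congr fun n => ?_
    simp only [hd]
    rw [norm_mul, norm_exp_I_int, mul_one]
  have hlogval : Real.log (α * β) = 2 / κ := by
    rw [eq_div_iff hκ0.ne', mul_comm]
    exact hκlog
  rw [hlogT, hsumeq, hS, hlogval, hωdef]
  set Sd := ∑' n : ℤ, ‖(n:ℂ) * c n‖^2 with hSd
  have hD : ((1:ℝ) - ℓ₂^2) ≠ 0 := by nlinarith [mul_pos h2p h1p]
  field_simp
  ring
end

section
/- For every positive integer M, the boundary trace at the right endpoint satisfies the two-sided estimate (4M(1−L)t₀/(1−ℓ₂²)²)·E(t₀) ≤ ∫_{t₀}^{(αβ)^M·t₀} t·φₓ(ℓ₂t, t)² dt ≤ (4M(1+L)t₀/(1−ℓ₂²)²)·E(t₀), where L = max{ℓ₁,ℓ₂}. -/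
open MeasureTheory intervalIntegral Complex

noncomputable def Fs (d : ℤ → ℂ) (u : ℝ) : ℂ :=
  ∑' n : ℤ, d n * Complex.exp (Complex.I * n * Real.pi * u)

lemma norm_Fs_term (d : ℤ → ℂ) (n : ℤ) (u : ℝ) :
    ‖d n * Complex.exp (Complex.I * n * Real.pi * u)‖ = ‖d n‖ := by
  rw [norm_mul]
  have h : Complex.I * n * Real.pi * u = ((n * Real.pi * u : ℝ) : ℂ) * Complex.I := by
    push_cast; ring
  rw [h]
  simp [Complex.norm_exp]

lemma Fs_summable {d : ℤ → ℂ} (hd : Summable fun n => ‖d n‖) (u : ℝ) :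
    Summable fun n : ℤ => d n * Complex.exp (Complex.I * n * Real.pi * u) :=
  Summable.of_norm (by simpa only [norm_Fs_term] using hd)

lemma Fs_continuous {d : ℤ → ℂ} (hd : Summable fun n => ‖d n‖) : Continuous (Fs d) := by
  refine continuous_tsum (fun n => ?_) hd (fun n u => le_of_eq (norm_Fs_term d n u))
  fun_prop

lemma Fs_periodic (d : ℤ → ℂ) : Function.Periodic (Fs d) 2 := by
  intro u
  refine tsum_congr fun n => ?_
  have h : Complex.I * n * Real.pi * (((u + 2 : ℝ)) : ℂ)
      = Complex.I * n * Real.pi * u + n * (2 * Real.pi * Complex.I) := by push_cast; ring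
  rw [h, Complex.exp_add, Complex.exp_int_mul_two_pi_mul_I, mul_one]

lemma Fs_shift (d : ℤ → ℂ) (σ u : ℝ) :
    Fs (fun n => d n * Complex.exp (Complex.I * n * Real.pi * σ)) u = Fs d (u + σ) := by
  refine tsum_congr fun n => ?_
  rw [mul_assoc, ← Complex.exp_add]
  congr 1
  push_cast; ring

lemma integral_comp_klog (q : ℝ → ℝ) (hq : Continuous q) (κ a b : ℝ)
    (ha : 0 < a) (hb : 0 < b) :
    ∫ x in a..b, (κ / x) * q (κ * Real.log x)
      = ∫ u in (κ * Real.log a)..(κ * Real.log b), q u := by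
  have hpos : ∀ x ∈ Set.uIcc a b, 0 < x := fun x hx =>
    lt_of_lt_of_le (lt_min ha hb) hx.1
  have h : ∀ x ∈ Set.uIcc a b, HasDerivAt (fun x => κ * Real.log x) (κ / x) x := by
    intro x hx
    have := (Real.hasDerivAt_log (ne_of_gt (hpos x hx))).const_mul κ
    simpa [div_eq_mul_inv] using this
  have h' : ContinuousOn (fun x => κ / x) (Set.uIcc a b) :=
    ContinuousOn.div continuousOn_const continuousOn_id fun x hx => ne_of_gt (hpos x hx)
  simpa [smul_eq_mul] using intervalIntegral.integral_comp_smul_deriv h h' hq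

lemma integral_comp_klog_add (q : ℝ → ℝ) (hq : Continuous q) (κ e a b : ℝ)
    (h1 : 0 < e + a) (h2 : 0 < e + b) :
    ∫ x in a..b, (κ / (e + x)) * q (κ * Real.log (e + x))
      = ∫ u in (κ * Real.log (e + a))..(κ * Real.log (e + b)), q u := by
  have key := intervalIntegral.integral_comp_add_right (a := a) (b := b)
    (f := fun y => (κ / y) * q (κ * Real.log y)) e
  have h3 : 0 < a + e := by linarith
  have h4 : 0 < b + e := by linarith
  calc ∫ x in a..b, (κ / (e + x)) * q (κ * Real.log (e + x))
      = ∫ x in a..b, (κ / (x + e)) * q (κ * Real.log (x + e)) := by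
        simp only [add_comm]
    _ = ∫ y in (a+e)..(b+e), (κ / y) * q (κ * Real.log y) := key
    _ = ∫ u in (κ * Real.log (a+e))..(κ * Real.log (b+e)), q u :=
        integral_comp_klog q hq κ _ _ h3 h4
    _ = _ := by rw [add_comm a e, add_comm b e]

lemma div_sq_le_aux {Q r cc κ : ℝ} (hQ : 0 ≤ Q) (hκ : 0 < κ) (hc : 0 < cc) (hcr : cc ≤ r) :
    Q / (r * r) ≤ (1 / (cc * κ)) * ((κ / r) * Q) := by
  have hr : 0 < r := lt_of_lt_of_le hc hcr
  have h1 : (1 / (cc * κ)) * ((κ / r) * Q) = Q / (cc * r) := by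
    field_simp
  rw [h1, div_le_div_iff₀ (by positivity) (by positivity)]
  nlinarith [mul_le_mul_of_nonneg_left hcr hQ, mul_pos hc hr]

lemma div_sq_ge_aux {Q r cc κ : ℝ} (hQ : 0 ≤ Q) (hκ : 0 < κ) (hr : 0 < r) (hrc : r ≤ cc) :
    (1 / (cc * κ)) * ((κ / r) * Q) ≤ Q / (r * r) := by
  have hc : 0 < cc := lt_of_lt_of_le hr hrc
  have h1 : (1 / (cc * κ)) * ((κ / r) * Q) = Q / (cc * r) := by
    field_simp
  rw [h1, div_le_div_iff₀ (by positivity) (by positivity)]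
  nlinarith [mul_le_mul_of_nonneg_left hrc hQ, mul_pos hr hr]

set_option maxHeartbeats 4000000 in
/-- two-sided boundary-trace estimate at the right endpoint. -/
theorem boundary_trace_estimate_right
    (ℓ₁ ℓ₂ L₀ t₀ α β κ : ℝ)
    (hℓ₁ : 0 ≤ ℓ₁) (hℓ₁' : ℓ₁ < 1) (hℓ₂ : 0 ≤ ℓ₂) (hℓ₂' : ℓ₂ < 1)
    (hℓ : 0 < ℓ₁ + ℓ₂) (hL₀ : 0 < L₀) (ht₀ : t₀ = L₀ / (ℓ₁ + ℓ₂))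
    (hα : α = (1 + ℓ₁) / (1 - ℓ₂)) (hβ : β = (1 + ℓ₂) / (1 - ℓ₁))
    (hκ : κ = 2 / Real.log (α * β))
    (L : ℝ) (hL : L = max ℓ₁ ℓ₂)
    (c : ℤ → ℂ) (hc0 : c 0 = 0)
    (hcsum : Summable fun n : ℤ => ‖(n : ℂ) * c n‖)
    (hconj : ∀ n : ℤ, c (-n) = (starRingEnd ℂ) (c n))
    (C : ℤ → ℂ)
    (hC : ∀ n : ℤ, C n = c n *
      Complex.exp (Complex.I * n * Real.pi * κ * Real.log ((1 + ℓ₂) / (1 - ℓ₂))))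
    (Φx : ℝ → ℝ → ℝ)
    (hΦx : ∀ t : ℝ, t₀ ≤ t → ∀ x : ℝ, -ℓ₁ * t ≤ x → x ≤ ℓ₂ * t →
      (Φx x t : ℂ) = Complex.I * Real.pi * κ * ∑' n : ℤ, (n : ℂ) *
        (c n * Complex.exp (Complex.I * n * Real.pi * κ * Real.log (t + x)) /
            ((t + x : ℝ) : ℂ) +
         C n * Complex.exp (Complex.I * n * Real.pi * κ * Real.log (t - x)) /
            ((t - x : ℝ) : ℂ)))
    (Φt : ℝ → ℝ → ℝ)
    (hΦt : ∀ t : ℝ, t₀ ≤ t → ∀ x : ℝ, -ℓ₁ * t ≤ x → x ≤ ℓ₂ * t →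
      (Φt x t : ℂ) = Complex.I * Real.pi * κ * ∑' n : ℤ, (n : ℂ) *
        (c n * Complex.exp (Complex.I * n * Real.pi * κ * Real.log (t + x)) /
            ((t + x : ℝ) : ℂ) -
         C n * Complex.exp (Complex.I * n * Real.pi * κ * Real.log (t - x)) /
            ((t - x : ℝ) : ℂ)))
    (E : ℝ → ℝ)
    (hE : ∀ t : ℝ, E t = (1 / 2) * ∫ x in Set.Ioo (-ℓ₁ * t) (ℓ₂ * t),
      ((Φx x t) ^ 2 + (Φt x t) ^ 2))
    :
    ∀ M : ℕ, 0 < M →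
      4 * M * (1 - L) * t₀ / (1 - ℓ₂ ^ 2) ^ 2 * E t₀ ≤
        (∫ t in Set.Ioo t₀ ((α * β) ^ M * t₀), t * (Φx (ℓ₂ * t) t) ^ 2) ∧
      (∫ t in Set.Ioo t₀ ((α * β) ^ M * t₀), t * (Φx (ℓ₂ * t) t) ^ 2) ≤
        4 * M * (1 + L) * t₀ / (1 - ℓ₂ ^ 2) ^ 2 * E t₀ := by
  -- basic positivity facts
  have h1m1 : 0 < 1 - ℓ₁ := by linarith
  have h1m2 : 0 < 1 - ℓ₂ := by linarith
  have h1p1 : 0 < 1 + ℓ₁ := by linarith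
  have h1p2 : 0 < 1 + ℓ₂ := by linarith
  have ht0pos : 0 < t₀ := by rw [ht₀]; positivity
  have hLlt : L < 1 := by rw [hL]; exact max_lt hℓ₁' hℓ₂'
  have hℓ₁L : ℓ₁ ≤ L := hL ▸ le_max_left _ _
  have hℓ₂L : ℓ₂ ≤ L := hL ▸ le_max_right _ _
  have h1mL : 0 < 1 - L := by linarith
  have h1pL : 0 < 1 + L := by linarith [hℓ₁.trans hℓ₁L]
  have h1sq : 0 < 1 - ℓ₂ ^ 2 := by nlinarith
  have hαβ : 1 < α * β := by
    rw [hα, hβ, div_mul_div_comm, lt_div_iff₀ (by positivity)]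
    nlinarith
  have hαβ0 : 0 < α * β := lt_trans one_pos hαβ
  have hlogpos : 0 < Real.log (α * β) := Real.log_pos hαβ
  have hκ0 : 0 < κ := by rw [hκ]; exact div_pos two_pos hlogpos
  have hκlog : κ * Real.log (α * β) = 2 := by
    rw [hκ, div_mul_eq_mul_div, mul_div_assoc, div_self hlogpos.ne', mul_one]
  -- the coefficient sequences
  set dA : ℤ → ℂ := fun n => Complex.I * Real.pi * κ * n * c n with hdA
  set σ : ℝ := κ * Real.log ((1 + ℓ₂) / (1 - ℓ₂)) with hσ
  set dB : ℤ → ℂ := fun n => dA n * Complex.exp (Complex.I * n * Real.pi * σ) with hdB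
  have hdAapp : ∀ n : ℤ, dA n = Complex.I * Real.pi * κ * n * c n := fun n => rfl
  have hdBapp : ∀ n : ℤ, dB n = Complex.I * Real.pi * κ * n * c n
      * Complex.exp (Complex.I * n * Real.pi * (σ : ℝ)) := fun n => rfl
  have hdA_sum : Summable fun n : ℤ => ‖dA n‖ := by
    have h : (fun n : ℤ => ‖dA n‖)
        = fun n : ℤ => ‖(Complex.I * Real.pi * κ : ℂ)‖ * ‖(n : ℂ) * c n‖ := by
      funext n
      rw [hdAapp n, ← norm_mul]
      congr 1
      ring
    rw [h]
    exact hcsum.mul_left _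
  have hdB_sum : Summable fun n : ℤ => ‖dB n‖ := by
    have h : (fun n : ℤ => ‖dB n‖) = fun n : ℤ => ‖dA n‖ := by
      funext n
      exact norm_Fs_term dA n σ
    rw [h]; exact hdA_sum
  have hdBC : ∀ n : ℤ, dB n = Complex.I * Real.pi * κ * n * C n := by
    intro n
    rw [hdBapp n, hC n]
    have h : Complex.I * n * Real.pi * (σ : ℝ)
        = Complex.I * n * Real.pi * κ * Real.log ((1 + ℓ₂) / (1 - ℓ₂)) := by
      rw [hσ]; push_cast; ring
    rw [h]; ring
  -- the periodic profile
  set q : ℝ → ℝ := fun u => Complex.normSq (Fs dA u) with hqdef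
  have hq_cont : Continuous q := Complex.continuous_normSq.comp (Fs_continuous hdA_sum)
  have hq_per : Function.Periodic q 2 := fun u => by
    rw [hqdef]; simp only []; rw [Fs_periodic dA u]
  have hq_nn : ∀ u, 0 ≤ q u := fun u => Complex.normSq_nonneg _
  -- key pointwise formula
  have key : ∀ t : ℝ, t₀ ≤ t → ∀ x : ℝ, -ℓ₁ * t ≤ x → x ≤ ℓ₂ * t →
      ((Φx x t : ℂ) = Fs dA (κ * Real.log (t + x)) / ((t + x : ℝ) : ℂ)
        + Fs dB (κ * Real.log (t - x)) / ((t - x : ℝ) : ℂ)) ∧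
      ((Φt x t : ℂ) = Fs dA (κ * Real.log (t + x)) / ((t + x : ℝ) : ℂ)
        - Fs dB (κ * Real.log (t - x)) / ((t - x : ℝ) : ℂ)) := by
    intro t ht x hx1 hx2
    have htp : 0 < t := lt_of_lt_of_le ht0pos ht
    have hp : 0 < t + x := by nlinarith
    have hm : 0 < t - x := by nlinarith
    have hSA : Summable fun n : ℤ =>
        dA n * Complex.exp (Complex.I * n * Real.pi * ((κ * Real.log (t + x) : ℝ) : ℂ))
          / ((t + x : ℝ) : ℂ) := (Fs_summable hdA_sum _).div_const _
    have hSB : Summable fun n : ℤ =>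
        dB n * Complex.exp (Complex.I * n * Real.pi * ((κ * Real.log (t - x) : ℝ) : ℂ))
          / ((t - x : ℝ) : ℂ) := (Fs_summable hdB_sum _).div_const _
    have htermP : ∀ n : ℤ, Complex.I * Real.pi * κ * ((n : ℂ) *
        (c n * Complex.exp (Complex.I * n * Real.pi * κ * Real.log (t + x)) /
            ((t + x : ℝ) : ℂ) +
         C n * Complex.exp (Complex.I * n * Real.pi * κ * Real.log (t - x)) /
            ((t - x : ℝ) : ℂ)))
        = dA n * Complex.exp (Complex.I * n * Real.pi * ((κ * Real.log (t + x) : ℝ) : ℂ))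
            / ((t + x : ℝ) : ℂ)
          + dB n * Complex.exp (Complex.I * n * Real.pi * ((κ * Real.log (t - x) : ℝ) : ℂ))
            / ((t - x : ℝ) : ℂ) := by
      intro n
      rw [hdBC n, hdAapp n]
      have e1 : Complex.I * n * Real.pi * ((κ * Real.log (t + x) : ℝ) : ℂ)
          = Complex.I * n * Real.pi * κ * Real.log (t + x) := by push_cast; ring
      have e2 : Complex.I * n * Real.pi * ((κ * Real.log (t - x) : ℝ) : ℂ)
          = Complex.I * n * Real.pi * κ * Real.log (t - x) := by push_cast; ring
      rw [e1, e2]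
      ring
    have htermM : ∀ n : ℤ, Complex.I * Real.pi * κ * ((n : ℂ) *
        (c n * Complex.exp (Complex.I * n * Real.pi * κ * Real.log (t + x)) /
            ((t + x : ℝ) : ℂ) -
         C n * Complex.exp (Complex.I * n * Real.pi * κ * Real.log (t - x)) /
            ((t - x : ℝ) : ℂ)))
        = dA n * Complex.exp (Complex.I * n * Real.pi * ((κ * Real.log (t + x) : ℝ) : ℂ))
            / ((t + x : ℝ) : ℂ)
          - dB n * Complex.exp (Complex.I * n * Real.pi * ((κ * Real.log (t - x) : ℝ) : ℂ))
            / ((t - x : ℝ) : ℂ) := by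
      intro n
      rw [hdBC n, hdAapp n]
      have e1 : Complex.I * n * Real.pi * ((κ * Real.log (t + x) : ℝ) : ℂ)
          = Complex.I * n * Real.pi * κ * Real.log (t + x) := by push_cast; ring
      have e2 : Complex.I * n * Real.pi * ((κ * Real.log (t - x) : ℝ) : ℂ)
          = Complex.I * n * Real.pi * κ * Real.log (t - x) := by push_cast; ring
      rw [e1, e2]
      ring
    constructor
    · rw [hΦx t ht x hx1 hx2, ← tsum_mul_left, tsum_congr htermP,
        Summable.tsum_add hSA hSB, tsum_div_const, tsum_div_const]
      rfl
    · rw [hΦt t ht x hx1 hx2, ← tsum_mul_left, tsum_congr htermM,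
        Summable.tsum_sub hSA hSB, tsum_div_const, tsum_div_const]
      rfl
  -- shift identity for Fs dB
  have hFsB : ∀ u : ℝ, Fs dB u = Fs dA (u + σ) := by
    intro u
    rw [hdB]
    exact Fs_shift dA σ u
  -- log identities
  have lg3 : ∀ t : ℝ, 0 < t →
      κ * Real.log ((1 - ℓ₂) * t) + σ = κ * Real.log ((1 + ℓ₂) * t) := by
    intro t ht
    rw [hσ, ← mul_add, ← Real.log_mul (by positivity) (by positivity)]
    congr 2
    field_simp
  set a₁ : ℝ := κ * Real.log ((1 - ℓ₁) * t₀) with ha₁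
  set a₂ : ℝ := κ * Real.log ((1 + ℓ₂) * t₀) with ha₂
  have lg1 : κ * Real.log ((1 - ℓ₂) * t₀) + σ = a₂ := lg3 t₀ ht0pos
  have lg2 : κ * Real.log ((1 + ℓ₁) * t₀) + σ = a₁ + 2 := by
    rw [ha₁, ← hκlog, hσ, ← mul_add, ← mul_add,
      ← Real.log_mul (by positivity) (by positivity),
      ← Real.log_mul (by positivity) (ne_of_gt hαβ0)]
    congr 2
    rw [hα, hβ]
    field_simp
  set P : ℝ := ∫ u in a₁..(a₁ + 2), q u with hP
  have hPnn : 0 ≤ P := intervalIntegral.integral_nonneg (by linarith) fun u _ => hq_nn u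
  -- shifted profile for the left-moving component
  set q2 : ℝ → ℝ := fun u => q (u + σ) with hq2def
  have hq2_cont : Continuous q2 := hq_cont.comp (continuous_id.add continuous_const)
  have hab : -ℓ₁ * t₀ ≤ ℓ₂ * t₀ := by nlinarith
  have hLt0 : 0 < (1 - L) * t₀ := mul_pos h1mL ht0pos
  have hposA : ∀ x ∈ Set.Icc (-ℓ₁ * t₀) (ℓ₂ * t₀),
      (1 - L) * t₀ ≤ t₀ + x ∧ t₀ + x ≤ (1 + L) * t₀ := by
    intro x hx
    have h1 := hx.1
    have h2 := hx.2
    have h3 : ℓ₁ * t₀ ≤ L * t₀ := mul_le_mul_of_nonneg_right hℓ₁L ht0pos.le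
    have h4 : ℓ₂ * t₀ ≤ L * t₀ := mul_le_mul_of_nonneg_right hℓ₂L ht0pos.le
    constructor <;> nlinarith
  have hposB : ∀ x ∈ Set.Icc (-ℓ₁ * t₀) (ℓ₂ * t₀),
      (1 - L) * t₀ ≤ t₀ - x ∧ t₀ - x ≤ (1 + L) * t₀ := by
    intro x hx
    have h1 := hx.1
    have h2 := hx.2
    have h3 : ℓ₁ * t₀ ≤ L * t₀ := mul_le_mul_of_nonneg_right hℓ₁L ht0pos.le
    have h4 : ℓ₂ * t₀ ≤ L * t₀ := mul_le_mul_of_nonneg_right hℓ₂L ht0pos.le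
    constructor <;> nlinarith
  -- pointwise energy density formula
  have keyE : ∀ x ∈ Set.Ioo (-ℓ₁ * t₀) (ℓ₂ * t₀),
      Φx x t₀ ^ 2 + Φt x t₀ ^ 2
        = 2 * (q (κ * Real.log (t₀ + x)) / ((t₀ + x) * (t₀ + x))
             + q2 (κ * Real.log (t₀ - x)) / ((t₀ - x) * (t₀ - x))) := by
    intro x hx
    obtain ⟨h1, h2⟩ := key t₀ le_rfl x hx.1.le hx.2.le
    have e1 : Φx x t₀ ^ 2 = Complex.normSq ((Φx x t₀ : ℝ) : ℂ) := by
      rw [Complex.normSq_ofReal]; ring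
    have e2 : Φt x t₀ ^ 2 = Complex.normSq ((Φt x t₀ : ℝ) : ℂ) := by
      rw [Complex.normSq_ofReal]; ring
    have par : ∀ z w : ℂ, Complex.normSq (z + w) + Complex.normSq (z - w)
        = 2 * (Complex.normSq z + Complex.normSq w) := by
      intro z w
      simp only [Complex.normSq_apply, Complex.add_re, Complex.add_im, Complex.sub_re,
        Complex.sub_im]
      ring
    rw [e1, e2, h1, h2, par, Complex.normSq_div, Complex.normSq_div, Complex.normSq_ofReal,
      Complex.normSq_ofReal, hFsB]
  -- continuity of the integrands
  have hcontA : ContinuousOn (fun x : ℝ => q (κ * Real.log (t₀ + x)))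
      (Set.Icc (-ℓ₁ * t₀) (ℓ₂ * t₀)) := by
    apply hq_cont.comp_continuousOn
    apply continuousOn_const.mul
    apply ContinuousOn.log ((continuous_const.add continuous_id).continuousOn)
    intro x hx
    have := (hposA x hx).1
    exact ne_of_gt (by simp only [Pi.add_apply, id_eq]; nlinarith)
  have hcontB : ContinuousOn (fun x : ℝ => q2 (κ * Real.log (t₀ - x)))
      (Set.Icc (-ℓ₁ * t₀) (ℓ₂ * t₀)) := by
    apply hq2_cont.comp_continuousOn
    apply continuousOn_const.mul
    apply ContinuousOn.log ((continuous_const.sub continuous_id).continuousOn)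
    intro x hx
    have := (hposB x hx).1
    exact ne_of_gt (by simp only [Pi.sub_apply, id_eq]; nlinarith)
  have hneA : ∀ x ∈ Set.Icc (-ℓ₁ * t₀) (ℓ₂ * t₀), t₀ + x ≠ 0 := by
    intro x hx
    have := (hposA x hx).1
    exact ne_of_gt (by nlinarith)
  have hneB : ∀ x ∈ Set.Icc (-ℓ₁ * t₀) (ℓ₂ * t₀), t₀ - x ≠ 0 := by
    intro x hx
    have := (hposB x hx).1
    exact ne_of_gt (by nlinarith)
  have hcontwA : ContinuousOn (fun x : ℝ => q (κ * Real.log (t₀ + x)) / ((t₀ + x) * (t₀ + x)))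
      (Set.Icc (-ℓ₁ * t₀) (ℓ₂ * t₀)) := by
    apply hcontA.div
    · exact (((continuous_const.add continuous_id).mul
        (continuous_const.add continuous_id)).continuousOn)
    · intro x hx; exact mul_ne_zero (hneA x hx) (hneA x hx)
  have hcontwB : ContinuousOn (fun x : ℝ => q2 (κ * Real.log (t₀ - x)) / ((t₀ - x) * (t₀ - x)))
      (Set.Icc (-ℓ₁ * t₀) (ℓ₂ * t₀)) := by
    apply hcontB.div
    · exact (((continuous_const.sub continuous_id).mul
        (continuous_const.sub continuous_id)).continuousOn)
    · intro x hx; exact mul_ne_zero (hneB x hx) (hneB x hx)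
  have hcontgA : ContinuousOn (fun x : ℝ => (κ / (t₀ + x)) * q (κ * Real.log (t₀ + x)))
      (Set.Icc (-ℓ₁ * t₀) (ℓ₂ * t₀)) := by
    apply ContinuousOn.mul _ hcontA
    exact continuousOn_const.div ((continuous_const.add continuous_id).continuousOn) hneA
  have hcontgB : ContinuousOn (fun x : ℝ => (κ / (t₀ - x)) * q2 (κ * Real.log (t₀ - x)))
      (Set.Icc (-ℓ₁ * t₀) (ℓ₂ * t₀)) := by
    apply ContinuousOn.mul _ hcontB
    exact continuousOn_const.div ((continuous_const.sub continuous_id).continuousOn) hneB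
  have uIccIcc : Set.uIcc (-ℓ₁ * t₀) (ℓ₂ * t₀) = Set.Icc (-ℓ₁ * t₀) (ℓ₂ * t₀) :=
    Set.uIcc_of_le hab
  have hIwA : IntervalIntegrable (fun x : ℝ => q (κ * Real.log (t₀ + x)) / ((t₀ + x) * (t₀ + x)))
      volume (-ℓ₁ * t₀) (ℓ₂ * t₀) := by
    apply ContinuousOn.intervalIntegrable; rw [uIccIcc]; exact hcontwA
  have hIwB : IntervalIntegrable (fun x : ℝ => q2 (κ * Real.log (t₀ - x)) / ((t₀ - x) * (t₀ - x)))
      volume (-ℓ₁ * t₀) (ℓ₂ * t₀) := by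
    apply ContinuousOn.intervalIntegrable; rw [uIccIcc]; exact hcontwB
  have hIgA : IntervalIntegrable (fun x : ℝ => (κ / (t₀ + x)) * q (κ * Real.log (t₀ + x)))
      volume (-ℓ₁ * t₀) (ℓ₂ * t₀) := by
    apply ContinuousOn.intervalIntegrable; rw [uIccIcc]; exact hcontgA
  have hIgB : IntervalIntegrable (fun x : ℝ => (κ / (t₀ - x)) * q2 (κ * Real.log (t₀ - x)))
      volume (-ℓ₁ * t₀) (ℓ₂ * t₀) := by
    apply ContinuousOn.intervalIntegrable; rw [uIccIcc]; exact hcontgB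
  -- energy as a sum of two interval integrals
  have hEeq : E t₀
      = (∫ x in (-ℓ₁ * t₀)..(ℓ₂ * t₀), q (κ * Real.log (t₀ + x)) / ((t₀ + x) * (t₀ + x)))
      + (∫ x in (-ℓ₁ * t₀)..(ℓ₂ * t₀), q2 (κ * Real.log (t₀ - x)) / ((t₀ - x) * (t₀ - x))) := by
    rw [hE t₀, MeasureTheory.setIntegral_congr_fun measurableSet_Ioo keyE,
      ← MeasureTheory.integral_Ioc_eq_integral_Ioo, ← intervalIntegral.integral_of_le hab,
      intervalIntegral.integral_const_mul, intervalIntegral.integral_add hIwA hIwB]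
    ring
  -- the two substitution identities
  have hIA : (∫ x in (-ℓ₁ * t₀)..(ℓ₂ * t₀), (κ / (t₀ + x)) * q (κ * Real.log (t₀ + x)))
      = ∫ u in a₁..a₂, q u := by
    rw [ha₁, ha₂, integral_comp_klog_add q hq_cont κ t₀ _ _ (by nlinarith) (by nlinarith)]
    have e1 : t₀ + -ℓ₁ * t₀ = (1 - ℓ₁) * t₀ := by ring
    have e2 : t₀ + ℓ₂ * t₀ = (1 + ℓ₂) * t₀ := by ring
    rw [e1, e2]
  have hIB : (∫ x in (-ℓ₁ * t₀)..(ℓ₂ * t₀), (κ / (t₀ - x)) * q2 (κ * Real.log (t₀ - x)))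
      = ∫ u in a₂..(a₁ + 2), q u := by
    have h0 : (∫ x in (-ℓ₁ * t₀)..(ℓ₂ * t₀), (κ / (t₀ - x)) * q2 (κ * Real.log (t₀ - x)))
        = ∫ x in (-ℓ₁ * t₀)..(ℓ₂ * t₀), (κ / (t₀ + -x)) * q2 (κ * Real.log (t₀ + -x)) := by
      apply intervalIntegral.integral_congr
      intro x _
      simp only [sub_eq_add_neg]
    have hcn : (∫ x in (-ℓ₁ * t₀)..(ℓ₂ * t₀), (κ / (t₀ + -x)) * q2 (κ * Real.log (t₀ + -x)))
        = ∫ x in (-(ℓ₂ * t₀))..(-(-ℓ₁ * t₀)), (κ / (t₀ + x)) * q2 (κ * Real.log (t₀ + x)) :=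
      intervalIntegral.integral_comp_neg
        (f := fun y : ℝ => (κ / (t₀ + y)) * q2 (κ * Real.log (t₀ + y)))
    rw [h0, hcn,
      integral_comp_klog_add q2 hq2_cont κ t₀ _ _ (by nlinarith) (by nlinarith)]
    have e1 : t₀ + -(ℓ₂ * t₀) = (1 - ℓ₂) * t₀ := by ring
    have e2' : t₀ + -(-ℓ₁ * t₀) = (1 + ℓ₁) * t₀ := by ring
    rw [e1, e2']
    calc (∫ u in (κ * Real.log ((1 - ℓ₂) * t₀))..(κ * Real.log ((1 + ℓ₁) * t₀)), q2 u)
        = ∫ u in (κ * Real.log ((1 - ℓ₂) * t₀))..(κ * Real.log ((1 + ℓ₁) * t₀)),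
            q (u + σ) := rfl
      _ = ∫ v in (κ * Real.log ((1 - ℓ₂) * t₀) + σ)..(κ * Real.log ((1 + ℓ₁) * t₀) + σ),
            q v := intervalIntegral.integral_comp_add_right q σ
      _ = ∫ u in a₂..(a₁ + 2), q u := by rw [lg1, lg2]
  have hIAB : (∫ u in a₁..a₂, q u) + (∫ u in a₂..(a₁ + 2), q u) = P := by
    rw [hP]
    exact intervalIntegral.integral_add_adjacent_intervals
      (hq_cont.intervalIntegrable _ _) (hq_cont.intervalIntegrable _ _)
  -- upper and lower bounds on the energy
  have hEle : E t₀ ≤ 1 / (((1 - L) * t₀) * κ) * P := by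
    have m1 : (∫ x in (-ℓ₁ * t₀)..(ℓ₂ * t₀), q (κ * Real.log (t₀ + x)) / ((t₀ + x) * (t₀ + x)))
        ≤ ∫ x in (-ℓ₁ * t₀)..(ℓ₂ * t₀),
            1 / (((1 - L) * t₀) * κ) * ((κ / (t₀ + x)) * q (κ * Real.log (t₀ + x))) := by
      apply intervalIntegral.integral_mono_on hab hIwA (hIgA.const_mul _)
      intro x hx
      exact div_sq_le_aux (hq_nn _) hκ0 hLt0 (hposA x hx).1
    have m2 : (∫ x in (-ℓ₁ * t₀)..(ℓ₂ * t₀), q2 (κ * Real.log (t₀ - x)) / ((t₀ - x) * (t₀ - x)))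
        ≤ ∫ x in (-ℓ₁ * t₀)..(ℓ₂ * t₀),
            1 / (((1 - L) * t₀) * κ) * ((κ / (t₀ - x)) * q2 (κ * Real.log (t₀ - x))) := by
      apply intervalIntegral.integral_mono_on hab hIwB (hIgB.const_mul _)
      intro x hx
      exact div_sq_le_aux (hq_nn _) hκ0 hLt0 (hposB x hx).1
    rw [intervalIntegral.integral_const_mul] at m1 m2
    rw [hEeq]
    calc _ ≤ 1 / (((1 - L) * t₀) * κ)
            * (∫ x in (-ℓ₁ * t₀)..(ℓ₂ * t₀), (κ / (t₀ + x)) * q (κ * Real.log (t₀ + x)))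
          + 1 / (((1 - L) * t₀) * κ)
            * (∫ x in (-ℓ₁ * t₀)..(ℓ₂ * t₀), (κ / (t₀ - x)) * q2 (κ * Real.log (t₀ - x))) :=
        add_le_add m1 m2
      _ = 1 / (((1 - L) * t₀) * κ) * ((∫ u in a₁..a₂, q u) + ∫ u in a₂..(a₁ + 2), q u) := by
        rw [hIA, hIB]; ring
      _ = 1 / (((1 - L) * t₀) * κ) * P := by rw [hIAB]
  have hEge : 1 / (((1 + L) * t₀) * κ) * P ≤ E t₀ := by
    have hpLt0 : 0 < (1 + L) * t₀ := mul_pos h1pL ht0pos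
    have m1 : (∫ x in (-ℓ₁ * t₀)..(ℓ₂ * t₀),
            1 / (((1 + L) * t₀) * κ) * ((κ / (t₀ + x)) * q (κ * Real.log (t₀ + x))))
        ≤ ∫ x in (-ℓ₁ * t₀)..(ℓ₂ * t₀), q (κ * Real.log (t₀ + x)) / ((t₀ + x) * (t₀ + x)) := by
      apply intervalIntegral.integral_mono_on hab (hIgA.const_mul _) hIwA
      intro x hx
      have hxp : 0 < t₀ + x := lt_of_lt_of_le hLt0 (hposA x hx).1
      exact div_sq_ge_aux (hq_nn _) hκ0 hxp (hposA x hx).2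
    have m2 : (∫ x in (-ℓ₁ * t₀)..(ℓ₂ * t₀),
            1 / (((1 + L) * t₀) * κ) * ((κ / (t₀ - x)) * q2 (κ * Real.log (t₀ - x))))
        ≤ ∫ x in (-ℓ₁ * t₀)..(ℓ₂ * t₀), q2 (κ * Real.log (t₀ - x)) / ((t₀ - x) * (t₀ - x)) := by
      apply intervalIntegral.integral_mono_on hab (hIgB.const_mul _) hIwB
      intro x hx
      have hxp : 0 < t₀ - x := lt_of_lt_of_le hLt0 (hposB x hx).1
      exact div_sq_ge_aux (hq_nn _) hκ0 hxp (hposB x hx).2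
    rw [intervalIntegral.integral_const_mul] at m1 m2
    rw [hEeq]
    calc 1 / (((1 + L) * t₀) * κ) * P
        = 1 / (((1 + L) * t₀) * κ) * ((∫ u in a₁..a₂, q u) + ∫ u in a₂..(a₁ + 2), q u) := by
          rw [hIAB]
      _ = 1 / (((1 + L) * t₀) * κ)
            * (∫ x in (-ℓ₁ * t₀)..(ℓ₂ * t₀), (κ / (t₀ + x)) * q (κ * Real.log (t₀ + x)))
          + 1 / (((1 + L) * t₀) * κ)
            * (∫ x in (-ℓ₁ * t₀)..(ℓ₂ * t₀), (κ / (t₀ - x)) * q2 (κ * Real.log (t₀ - x))) := by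
          rw [hIA, hIB]; ring
      _ ≤ _ := add_le_add m1 m2
  -- boundary profile
  set s3 : ℝ := κ * Real.log (1 + ℓ₂) with hs3
  set q3 : ℝ → ℝ := fun u => q (u + s3) with hq3def
  have hq3_cont : Continuous q3 := hq_cont.comp (continuous_id.add continuous_const)
  have hq3per : Function.Periodic q3 2 := by
    intro u
    show q (u + 2 + s3) = q (u + s3)
    rw [show u + 2 + s3 = (u + s3) + 2 by ring]
    exact hq_per (u + s3)
  have keyB : ∀ t : ℝ, t₀ ≤ t →
      t * Φx (ℓ₂ * t) t ^ 2
        = 4 / ((1 - ℓ₂ ^ 2) ^ 2 * κ) * ((κ / t) * q3 (κ * Real.log t)) := by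
    intro t ht
    have htp : 0 < t := lt_of_lt_of_le ht0pos ht
    have hx1 : -ℓ₁ * t ≤ ℓ₂ * t := by nlinarith
    obtain ⟨h1, -⟩ := key t ht (ℓ₂ * t) hx1 le_rfl
    have e1 : t + ℓ₂ * t = (1 + ℓ₂) * t := by ring
    have e2 : t - ℓ₂ * t = (1 - ℓ₂) * t := by ring
    rw [e1, e2, hFsB, lg3 t htp] at h1
    have n1 : ((1 + ℓ₂) * t : ℝ) ≠ 0 := ne_of_gt (mul_pos h1p2 htp)
    have n2 : ((1 - ℓ₂) * t : ℝ) ≠ 0 := ne_of_gt (mul_pos h1m2 htp)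
    have n3 : ((1 - ℓ₂ ^ 2) * t : ℝ) ≠ 0 := ne_of_gt (mul_pos h1sq htp)
    have h2 : ((Φx (ℓ₂ * t) t : ℝ) : ℂ)
        = (((2 / ((1 - ℓ₂ ^ 2) * t)) : ℝ) : ℂ) * Fs dA (κ * Real.log ((1 + ℓ₂) * t)) := by
      rw [h1]
      have hr : (2 / ((1 - ℓ₂ ^ 2) * t) : ℝ) = 1 / ((1 + ℓ₂) * t) + 1 / ((1 - ℓ₂) * t) := by
        field_simp [h1sq.ne', h1p2.ne', h1m2.ne', htp.ne']
        ring
      have hsplit : (((2 / ((1 - ℓ₂ ^ 2) * t)) : ℝ) : ℂ)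
          = 1 / (((1 + ℓ₂) * t : ℝ) : ℂ) + 1 / (((1 - ℓ₂) * t : ℝ) : ℂ) := by
        rw [hr]; push_cast; ring
      rw [hsplit]
      ring
    have h3 := congrArg Complex.normSq h2
    rw [Complex.normSq_ofReal, Complex.normSq_mul, Complex.normSq_ofReal] at h3
    have h4 : Φx (ℓ₂ * t) t * Φx (ℓ₂ * t) t
        = 2 / ((1 - ℓ₂ ^ 2) * t) * (2 / ((1 - ℓ₂ ^ 2) * t))
          * q (κ * Real.log ((1 + ℓ₂) * t)) := h3
    have lg5 : κ * Real.log ((1 + ℓ₂) * t) = κ * Real.log t + s3 := by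
      rw [hs3, Real.log_mul (ne_of_gt h1p2) (ne_of_gt htp)]
      ring
    have hq3v : q3 (κ * Real.log t) = q (κ * Real.log t + s3) := rfl
    rw [pow_two, h4, lg5, hq3v]
    have hκne : κ ≠ 0 := hκ0.ne'
    field_simp
    ring
  -- boundary integral computation
  intro M hM
  have hT1 : 1 < (α * β) ^ M := one_lt_pow₀ hαβ hM.ne'
  have hTt : t₀ < (α * β) ^ M * t₀ := by nlinarith
  have hTpos : 0 < (α * β) ^ M * t₀ := by positivity
  have lg4 : κ * Real.log ((α * β) ^ M * t₀)
      = κ * Real.log t₀ + (M : ℤ) • (2 : ℝ) := by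
    rw [Real.log_mul (pow_ne_zero _ hαβ0.ne') ht0pos.ne', Real.log_pow, zsmul_eq_mul]
    push_cast
    linear_combination (M : ℝ) * hκlog
  have hJ : (∫ t in Set.Ioo t₀ ((α * β) ^ M * t₀), t * Φx (ℓ₂ * t) t ^ 2)
      = 4 / ((1 - ℓ₂ ^ 2) ^ 2 * κ) * ((M : ℝ) * P) := by
    have h1 : (∫ t in Set.Ioo t₀ ((α * β) ^ M * t₀), t * Φx (ℓ₂ * t) t ^ 2)
        = ∫ t in Set.Ioo t₀ ((α * β) ^ M * t₀),
            4 / ((1 - ℓ₂ ^ 2) ^ 2 * κ) * ((κ / t) * q3 (κ * Real.log t)) :=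
      MeasureTheory.setIntegral_congr_fun measurableSet_Ioo (fun t htt => keyB t htt.1.le)
    rw [h1, ← MeasureTheory.integral_Ioc_eq_integral_Ioo,
      ← intervalIntegral.integral_of_le hTt.le, intervalIntegral.integral_const_mul,
      integral_comp_klog q3 hq3_cont κ _ _ ht0pos hTpos, lg4,
      Function.Periodic.intervalIntegral_add_zsmul_eq hq3per (M : ℤ) (κ * Real.log t₀)
        (fun t1 t2 => hq3_cont.intervalIntegrable t1 t2)]
    have h2 : (∫ u in (κ * Real.log t₀)..(κ * Real.log t₀ + 2), q3 u) = P := by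
      calc (∫ u in (κ * Real.log t₀)..(κ * Real.log t₀ + 2), q3 u)
          = ∫ u in (κ * Real.log t₀)..(κ * Real.log t₀ + 2), q (u + s3) := rfl
        _ = ∫ v in (κ * Real.log t₀ + s3)..((κ * Real.log t₀ + 2) + s3), q v :=
            intervalIntegral.integral_comp_add_right q s3
        _ = ∫ v in (κ * Real.log t₀ + s3)..((κ * Real.log t₀ + s3) + 2), q v := by
            rw [show (κ * Real.log t₀ + 2) + s3 = (κ * Real.log t₀ + s3) + 2 by ring]
        _ = ∫ v in a₁..(a₁ + 2), q v := Function.Periodic.intervalIntegral_add_eq hq_per _ _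
        _ = P := hP.symm
    rw [h2, zsmul_eq_mul]
    push_cast
    ring
  -- final assembly
  have hco1 : 0 ≤ 4 * (M : ℝ) * (1 - L) * t₀ / (1 - ℓ₂ ^ 2) ^ 2 :=
    div_nonneg (mul_nonneg (mul_nonneg (mul_nonneg (by norm_num) (Nat.cast_nonneg M))
      h1mL.le) ht0pos.le) (by positivity)
  have hco2 : 0 ≤ 4 * (M : ℝ) * (1 + L) * t₀ / (1 - ℓ₂ ^ 2) ^ 2 :=
    div_nonneg (mul_nonneg (mul_nonneg (mul_nonneg (by norm_num) (Nat.cast_nonneg M))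
      h1pL.le) ht0pos.le) (by positivity)
  constructor
  · calc 4 * (M : ℝ) * (1 - L) * t₀ / (1 - ℓ₂ ^ 2) ^ 2 * E t₀
        ≤ 4 * (M : ℝ) * (1 - L) * t₀ / (1 - ℓ₂ ^ 2) ^ 2 * (1 / (((1 - L) * t₀) * κ) * P) :=
          mul_le_mul_of_nonneg_left hEle hco1
      _ = 4 / ((1 - ℓ₂ ^ 2) ^ 2 * κ) * ((M : ℝ) * P) := by
          field_simp
      _ = _ := hJ.symm
  · calc (∫ t in Set.Ioo t₀ ((α * β) ^ M * t₀), t * Φx (ℓ₂ * t) t ^ 2)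
        = 4 / ((1 - ℓ₂ ^ 2) ^ 2 * κ) * ((M : ℝ) * P) := hJ
      _ = 4 * (M : ℝ) * (1 + L) * t₀ / (1 - ℓ₂ ^ 2) ^ 2 * (1 / (((1 + L) * t₀) * κ) * P) := by
          field_simp
      _ ≤ 4 * (M : ℝ) * (1 + L) * t₀ / (1 - ℓ₂ ^ 2) ^ 2 * E t₀ :=
          mul_le_mul_of_nonneg_left hEge hco2
end
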